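/- arXiv:2109.04024 — 9 statements merged into one kernel-verified Lean document; each statement's English description precedes it below -/
import Mathlib

section
/- Let X and U be finite nonempty sets, K a positive integer, and L_Q ≥ 0. Let π = (π_k)_{k∈[K]} be a family of decision rules π_k : X × P(X×[K]) → P(U) such that for every x ∈ X, k ∈ [K] and all μ₁, μ₂ ∈ P(X×[K]), |π_k(x,μ₁) − π_k(x,μ₂)|₁ ≤ L_Q·|μ₁ − μ₂|₁. Define ν^MF(μ,π) ∈ P(U×[K]) by ν^MF(μ,π)(u,k) = Σ_{x∈X} π_k(x,μ)(u)·μ(x,k). Then for all μ, μ' ∈ P(X×[K]), |ν^MF(μ,π) − ν^MF(μ',π)|₁ ≤ (1 + L_Q)·|μ − μ'|₁. -/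
open Finset

/-- A probability distribution on a finite type, represented as a nonnegative
function summing to one. -/
def IsProb {A : Type*} [Fintype A] (μ : A → ℝ) : Prop :=
  (∀ a, 0 ≤ μ a) ∧ ∑ a, μ a = 1

/-- The L1 distance between two real-valued functions on a finite type. -/
noncomputable def l1 {A : Type*} [Fintype A] (μ ν : A → ℝ) : ℝ :=
  ∑ a, |μ a - ν a|

theorem stmt0
    {X U : Type*} [Fintype X] [Fintype U] [Nonempty X] [Nonempty U]
    (K : ℕ) (hK : 0 < K) (LQ : ℝ) (hLQ : 0 ≤ LQ)
    (pi : Fin K → X → (X × Fin K → ℝ) → U → ℝ)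
    (hpiProb : ∀ k x μ, IsProb μ → IsProb (pi k x μ))
    (hpiLip : ∀ k x μ₁ μ₂, IsProb μ₁ → IsProb μ₂ →
      l1 (pi k x μ₁) (pi k x μ₂) ≤ LQ * l1 μ₁ μ₂)
    (nuMF : (X × Fin K → ℝ) → U × Fin K → ℝ)
    (hnuMF : nuMF = fun μ q => ∑ x, pi q.2 x μ q.1 * μ (x, q.2))
    (μ μ' : X × Fin K → ℝ) (hμ : IsProb μ) (hμ' : IsProb μ') :
    l1 (nuMF μ) (nuMF μ') ≤ (1 + LQ) * l1 μ μ' := by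
  subst hnuMF
  simp only [l1]
  have key : ∀ q : U × Fin K,
      |(∑ x, pi q.2 x μ q.1 * μ (x, q.2)) - ∑ x, pi q.2 x μ' q.1 * μ' (x, q.2)|
        ≤ ∑ x, (pi q.2 x μ q.1 * |μ (x, q.2) - μ' (x, q.2)|
            + |pi q.2 x μ q.1 - pi q.2 x μ' q.1| * μ' (x, q.2)) := by
    intro q
    rw [← Finset.sum_sub_distrib]
    refine (Finset.abs_sum_le_sum_abs _ _).trans (Finset.sum_le_sum fun x _ => ?_)
    have h : pi q.2 x μ q.1 * μ (x, q.2) - pi q.2 x μ' q.1 * μ' (x, q.2)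
        = pi q.2 x μ q.1 * (μ (x, q.2) - μ' (x, q.2))
          + (pi q.2 x μ q.1 - pi q.2 x μ' q.1) * μ' (x, q.2) := by ring
    rw [h]
    refine (abs_add_le _ _).trans ?_
    rw [abs_mul, abs_mul, abs_of_nonneg ((hpiProb q.2 x μ hμ).1 q.1),
      abs_of_nonneg (hμ'.1 _)]
  calc ∑ q : U × Fin K, |(∑ x, pi q.2 x μ q.1 * μ (x, q.2)) - ∑ x, pi q.2 x μ' q.1 * μ' (x, q.2)|
      ≤ ∑ q : U × Fin K, ∑ x, (pi q.2 x μ q.1 * |μ (x, q.2) - μ' (x, q.2)|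
          + |pi q.2 x μ q.1 - pi q.2 x μ' q.1| * μ' (x, q.2)) :=
        Finset.sum_le_sum fun q _ => key q
    _ = (∑ q : U × Fin K, ∑ x, pi q.2 x μ q.1 * |μ (x, q.2) - μ' (x, q.2)|)
          + ∑ q : U × Fin K, ∑ x, |pi q.2 x μ q.1 - pi q.2 x μ' q.1| * μ' (x, q.2) := by
        rw [← Finset.sum_add_distrib]
        exact Finset.sum_congr rfl fun q _ => Finset.sum_add_distrib
    _ ≤ l1 μ μ' + LQ * l1 μ μ' := by
        gcongr
        · -- first term
          have : (∑ q : U × Fin K, ∑ x, pi q.2 x μ q.1 * |μ (x, q.2) - μ' (x, q.2)|)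
              = ∑ k : Fin K, ∑ x, (∑ u, pi k x μ u) * |μ (x, k) - μ' (x, k)| := by
            rw [Fintype.sum_prod_type]
            rw [Finset.sum_comm]
            refine Finset.sum_congr rfl fun k _ => ?_
            rw [Finset.sum_comm]
            refine Finset.sum_congr rfl fun x _ => ?_
            rw [Finset.sum_mul]
          rw [this]
          have : ∀ k : Fin K, ∀ x : X, (∑ u, pi k x μ u) = 1 :=
            fun k x => (hpiProb k x μ hμ).2
          simp only [this, one_mul]
          rw [l1, Fintype.sum_prod_type, Finset.sum_comm]
        · -- second term
          have heq : (∑ q : U × Fin K, ∑ x, |pi q.2 x μ q.1 - pi q.2 x μ' q.1| * μ' (x, q.2))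
              = ∑ k : Fin K, ∑ x, (∑ u, |pi k x μ u - pi k x μ' u|) * μ' (x, k) := by
            rw [Fintype.sum_prod_type, Finset.sum_comm]
            refine Finset.sum_congr rfl fun k _ => ?_
            rw [Finset.sum_comm]
            refine Finset.sum_congr rfl fun x _ => ?_
            rw [Finset.sum_mul]
          rw [heq]
          have hbound : ∀ k : Fin K, ∀ x : X,
              (∑ u, |pi k x μ u - pi k x μ' u|) * μ' (x, k)
                ≤ (LQ * l1 μ μ') * μ' (x, k) := by
            intro k x
            exact mul_le_mul_of_nonneg_right (hpiLip k x μ μ' hμ hμ') (hμ'.1 _)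
          calc ∑ k : Fin K, ∑ x, (∑ u, |pi k x μ u - pi k x μ' u|) * μ' (x, k)
              ≤ ∑ k : Fin K, ∑ x, (LQ * l1 μ μ') * μ' (x, k) :=
                Finset.sum_le_sum fun k _ => Finset.sum_le_sum fun x _ => hbound k x
            _ = (LQ * l1 μ μ') * ∑ k : Fin K, ∑ x, μ' (x, k) := by
                simp [Finset.mul_sum]
            _ = LQ * l1 μ μ' := by
                have : (∑ k : Fin K, ∑ x, μ' (x, k)) = 1 := by
                  rw [← hμ'.2, Fintype.sum_prod_type, Finset.sum_comm]
                rw [this, mul_one]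
    _ = (1 + LQ) * l1 μ μ' := by ring
end

section
/- Let X and U be finite nonempty sets, K a positive integer, and M_R, L_R, L_Q ≥ 0. Let π = (π_k)_{k∈[K]} be decision rules π_k : X × P(X×[K]) → P(U) with |π_k(x,μ₁) − π_k(x,μ₂)|₁ ≤ L_Q·|μ₁ − μ₂|₁ for all x, k, μ₁, μ₂. Let r_k : X × U × P(X×[K]) × P(U×[K]) → ℝ (k ∈ [K]) satisfy |r_k(x,u,μ,ν)| ≤ M_R and |r_k(x,u,μ₁,ν₁) − r_k(x,u,μ₂,ν₂)| ≤ L_R·(|μ₁ − μ₂|₁ + |ν₁ − ν₂|₁) for all arguments. Define ν^MF(μ,π)(u,k) = Σ_{x∈X} π_k(x,μ)(u)·μ(x,k) and r_k^MF(μ,π) = Σ_{x∈X} Σ_{u∈U} μ(x,k)·π_k(x,μ)(u)·r_k(x,u,μ,ν^MF(μ,π)). Then for all μ, μ' ∈ P(X×[K]), Σ_{k∈[K]} |r_k^MF(μ,π) − r_k^MF(μ',π)| ≤ S_R·|μ − μ'|₁, where S_R = M_R·(1+L_Q) + L_R·(2+L_Q). -/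
open Finset

private lemma sum_rot {A B C : Type*} [Fintype A] [Fintype B] [Fintype C]
    (f : A → B → C → ℝ) :
    ∑ a, ∑ b, ∑ c, f a b c = ∑ b, ∑ c, ∑ a, f a b c := by
  rw [Finset.sum_comm]
  exact Finset.sum_congr rfl fun b _ => Finset.sum_comm

private lemma sum_pi_mul {A : Type*} [Fintype A] (p : A → ℝ) (c : ℝ) (hp : ∑ a, p a = 1)
    (f : A → ℝ) (hf : ∀ a, f a = c * p a) : ∑ a, f a = c := by
  calc ∑ a, f a = ∑ a, c * p a := Finset.sum_congr rfl fun a _ => hf a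
    _ = c * ∑ a, p a := by rw [Finset.mul_sum]
    _ = c := by rw [hp, mul_one]

private lemma sum_sum_mul {A B : Type*} [Fintype A] [Fintype B] (g : A → B → ℝ) (c : ℝ) :
    ∑ a, ∑ b, g a b * c = (∑ a, ∑ b, g a b) * c := by
  calc ∑ a, ∑ b, g a b * c = ∑ a, (∑ b, g a b) * c :=
      Finset.sum_congr rfl fun a _ => by rw [Finset.sum_mul]
    _ = (∑ a, ∑ b, g a b) * c := by rw [Finset.sum_mul]

private lemma two_prod_bound (p p' m m' : ℝ) (hp : 0 ≤ p) (hm' : 0 ≤ m') :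
    |p * m - p' * m'| ≤ p * |m - m'| + m' * |p - p'| := by
  have h : p * m - p' * m' = p * (m - m') + m' * (p - p') := by ring
  rw [h]
  refine (abs_add_le _ _).trans ?_
  rw [abs_mul, abs_mul, abs_of_nonneg hp, abs_of_nonneg hm']

private lemma three_prod_bound (m m' p p' rv rv' MR : ℝ) (hm' : 0 ≤ m') (hp : 0 ≤ p)
    (hp' : 0 ≤ p') (hrv : |rv| ≤ MR) :
    |m * p * rv - m' * p' * rv'| ≤
      |m - m'| * p * MR + m' * |p - p'| * MR + m' * p' * |rv - rv'| := by
  have h : m * p * rv - m' * p' * rv'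
      = (m - m') * p * rv + m' * (p - p') * rv + m' * p' * (rv - rv') := by ring
  refine h ▸ (abs_add_three _ _ _).trans ?_
  have h1 : |(m - m') * p * rv| ≤ |m - m'| * p * MR := by
    rw [abs_mul, abs_mul, abs_of_nonneg hp]
    have : (0:ℝ) ≤ |m - m'| * p := mul_nonneg (abs_nonneg _) hp
    exact mul_le_mul_of_nonneg_left hrv this
  have h2 : |m' * (p - p') * rv| ≤ m' * |p - p'| * MR := by
    rw [abs_mul, abs_mul, abs_of_nonneg hm']
    have : (0:ℝ) ≤ m' * |p - p'| := mul_nonneg hm' (abs_nonneg _)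
    exact mul_le_mul_of_nonneg_left hrv this
  have h3 : |m' * p' * (rv - rv')| = m' * p' * |rv - rv'| := by
    rw [abs_mul, abs_mul, abs_of_nonneg hm', abs_of_nonneg hp']
  linarith

theorem stmt1
    {X U : Type*} [Fintype X] [Fintype U] [Nonempty X] [Nonempty U]
    (K : ℕ) (hK : 0 < K)
    (MR LR LQ : ℝ) (hMR : 0 ≤ MR) (hLR : 0 ≤ LR) (hLQ : 0 ≤ LQ)
    (pi : Fin K → X → (X × Fin K → ℝ) → U → ℝ)
    (hpiProb : ∀ k x μ, IsProb μ → IsProb (pi k x μ))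
    (hpiLip : ∀ k x μ₁ μ₂, IsProb μ₁ → IsProb μ₂ →
      l1 (pi k x μ₁) (pi k x μ₂) ≤ LQ * l1 μ₁ μ₂)
    (r : Fin K → X → U → (X × Fin K → ℝ) → (U × Fin K → ℝ) → ℝ)
    (hrBdd : ∀ k x u μ ν, IsProb μ → IsProb ν → |r k x u μ ν| ≤ MR)
    (hrLip : ∀ k x u μ₁ ν₁ μ₂ ν₂, IsProb μ₁ → IsProb ν₁ → IsProb μ₂ → IsProb ν₂ →
      |r k x u μ₁ ν₁ - r k x u μ₂ ν₂| ≤ LR * (l1 μ₁ μ₂ + l1 ν₁ ν₂))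
    (nuMF : (X × Fin K → ℝ) → U × Fin K → ℝ)
    (hnuMF : nuMF = fun μ q => ∑ x, pi q.2 x μ q.1 * μ (x, q.2))
    (rMF : (X × Fin K → ℝ) → Fin K → ℝ)
    (hrMF : rMF = fun μ k => ∑ x, ∑ u, μ (x, k) * pi k x μ u * r k x u μ (nuMF μ))
    (μ μ' : X × Fin K → ℝ) (hμ : IsProb μ) (hμ' : IsProb μ') :
    ∑ k, |rMF μ k - rMF μ' k| ≤ (MR * (1 + LQ) + LR * (2 + LQ)) * l1 μ μ' := by
  subst hnuMF hrMF
  set L := l1 μ μ' with hLdef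
  have hL0 : 0 ≤ L := Finset.sum_nonneg fun _ _ => abs_nonneg _
  have hmuL : ∑ k : Fin K, ∑ x : X, |μ (x, k) - μ' (x, k)| = L := by
    rw [hLdef, l1, Fintype.sum_prod_type]
    exact Finset.sum_comm
  have hmu'1 : ∑ k : Fin K, ∑ x : X, μ' (x, k) = 1 := by
    rw [← hμ'.2, Fintype.sum_prod_type]
    exact Finset.sum_comm
  -- nuMF preserves probability
  have hνprob : ∀ σ : X × Fin K → ℝ, IsProb σ →
      IsProb (fun q : U × Fin K => ∑ x, pi q.2 x σ q.1 * σ (x, q.2)) := by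
    intro σ hσ
    constructor
    · intro q
      exact Finset.sum_nonneg fun x _ =>
        mul_nonneg ((hpiProb q.2 x σ hσ).1 q.1) (hσ.1 (x, q.2))
    · calc ∑ q : U × Fin K, ∑ x, pi q.2 x σ q.1 * σ (x, q.2)
          = ∑ u : U, ∑ k : Fin K, ∑ x : X, pi k x σ u * σ (x, k) := by
            rw [Fintype.sum_prod_type]
        _ = ∑ k : Fin K, ∑ x : X, ∑ u : U, pi k x σ u * σ (x, k) := sum_rot _
        _ = ∑ k : Fin K, ∑ x : X, σ (x, k) := by
            refine Finset.sum_congr rfl fun k _ => Finset.sum_congr rfl fun x _ => ?_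
            exact sum_pi_mul (pi k x σ) _ (hpiProb k x σ hσ).2 _ fun u => by ring
        _ = ∑ x : X, ∑ k : Fin K, σ (x, k) := Finset.sum_comm
        _ = 1 := by rw [← Fintype.sum_prod_type]; exact hσ.2
  have hν : IsProb (fun q : U × Fin K => ∑ x, pi q.2 x μ q.1 * μ (x, q.2)) := hνprob μ hμ
  have hν' : IsProb (fun q : U × Fin K => ∑ x, pi q.2 x μ' q.1 * μ' (x, q.2)) := hνprob μ' hμ'
  -- Lipschitz bound for nuMF
  have hνLip : l1 (fun q : U × Fin K => ∑ x, pi q.2 x μ q.1 * μ (x, q.2))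
      (fun q : U × Fin K => ∑ x, pi q.2 x μ' q.1 * μ' (x, q.2)) ≤ (1 + LQ) * L := by
    rw [l1]
    calc ∑ q : U × Fin K, |(∑ x, pi q.2 x μ q.1 * μ (x, q.2))
            - ∑ x, pi q.2 x μ' q.1 * μ' (x, q.2)|
        ≤ ∑ q : U × Fin K, ∑ x : X,
            |pi q.2 x μ q.1 * μ (x, q.2) - pi q.2 x μ' q.1 * μ' (x, q.2)| := by
          refine Finset.sum_le_sum fun q _ => ?_
          rw [← Finset.sum_sub_distrib]
          exact Finset.abs_sum_le_sum_abs _ _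
      _ ≤ ∑ q : U × Fin K, ∑ x : X,
            (pi q.2 x μ q.1 * |μ (x, q.2) - μ' (x, q.2)|
              + μ' (x, q.2) * |pi q.2 x μ q.1 - pi q.2 x μ' q.1|) := by
          refine Finset.sum_le_sum fun q _ => Finset.sum_le_sum fun x _ => ?_
          exact two_prod_bound _ _ _ _ ((hpiProb q.2 x μ hμ).1 q.1) (hμ'.1 (x, q.2))
      _ = (∑ q : U × Fin K, ∑ x : X, pi q.2 x μ q.1 * |μ (x, q.2) - μ' (x, q.2)|)
            + ∑ q : U × Fin K, ∑ x : X,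
              μ' (x, q.2) * |pi q.2 x μ q.1 - pi q.2 x μ' q.1| := by
          rw [← Finset.sum_add_distrib]
          exact Finset.sum_congr rfl fun q _ => Finset.sum_add_distrib
      _ ≤ L + LQ * L := by
          have hA : ∑ q : U × Fin K, ∑ x : X,
              pi q.2 x μ q.1 * |μ (x, q.2) - μ' (x, q.2)| = L := by
            calc ∑ q : U × Fin K, ∑ x : X, pi q.2 x μ q.1 * |μ (x, q.2) - μ' (x, q.2)|
                = ∑ u : U, ∑ k : Fin K, ∑ x : X, pi k x μ u * |μ (x, k) - μ' (x, k)| := by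
                  rw [Fintype.sum_prod_type]
              _ = ∑ k : Fin K, ∑ x : X, ∑ u : U, pi k x μ u * |μ (x, k) - μ' (x, k)| :=
                  sum_rot _
              _ = ∑ k : Fin K, ∑ x : X, |μ (x, k) - μ' (x, k)| := by
                  refine Finset.sum_congr rfl fun k _ => Finset.sum_congr rfl fun x _ => ?_
                  exact sum_pi_mul (pi k x μ) _ (hpiProb k x μ hμ).2 _ fun u => by ring
              _ = L := hmuL
          have hB : ∑ q : U × Fin K, ∑ x : X,
              μ' (x, q.2) * |pi q.2 x μ q.1 - pi q.2 x μ' q.1| ≤ LQ * L := by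
            calc ∑ q : U × Fin K, ∑ x : X, μ' (x, q.2) * |pi q.2 x μ q.1 - pi q.2 x μ' q.1|
                = ∑ u : U, ∑ k : Fin K, ∑ x : X, μ' (x, k) * |pi k x μ u - pi k x μ' u| := by
                  rw [Fintype.sum_prod_type]
              _ = ∑ k : Fin K, ∑ x : X, ∑ u : U, μ' (x, k) * |pi k x μ u - pi k x μ' u| :=
                  sum_rot _
              _ = ∑ k : Fin K, ∑ x : X, μ' (x, k) * l1 (pi k x μ) (pi k x μ') := by
                  refine Finset.sum_congr rfl fun k _ => Finset.sum_congr rfl fun x _ => ?_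
                  rw [l1, Finset.mul_sum]
              _ ≤ ∑ k : Fin K, ∑ x : X, μ' (x, k) * (LQ * L) := by
                  refine Finset.sum_le_sum fun k _ => Finset.sum_le_sum fun x _ => ?_
                  exact mul_le_mul_of_nonneg_left (hpiLip k x μ μ' hμ hμ') (hμ'.1 (x, k))
              _ = LQ * L := by rw [sum_sum_mul, hmu'1, one_mul]
          linarith
      _ = (1 + LQ) * L := by ring
  -- main estimate
  calc ∑ k : Fin K,
        |(∑ x, ∑ u, μ (x, k) * pi k x μ u
            * r k x u μ (fun q : U × Fin K => ∑ x, pi q.2 x μ q.1 * μ (x, q.2)))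
          - ∑ x, ∑ u, μ' (x, k) * pi k x μ' u
            * r k x u μ' (fun q : U × Fin K => ∑ x, pi q.2 x μ' q.1 * μ' (x, q.2))|
      ≤ ∑ k : Fin K, ∑ x : X, ∑ u : U,
          |μ (x, k) * pi k x μ u
              * r k x u μ (fun q : U × Fin K => ∑ x, pi q.2 x μ q.1 * μ (x, q.2))
            - μ' (x, k) * pi k x μ' u
              * r k x u μ' (fun q : U × Fin K => ∑ x, pi q.2 x μ' q.1 * μ' (x, q.2))| := by
        refine Finset.sum_le_sum fun k _ => ?_
        rw [← Finset.sum_sub_distrib]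
        refine (Finset.abs_sum_le_sum_abs _ _).trans ?_
        refine Finset.sum_le_sum fun x _ => ?_
        rw [← Finset.sum_sub_distrib]
        exact Finset.abs_sum_le_sum_abs _ _
    _ ≤ ∑ k : Fin K, ∑ x : X, ∑ u : U,
          (|μ (x, k) - μ' (x, k)| * pi k x μ u * MR
            + μ' (x, k) * |pi k x μ u - pi k x μ' u| * MR
            + μ' (x, k) * pi k x μ' u
              * |r k x u μ (fun q : U × Fin K => ∑ x, pi q.2 x μ q.1 * μ (x, q.2))
                - r k x u μ' (fun q : U × Fin K => ∑ x, pi q.2 x μ' q.1 * μ' (x, q.2))|) := by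
        refine Finset.sum_le_sum fun k _ => Finset.sum_le_sum fun x _ =>
          Finset.sum_le_sum fun u _ => ?_
        exact three_prod_bound _ _ _ _ _ _ _ (hμ'.1 (x, k)) ((hpiProb k x μ hμ).1 u)
          ((hpiProb k x μ' hμ').1 u) (hrBdd k x u μ _ hμ hν)
    _ ≤ MR * L + MR * LQ * L + LR * (2 + LQ) * L := by
        have hsplit : ∑ k : Fin K, ∑ x : X, ∑ u : U,
            (|μ (x, k) - μ' (x, k)| * pi k x μ u * MR
              + μ' (x, k) * |pi k x μ u - pi k x μ' u| * MR
              + μ' (x, k) * pi k x μ' u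
                * |r k x u μ (fun q : U × Fin K => ∑ x, pi q.2 x μ q.1 * μ (x, q.2))
                  - r k x u μ' (fun q : U × Fin K => ∑ x, pi q.2 x μ' q.1 * μ' (x, q.2))|)
            = (∑ k : Fin K, ∑ x : X, ∑ u : U, |μ (x, k) - μ' (x, k)| * pi k x μ u * MR)
              + (∑ k : Fin K, ∑ x : X, ∑ u : U,
                  μ' (x, k) * |pi k x μ u - pi k x μ' u| * MR)
              + ∑ k : Fin K, ∑ x : X, ∑ u : U, μ' (x, k) * pi k x μ' u
                * |r k x u μ (fun q : U × Fin K => ∑ x, pi q.2 x μ q.1 * μ (x, q.2))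
                  - r k x u μ' (fun q : U × Fin K => ∑ x, pi q.2 x μ' q.1 * μ' (x, q.2))| := by
          simp [Finset.sum_add_distrib]
        rw [hsplit]
        have hS1 : ∑ k : Fin K, ∑ x : X, ∑ u : U,
            |μ (x, k) - μ' (x, k)| * pi k x μ u * MR = MR * L := by
          calc ∑ k : Fin K, ∑ x : X, ∑ u : U, |μ (x, k) - μ' (x, k)| * pi k x μ u * MR
              = ∑ k : Fin K, ∑ x : X, |μ (x, k) - μ' (x, k)| * MR :=
                Finset.sum_congr rfl fun k _ => Finset.sum_congr rfl fun x _ =>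
                  sum_pi_mul (pi k x μ) _ (hpiProb k x μ hμ).2 _ fun u => by ring
            _ = (∑ k : Fin K, ∑ x : X, |μ (x, k) - μ' (x, k)|) * MR := sum_sum_mul _ _
            _ = MR * L := by rw [hmuL, mul_comm]
        have hS2 : ∑ k : Fin K, ∑ x : X, ∑ u : U,
            μ' (x, k) * |pi k x μ u - pi k x μ' u| * MR ≤ MR * LQ * L := by
          calc ∑ k : Fin K, ∑ x : X, ∑ u : U, μ' (x, k) * |pi k x μ u - pi k x μ' u| * MR
              = ∑ k : Fin K, ∑ x : X, μ' (x, k) * MR * l1 (pi k x μ) (pi k x μ') := by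
                refine Finset.sum_congr rfl fun k _ => Finset.sum_congr rfl fun x _ => ?_
                rw [l1, Finset.mul_sum]
                exact Finset.sum_congr rfl fun u _ => by ring
            _ ≤ ∑ k : Fin K, ∑ x : X, μ' (x, k) * MR * (LQ * L) := by
                refine Finset.sum_le_sum fun k _ => Finset.sum_le_sum fun x _ => ?_
                exact mul_le_mul_of_nonneg_left (hpiLip k x μ μ' hμ hμ')
                  (mul_nonneg (hμ'.1 (x, k)) hMR)
            _ = ∑ k : Fin K, ∑ x : X, μ' (x, k) * (MR * (LQ * L)) :=
                Finset.sum_congr rfl fun k _ => Finset.sum_congr rfl fun x _ => by ring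
            _ = MR * LQ * L := by rw [sum_sum_mul, hmu'1, one_mul]; ring
        have hS3 : ∑ k : Fin K, ∑ x : X, ∑ u : U, μ' (x, k) * pi k x μ' u
            * |r k x u μ (fun q : U × Fin K => ∑ x, pi q.2 x μ q.1 * μ (x, q.2))
              - r k x u μ' (fun q : U × Fin K => ∑ x, pi q.2 x μ' q.1 * μ' (x, q.2))|
            ≤ LR * (2 + LQ) * L := by
          have hrb : LR * (L + l1 (fun q : U × Fin K => ∑ x, pi q.2 x μ q.1 * μ (x, q.2))
              (fun q : U × Fin K => ∑ x, pi q.2 x μ' q.1 * μ' (x, q.2)))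
              ≤ LR * (2 + LQ) * L := by nlinarith [hνLip]
          calc ∑ k : Fin K, ∑ x : X, ∑ u : U, μ' (x, k) * pi k x μ' u
                * |r k x u μ (fun q : U × Fin K => ∑ x, pi q.2 x μ q.1 * μ (x, q.2))
                  - r k x u μ' (fun q : U × Fin K => ∑ x, pi q.2 x μ' q.1 * μ' (x, q.2))|
              ≤ ∑ k : Fin K, ∑ x : X, ∑ u : U, μ' (x, k) * pi k x μ' u
                * (LR * (2 + LQ) * L) := by
                refine Finset.sum_le_sum fun k _ => Finset.sum_le_sum fun x _ =>
                  Finset.sum_le_sum fun u _ => ?_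
                refine mul_le_mul_of_nonneg_left ?_
                  (mul_nonneg (hμ'.1 (x, k)) ((hpiProb k x μ' hμ').1 u))
                exact (hrLip k x u μ _ μ' _ hμ hν hμ' hν').trans hrb
            _ = ∑ k : Fin K, ∑ x : X, μ' (x, k) * (LR * (2 + LQ) * L) :=
                Finset.sum_congr rfl fun k _ => Finset.sum_congr rfl fun x _ =>
                  sum_pi_mul (pi k x μ') _ (hpiProb k x μ' hμ').2 _ fun u => by ring
            _ = LR * (2 + LQ) * L := by rw [sum_sum_mul, hmu'1, one_mul]
        linarith
    _ = (MR * (1 + LQ) + LR * (2 + LQ)) * L := by ring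
end

section
/- Let M, N, S be positive integers and C ≥ 0. For each m ∈ [M] and n ∈ [N], let X_{m,n} be a Bernoulli (i.e., {0,1}-valued) random variable on a common probability space such that for each m ∈ [M] the family (X_{m,n})_{n∈[N]} is mutually independent, and such that for each n ∈ [N], Σ_{m∈[M]} E[X_{m,n}] = 1. Let C_{m,n} ∈ ℝ^S be constant vectors with |C_{m,n}|₁ ≤ C for all m, n. Then Σ_{s=1}^{S} Σ_{m=1}^{M} E| Σ_{n=1}^{N} C_{m,n}(s)·(X_{m,n} − E[X_{m,n}]) | ≤ C·√(M·N·S). -/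
open MeasureTheory ProbabilityTheory Finset

lemma abs_int_le_sqrt {Ω : Type*} [MeasurableSpace Ω] (P : Measure Ω) [IsProbabilityMeasure P]
    (Z : Ω → ℝ) (hZ : MemLp Z 2 P) :
    ∫ ω, |Z ω| ∂P ≤ Real.sqrt (∫ ω, (Z ω) ^ 2 ∂P) := by
  have hconj : Real.HolderConjugate 2 2 := Real.HolderConjugate.two_two
  have hf : MemLp (fun ω => |Z ω|) (ENNReal.ofReal 2) P := by
    simpa [Real.norm_eq_abs, ENNReal.ofReal_ofNat] using hZ.norm
  have hg : MemLp (fun _ : Ω => (1 : ℝ)) (ENNReal.ofReal 2) P := memLp_const 1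
  have h := integral_mul_le_Lp_mul_Lq_of_nonneg hconj
    (Filter.Eventually.of_forall fun ω => abs_nonneg (Z ω))
    (Filter.Eventually.of_forall fun _ => zero_le_one) hf hg
  simp only [mul_one, Real.one_rpow, integral_const, measure_univ, probReal_univ, ENNReal.toReal_one,
    smul_eq_mul, one_mul] at h
  have h1 : ∀ ω, |Z ω| ^ (2 : ℝ) = (Z ω) ^ 2 := fun ω => by
    rw [Real.rpow_two, sq_abs]
  rw [show (fun a => |Z a| ^ (2:ℝ)) = fun a => (Z a) ^ 2 from funext h1] at h
  rwa [Real.sqrt_eq_rpow]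

theorem stmt3 {Ω : Type*} [MeasurableSpace Ω] (P : Measure Ω) [IsProbabilityMeasure P]
    (M N S : ℕ) (hM : 0 < M) (hN : 0 < N) (hS : 0 < S)
    (C : ℝ) (hC : 0 ≤ C)
    (X : Fin M → Fin N → Ω → ℝ)
    (hmeas : ∀ m n, Measurable (X m n))
    (hBer : ∀ m n ω, X m n ω = 0 ∨ X m n ω = 1)
    (hindep : ∀ m, iIndepFun (X m) P)
    (hsum : ∀ n, ∑ m, ∫ ω, X m n ω ∂P = 1)
    (Cv : Fin M → Fin N → Fin S → ℝ)
    (hCv : ∀ m n, ∑ s, |Cv m n s| ≤ C) :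
    ∑ s, ∑ m, ∫ ω, |∑ n, Cv m n s * (X m n ω - ∫ ω', X m n ω' ∂P)| ∂P
      ≤ C * Real.sqrt ((M : ℝ) * N * S) := by
  classical
  set p : Fin M → Fin N → ℝ := fun m n => ∫ ω, X m n ω ∂P with hp
  have hXbd : ∀ m n ω, ‖X m n ω‖ ≤ 1 := fun m n ω => by
    rcases hBer m n ω with h | h <;> simp [h]
  have hX2 : ∀ m n, MemLp (X m n) 2 P := fun m n =>
    MemLp.of_bound (hmeas m n).aestronglyMeasurable 1 (Filter.Eventually.of_forall (hXbd m n))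
  have hXint : ∀ m n, Integrable (X m n) P := fun m n => (hX2 m n).integrable one_le_two
  have hp0 : ∀ m n, 0 ≤ p m n := fun m n =>
    integral_nonneg fun ω => by rcases hBer m n ω with h | h <;> simp [h]
  have hvar : ∀ m n, variance (X m n) P ≤ p m n := by
    intro m n
    rw [variance_eq_sub (hX2 m n)]
    have hsq : (X m n) ^ 2 = X m n := funext fun ω => by
      rcases hBer m n ω with h | h <;> simp [Pi.pow_apply, h]
    rw [hsq]
    have : (0:ℝ) ≤ (∫ ω, X m n ω ∂P) ^ 2 := sq_nonneg _
    simp only [hp]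
    linarith
  -- key per (m,s) bound
  have key : ∀ m s, ∫ ω, |∑ n, Cv m n s * (X m n ω - p m n)| ∂P
      ≤ Real.sqrt (∑ n, (Cv m n s) ^ 2 * p m n) := by
    intro m s
    set Y : Fin N → Ω → ℝ := fun n ω => Cv m n s * X m n ω with hYdef
    have hY2 : ∀ n, MemLp (Y n) 2 P := fun n => (hX2 m n).const_mul _
    have hW2 : MemLp (∑ n, Y n) 2 P := memLp_finsetSum' _ fun n _ => hY2 n
    have hWint : ∫ ω, (∑ n, Y n) ω ∂P = ∑ n, Cv m n s * p m n := by
      simp only [Finset.sum_apply]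
      rw [integral_finset_sum _ fun n _ => (hXint m n).const_mul _]
      simp only [hYdef, integral_const_mul, hp]
    set Z : Ω → ℝ := fun ω => ∑ n, Cv m n s * (X m n ω - p m n) with hZdef
    have hZeq : Z = fun ω => (∑ n, Y n) ω - ∫ ω', (∑ n, Y n) ω' ∂P := by
      funext ω
      rw [hWint]
      simp only [hZdef, Finset.sum_apply, hYdef, mul_sub, Finset.sum_sub_distrib]
    have hZ2 : MemLp Z 2 P := by
      rw [hZeq]
      exact hW2.sub (memLp_const _)
    have hvarW : variance (∑ n, Y n) P = ∫ ω, (Z ω) ^ 2 ∂P := by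
      rw [variance_eq_integral hW2.aestronglyMeasurable.aemeasurable]
      refine integral_congr_ae (Filter.Eventually.of_forall fun ω => ?_)
      simp only [Pi.pow_apply, Pi.sub_apply, hZeq]
    have hpair : Set.Pairwise ↑(univ : Finset (Fin N)) fun i j => IndepFun (Y i) (Y j) P := by
      intro i _ j _ hij
      exact ((hindep m).indepFun hij).comp
        (measurable_const_mul (Cv m i s)) (measurable_const_mul (Cv m j s))
    have hvarsum : variance (∑ n, Y n) P = ∑ n, variance (Y n) P :=
      IndepFun.variance_sum (fun n _ => hY2 n) hpair
    have hvarY : ∀ n, variance (Y n) P ≤ (Cv m n s) ^ 2 * p m n := by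
      intro n
      have := variance_const_mul (Cv m n s) (X m n) P
      rw [hYdef]
      rw [this]
      exact mul_le_mul_of_nonneg_left (hvar m n) (sq_nonneg _)
    calc ∫ ω, |Z ω| ∂P ≤ Real.sqrt (∫ ω, (Z ω) ^ 2 ∂P) := abs_int_le_sqrt P Z hZ2
      _ = Real.sqrt (∑ n, variance (Y n) P) := by rw [← hvarW, hvarsum]
      _ ≤ Real.sqrt (∑ n, (Cv m n s) ^ 2 * p m n) :=
          Real.sqrt_le_sqrt (Finset.sum_le_sum fun n _ => hvarY n)
  -- sum of the key bounds
  set a : Fin S → Fin M → ℝ := fun s m => ∑ n, (Cv m n s) ^ 2 * p m n with ha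
  have ha0 : ∀ s m, 0 ≤ a s m := fun s m =>
    Finset.sum_nonneg fun n _ => mul_nonneg (sq_nonneg _) (hp0 m n)
  have h1 : ∑ s, ∑ m, ∫ ω, |∑ n, Cv m n s * (X m n ω - p m n)| ∂P
      ≤ ∑ s, ∑ m, Real.sqrt (a s m) :=
    Finset.sum_le_sum fun s _ => Finset.sum_le_sum fun m _ => key m s
  -- Cauchy-Schwarz on the double sum
  have h2 : ∑ s, ∑ m, Real.sqrt (a s m)
      ≤ Real.sqrt ((S : ℝ) * M * ∑ s, ∑ m, a s m) := by
    have hT : ∑ s, ∑ m, Real.sqrt (a s m)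
        = ∑ x : Fin S × Fin M, Real.sqrt (a x.1 x.2) := by
      rw [Fintype.sum_prod_type]
    have hA : ∑ s, ∑ m, a s m = ∑ x : Fin S × Fin M, a x.1 x.2 := by
      rw [Fintype.sum_prod_type]
    rw [hT, hA]
    have hsq := sq_sum_le_card_mul_sum_sq
      (s := (univ : Finset (Fin S × Fin M))) (f := fun x => Real.sqrt (a x.1 x.2))
    have hcard : ((univ : Finset (Fin S × Fin M)).card : ℝ) = (S : ℝ) * M := by
      simp [Fintype.card_prod]
    have hsq' : (∑ x : Fin S × Fin M, Real.sqrt (a x.1 x.2)) ^ 2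
        ≤ (S : ℝ) * M * ∑ x : Fin S × Fin M, a x.1 x.2 := by
      calc (∑ x : Fin S × Fin M, Real.sqrt (a x.1 x.2)) ^ 2
          ≤ ((univ : Finset (Fin S × Fin M)).card : ℝ)
            * ∑ x : Fin S × Fin M, Real.sqrt (a x.1 x.2) ^ 2 := by exact_mod_cast hsq
        _ = (S : ℝ) * M * ∑ x : Fin S × Fin M, a x.1 x.2 := by
            rw [hcard]
            congr 1
            exact Finset.sum_congr rfl fun x _ => Real.sq_sqrt (ha0 x.1 x.2)
    have hnn : 0 ≤ ∑ x : Fin S × Fin M, Real.sqrt (a x.1 x.2) :=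
      Finset.sum_nonneg fun x _ => Real.sqrt_nonneg _
    calc ∑ x : Fin S × Fin M, Real.sqrt (a x.1 x.2)
        = Real.sqrt ((∑ x : Fin S × Fin M, Real.sqrt (a x.1 x.2)) ^ 2) :=
          (Real.sqrt_sq hnn).symm
      _ ≤ Real.sqrt ((S : ℝ) * M * ∑ x : Fin S × Fin M, a x.1 x.2) :=
          Real.sqrt_le_sqrt hsq'
  -- bound the inner sum
  have hCsq : ∀ m n, ∑ s, (Cv m n s) ^ 2 ≤ C ^ 2 := by
    intro m n
    have hone : ∀ s, |Cv m n s| ≤ C := fun s =>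
      le_trans (Finset.single_le_sum (f := fun s => |Cv m n s|)
        (fun s _ => abs_nonneg _) (Finset.mem_univ s)) (hCv m n)
    calc ∑ s, (Cv m n s) ^ 2 = ∑ s, |Cv m n s| * |Cv m n s| := by
          simp [sq_abs, sq]
      _ ≤ ∑ s, C * |Cv m n s| :=
          Finset.sum_le_sum fun s _ =>
            mul_le_mul_of_nonneg_right (hone s) (abs_nonneg _)
      _ = C * ∑ s, |Cv m n s| := by rw [Finset.mul_sum]
      _ ≤ C * C := mul_le_mul_of_nonneg_left (hCv m n) hC
      _ = C ^ 2 := (sq C).symm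
  have h3 : ∑ s, ∑ m, a s m ≤ C ^ 2 * N := by
    have hre : ∑ s, ∑ m, a s m = ∑ m, ∑ n, (∑ s, (Cv m n s) ^ 2) * p m n := by
      simp only [ha]
      rw [Finset.sum_comm]
      refine Finset.sum_congr rfl fun m _ => ?_
      rw [Finset.sum_comm]
      exact Finset.sum_congr rfl fun n _ => by rw [Finset.sum_mul]
    rw [hre]
    calc ∑ m, ∑ n, (∑ s, (Cv m n s) ^ 2) * p m n
        ≤ ∑ m, ∑ n, C ^ 2 * p m n :=
          Finset.sum_le_sum fun m _ => Finset.sum_le_sum fun n _ =>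
            mul_le_mul_of_nonneg_right (hCsq m n) (hp0 m n)
      _ = C ^ 2 * ∑ n, ∑ m, p m n := by rw [Finset.sum_comm]; simp [Finset.mul_sum]
      _ = C ^ 2 * N := by
          have : ∑ n, ∑ m, p m n = (N : ℝ) := by
            rw [Finset.sum_congr rfl fun n _ => hsum n]
            simp
          rw [this]
  -- combine
  calc ∑ s, ∑ m, ∫ ω, |∑ n, Cv m n s * (X m n ω - p m n)| ∂P
      ≤ ∑ s, ∑ m, Real.sqrt (a s m) := h1
    _ ≤ Real.sqrt ((S : ℝ) * M * ∑ s, ∑ m, a s m) := h2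
    _ ≤ Real.sqrt ((S : ℝ) * M * (C ^ 2 * N)) := by
        apply Real.sqrt_le_sqrt
        exact mul_le_mul_of_nonneg_left h3 (by positivity)
    _ = C * Real.sqrt ((M : ℝ) * N * S) := by
        rw [show (S : ℝ) * M * (C ^ 2 * N) = C ^ 2 * ((M : ℝ) * N * S) by ring,
          Real.sqrt_mul (sq_nonneg C), Real.sqrt_sq hC]
end

section
/- Let U be a finite nonempty set, K a positive integer, and N_1,...,N_K positive integers with N_pop = Σ_{k∈[K]} N_k. For each k ∈ [K] and j ∈ [N_k], let u_{j,k} be a U-valued random variable on a common probability space, and assume the family (u_{j,k})_{j∈[N_k], k∈[K]} is mutually independent. Define the random empirical distribution ν^N(u,k) = (1/N_pop)·Σ_{j=1}^{N_k} 1{u_{j,k} = u} and its mean ν̂(u,k) = (1/N_pop)·Σ_{j=1}^{N_k} P(u_{j,k} = u). Then E[ Σ_{k∈[K]} Σ_{u∈U} |ν^N(u,k) − ν̂(u,k)| ] ≤ (1/N_pop)·(Σ_{k∈[K]} √N_k)·√|U|. -/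
open MeasureTheory ProbabilityTheory Finset

lemma aux_abs_dev {Ω : Type*} [MeasurableSpace Ω] (P : Measure Ω)
    [IsProbabilityMeasure P] {Y : Ω → ℝ} (hY : MemLp Y 2 P) :
    ∫ ω, |Y ω - ∫ ω', Y ω' ∂P| ∂P ≤ Real.sqrt (variance Y P) := by
  set m := ∫ ω', Y ω' ∂P with hm
  have hZ : MemLp (fun ω => |Y ω - m|) 2 P := by
    have := (hY.sub (memLp_const m)).norm
    simpa [Real.norm_eq_abs] using this
  have h1 : 0 ≤ variance (fun ω => |Y ω - m|) P := variance_nonneg _ _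
  rw [variance_eq_sub hZ] at h1
  have h2 : ∫ ω, ((fun ω => |Y ω - m|) ^ 2) ω ∂P = ∫ ω, (Y ω - m) ^ 2 ∂P := by
    simp [sq_abs]
  have h3 : variance Y P = ∫ ω, (Y ω - m) ^ 2 ∂P := by
    rw [variance_eq_integral hY.aestronglyMeasurable.aemeasurable]
  rw [Real.le_sqrt (integral_nonneg fun ω => abs_nonneg _) (by rw [h3]; positivity)]
  rw [h3]
  nlinarith [h1, h2]

lemma aux_cs {ι : Type*} [Fintype ι] (v : ι → ℝ) (hv : ∀ i, 0 ≤ v i) :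
    ∑ i, Real.sqrt (v i) ≤ Real.sqrt (Fintype.card ι) * Real.sqrt (∑ i, v i) := by
  rw [← Real.sqrt_mul (by positivity)]
  refine le_trans (le_abs_self _) (Real.abs_le_sqrt ?_)
  calc (∑ i, Real.sqrt (v i)) ^ 2 ≤ (Fintype.card ι : ℝ) * ∑ i, (Real.sqrt (v i))^2 := by
        simpa [Finset.card_univ] using sq_sum_le_card_mul_sum_sq (s := (univ : Finset ι)) (f := fun i => Real.sqrt (v i))
    _ ≤ (Fintype.card ι : ℝ) * ∑ i, v i := by
        gcongr with i _
        rw [Real.sq_sqrt (hv i)]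

theorem stmt6 {Ω : Type*} [MeasurableSpace Ω] (P : Measure Ω) [IsProbabilityMeasure P]
    {U : Type*} [Fintype U] [Nonempty U] [DecidableEq U]
    [MeasurableSpace U] [MeasurableSingletonClass U]
    (K : ℕ) (hK : 0 < K) (N : Fin K → ℕ) (hN : ∀ k, 0 < N k)
    (Npop : ℝ) (hNpop : Npop = ∑ k, (N k : ℝ))
    (u : (k : Fin K) → Fin (N k) → Ω → U)
    (hmeas : ∀ k j, Measurable (u k j))
    (hindep : iIndepFun
      (fun p : Σ k : Fin K, Fin (N k) => u p.1 p.2) P)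
    (νN : Ω → U × Fin K → ℝ)
    (hνN : ∀ ω u0 k, νN ω (u0, k) = (∑ j, if u k j ω = u0 then (1 : ℝ) else 0) / Npop)
    (νhat : U × Fin K → ℝ)
    (hνhat : ∀ u0 k, νhat (u0, k) = (∑ j, (P {ω | u k j ω = u0}).toReal) / Npop) :
    ∫ ω, ∑ k, ∑ u0 : U, |νN ω (u0, k) - νhat (u0, k)| ∂P
      ≤ (1 / Npop) * (∑ k, Real.sqrt (N k)) * Real.sqrt (Fintype.card U) := by
  classical
  have hKne : Nonempty (Fin K) := ⟨⟨0, hK⟩⟩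
  have hNpos : 0 < Npop := by
    rw [hNpop]
    exact Finset.sum_pos (fun k _ => by exact_mod_cast hN k) univ_nonempty
  set X : (k : Fin K) → Fin (N k) → U → Ω → ℝ :=
    fun k j u0 ω => if u k j ω = u0 then 1 else 0 with hX
  have hXmeas : ∀ k j u0, Measurable (X k j u0) := fun k j u0 =>
    Measurable.ite ((hmeas k j) (measurableSet_singleton u0)) measurable_const measurable_const
  have hXmem : ∀ k j u0, MemLp (X k j u0) 2 P := by
    intro k j u0
    refine (memLp_top_of_bound (hXmeas k j u0).aestronglyMeasurable 1
      (Filter.Eventually.of_forall fun ω => ?_)).mono_exponent le_top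
    by_cases h : u k j ω = u0 <;> simp [hX, h]
  set p : (k : Fin K) → Fin (N k) → U → ℝ := fun k j u0 => (P {ω | u k j ω = u0}).toReal with hp
  have hXint : ∀ k j u0, ∫ ω, X k j u0 ω ∂P = p k j u0 := by
    intro k j u0
    have h1 : X k j u0 = Set.indicator (u k j ⁻¹' {u0}) (fun _ => (1:ℝ)) := by
      ext ω; by_cases h : u k j ω = u0 <;> simp [hX, h, Set.indicator_apply]
    rw [h1, integral_indicator_const _ ((hmeas k j) (measurableSet_singleton u0))]
    simp [hp]
    rfl
  have hvarX : ∀ k j u0, variance (X k j u0) P ≤ p k j u0 := by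
    intro k j u0
    rw [variance_eq_sub (hXmem k j u0)]
    have hsq : (X k j u0) ^ 2 = X k j u0 := by
      ext ω; by_cases h : u k j ω = u0 <;> simp [hX, h]
    have h2 : P[X k j u0] = p k j u0 := hXint k j u0
    rw [hsq, h2]
    nlinarith [sq_nonneg (p k j u0)]
  have hpair : ∀ k u0, Set.Pairwise ↑(univ : Finset (Fin (N k)))
      (fun i j => IndepFun (X k i u0) (X k j u0) P) := by
    intro k u0 i _ j _ hij
    have hne : (⟨k, i⟩ : Σ k, Fin (N k)) ≠ ⟨k, j⟩ := by simp [hij]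
    have h1 : IndepFun (u k i) (u k j) P := hindep.indepFun hne
    have hg : Measurable (fun v : U => if v = u0 then (1:ℝ) else 0) :=
      Measurable.ite (measurableSet_singleton u0) measurable_const measurable_const
    exact h1.comp hg hg
  set S : (k : Fin K) → U → Ω → ℝ := fun k u0 ω => ∑ j, X k j u0 ω with hS
  have hSfun : ∀ k u0, S k u0 = ∑ j, X k j u0 := by
    intro k u0; ext ω; simp [hS, Finset.sum_apply]
  have hSmem : ∀ k u0, MemLp (S k u0) 2 P := by
    intro k u0; rw [hSfun]; exact memLp_finset_sum' _ (fun j _ => hXmem k j u0)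
  have hvarS : ∀ k u0, variance (S k u0) P ≤ ∑ j, p k j u0 := by
    intro k u0
    rw [hSfun, IndepFun.variance_sum (fun j _ => hXmem k j u0) (hpair k u0)]
    exact Finset.sum_le_sum fun j _ => hvarX k j u0
  have hSint : ∀ k u0, ∫ ω, S k u0 ω ∂P = ∑ j, p k j u0 := by
    intro k u0
    rw [integral_finset_sum _ (fun j _ => (hXmem k j u0).integrable one_le_two)]
    exact Finset.sum_congr rfl fun j _ => hXint k j u0
  have hp1 : ∀ k j, ∑ u0 : U, p k j u0 = 1 := by
    intro k j
    have h2 := sum_measure_preimage_singleton (μ := P) (univ : Finset U)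
      (fun u0 _ => (hmeas k j) (measurableSet_singleton u0))
    have h3 : ∑ u0 : U, P {ω | u k j ω = u0} = 1 := by
      calc ∑ u0 : U, P {ω | u k j ω = u0} = ∑ u0 : U, P (u k j ⁻¹' {u0}) := rfl
        _ = P (u k j ⁻¹' ↑(univ : Finset U)) := h2
        _ = 1 := by simp
    calc ∑ u0 : U, p k j u0 = (∑ u0 : U, P {ω | u k j ω = u0}).toReal := by
          rw [ENNReal.toReal_sum (fun _ _ => measure_ne_top _ _)]
      _ = 1 := by rw [h3]; simp
  have hdev : ∀ k u0, ∫ ω, |S k u0 ω - ∑ j, p k j u0| ∂P ≤ Real.sqrt (variance (S k u0) P) := by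
    intro k u0
    have h := aux_abs_dev P (hSmem k u0)
    rwa [hSint k u0] at h
  have hterm : ∀ k u0 ω, |νN ω (u0, k) - νhat (u0, k)| = |S k u0 ω - ∑ j, p k j u0| / Npop := by
    intro k u0 ω
    rw [hνN, hνhat, div_sub_div_same, abs_div, abs_of_pos hNpos]
  have hint : ∀ k u0, Integrable (fun ω => |νN ω (u0, k) - νhat (u0, k)|) P := by
    intro k u0
    have h : (fun ω => |νN ω (u0, k) - νhat (u0, k)|)
        = fun ω => |S k u0 ω - ∑ j, p k j u0| / Npop := by
      ext ω; rw [hterm]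
    rw [h]
    exact ((((hSmem k u0).integrable one_le_two).sub (integrable_const _)).abs).div_const _
  have hIeq : ∀ k u0, ∫ ω, |νN ω (u0, k) - νhat (u0, k)| ∂P
      = (∫ ω, |S k u0 ω - ∑ j, p k j u0| ∂P) / Npop := by
    intro k u0
    simp_rw [hterm]
    exact integral_div _ _
  calc ∫ ω, ∑ k, ∑ u0 : U, |νN ω (u0, k) - νhat (u0, k)| ∂P
      = ∑ k, ∑ u0 : U, ∫ ω, |νN ω (u0, k) - νhat (u0, k)| ∂P := by
        rw [integral_finset_sum _ (fun k _ => integrable_finset_sum _ fun u0 _ => hint k u0)]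
        exact Finset.sum_congr rfl fun k _ => integral_finset_sum _ fun u0 _ => hint k u0
    _ ≤ ∑ k, Real.sqrt (N k) * Real.sqrt (Fintype.card U) / Npop := by
        apply Finset.sum_le_sum
        intro k _
        calc ∑ u0 : U, ∫ ω, |νN ω (u0, k) - νhat (u0, k)| ∂P
            = (∑ u0 : U, ∫ ω, |S k u0 ω - ∑ j, p k j u0| ∂P) / Npop := by
              simp_rw [hIeq]; rw [Finset.sum_div]
          _ ≤ (∑ u0 : U, Real.sqrt (variance (S k u0) P)) / Npop := by
              gcongr with u0 _
              exact hdev k u0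
          _ ≤ (Real.sqrt (Fintype.card U) * Real.sqrt (∑ u0 : U, variance (S k u0) P)) / Npop := by
              gcongr
              exact aux_cs _ (fun u0 => variance_nonneg _ _)
          _ ≤ (Real.sqrt (Fintype.card U) * Real.sqrt (N k)) / Npop := by
              gcongr
              calc ∑ u0 : U, variance (S k u0) P ≤ ∑ u0 : U, ∑ j, p k j u0 :=
                    Finset.sum_le_sum fun u0 _ => hvarS k u0
                _ = ∑ j, ∑ u0 : U, p k j u0 := Finset.sum_comm
                _ = (N k : ℝ) := by simp [hp1]
          _ = Real.sqrt (N k) * Real.sqrt (Fintype.card U) / Npop := by ring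
    _ = (1 / Npop) * (∑ k, Real.sqrt (N k)) * Real.sqrt (Fintype.card U) := by
        rw [← Finset.sum_div, ← Finset.sum_mul]
        ring
end

section
/- Let X and U be finite nonempty sets, K a positive integer, N_1,...,N_K positive integers with N_pop = Σ_k N_k, and M_R, L_R ≥ 0. Fix states x_{j,k} ∈ X for j ∈ [N_k], k ∈ [K], and let μ^N ∈ P(X×[K]) be their empirical distribution, μ^N(x,k) = (1/N_pop)·Σ_{j=1}^{N_k} 1{x_{j,k} = x}. Let π = (π_k)_{k∈[K]} be decision rules π_k : X × P(X×[K]) → P(U), and let (u_{j,k})_{j,k} be mutually independent U-valued random variables with u_{j,k} distributed according to π_k(x_{j,k}, μ^N). Let ν^N ∈ P(U×[K]) be the random empirical action distribution ν^N(u,k) = (1/N_pop)·Σ_{j=1}^{N_k} 1{u_{j,k} = u}. Let r_k : X × U × P(X×[K]) × P(U×[K]) → ℝ satisfy |r_k(x,u,μ,ν)| ≤ M_R and |r_k(x,u,μ,ν₁) − r_k(x,u,μ,ν₂)| ≤ L_R·|ν₁ − ν₂|₁ for all arguments. Define ν^MF(μ^N,π)(u,k) = Σ_{x∈X} π_k(x,μ^N)(u)·μ^N(x,k)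 and r_k^MF(μ^N,π) = Σ_{x,u} μ^N(x,k)·π_k(x,μ^N)(u)·r_k(x,u,μ^N,ν^MF(μ^N,π)). Then E| (1/N_pop)·Σ_{k∈[K]} Σ_{j=1}^{N_k} r_k(x_{j,k}, u_{j,k}, μ^N, ν^N) − Σ_{k∈[K]} r_k^MF(μ^N,π) | ≤ (M_R + L_R)·√|U|·(1/N_pop)·Σ_{k∈[K]} √N_k. -/
open MeasureTheory ProbabilityTheory Finset

section aux

variable {F U : Type*} [Fintype F] [Fintype U] [DecidableEq F]

/-- weight of configuration c under product measure -/
noncomputable def Wt (w : F → U → ℝ) (c : F → U) : ℝ := ∏ p, w p (c p)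

omit [Fintype U] [DecidableEq F] in
lemma Wt_nonneg (w : F → U → ℝ) (hw0 : ∀ p u, 0 ≤ w p u) (c : F → U) : 0 ≤ Wt w c :=
  Finset.prod_nonneg fun p _ => hw0 p (c p)

lemma sum_Wt_mul_prod (w : F → U → ℝ) (hw1 : ∀ p, ∑ u, w p u = 1)
    (s : Finset F) (a : F → U → ℝ) :
    ∑ c : F → U, Wt w c * ∏ p ∈ s, a p (c p) = ∏ p ∈ s, ∑ u, w p u * a p u := by
  have key : ∀ c : F → U, Wt w c * ∏ p ∈ s, a p (c p)
      = ∏ p, (w p (c p) * if p ∈ s then a p (c p) else 1) := by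
    intro c
    rw [Finset.prod_mul_distrib, Finset.prod_ite_mem, Finset.univ_inter]
    rfl
  simp_rw [key]
  have := (Finset.prod_univ_sum (fun _ : F => (Finset.univ : Finset U))
    (fun p u => w p u * if p ∈ s then a p u else 1)).symm
  rw [Fintype.piFinset_univ] at this
  rw [this, show (∏ p ∈ s, ∑ u, w p u * a p u) = ∏ p, if p ∈ s then ∑ u, w p u * a p u else 1
    from by rw [Finset.prod_ite_mem, Finset.univ_inter]]
  apply Finset.prod_congr rfl
  intro p _
  by_cases hp : p ∈ s
  · simp [hp]
  · simp [hp, hw1 p]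

lemma sum_Wt (w : F → U → ℝ) (hw1 : ∀ p, ∑ u, w p u = 1) :
    ∑ c : F → U, Wt w c = 1 := by
  have := sum_Wt_mul_prod w hw1 ∅ (fun _ _ => 1)
  simpa using this

lemma sum_Wt_single (w : F → U → ℝ) (hw1 : ∀ p, ∑ u, w p u = 1)
    (p : F) (a : U → ℝ) :
    ∑ c : F → U, Wt w c * a (c p) = ∑ u, w p u * a u := by
  have := sum_Wt_mul_prod w hw1 {p} (fun _ u => a u)
  simpa using this

lemma sum_Wt_pair (w : F → U → ℝ) (hw1 : ∀ p, ∑ u, w p u = 1)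
    {p q : F} (hpq : p ≠ q) (a b : U → ℝ) :
    ∑ c : F → U, Wt w c * (a (c p) * b (c q))
      = (∑ u, w p u * a u) * (∑ u, w q u * b u) := by
  have := sum_Wt_mul_prod w hw1 {p, q} (fun r => if r = p then a else b)
  simp only [Finset.prod_pair hpq, if_pos rfl, if_neg (Ne.symm hpq)] at this
  exact this

/-- Core concentration lemma: mean abs deviation of a sum of independent terms. -/
lemma core_lemma (w : F → U → ℝ) (hw0 : ∀ p u, 0 ≤ w p u) (hw1 : ∀ p, ∑ u, w p u = 1)
    (f : F → U → ℝ) :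
    ∑ c : F → U, Wt w c * |∑ p, (f p (c p) - ∑ u, w p u * f p u)|
      ≤ Real.sqrt (∑ p, ∑ u, w p u * (f p u) ^ 2) := by
  set m : F → ℝ := fun p => ∑ u, w p u * f p u with hm
  set ε : F → U → ℝ := fun p u => f p u - m p with hε
  set Z : (F → U) → ℝ := fun c => ∑ p, ε p (c p) with hZ
  have hε0 : ∀ p, ∑ u, w p u * ε p u = 0 := by
    intro p
    simp only [hε, mul_sub, Finset.sum_sub_distrib, ← Finset.sum_mul, hw1, ← hm]
    ring
  -- second moment identity
  have hvar : ∑ c : F → U, Wt w c * (Z c) ^ 2 = ∑ p, ∑ u, w p u * (ε p u) ^ 2 := by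
    have expand : ∀ c, (Z c) ^ 2 = ∑ p, ∑ q, ε p (c p) * ε q (c q) := by
      intro c
      rw [sq, hZ, Finset.sum_mul_sum]
    simp_rw [expand, Finset.mul_sum]
    rw [Finset.sum_comm]
    apply Finset.sum_congr rfl
    intro p _
    rw [Finset.sum_comm]
    have : ∀ q, ∑ c : F → U, Wt w c * (ε p (c p) * ε q (c q))
        = if q = p then ∑ u, w p u * (ε p u) ^ 2 else 0 := by
      intro q
      by_cases hq : q = p
      · subst hq
        rw [if_pos rfl]
        rw [sum_Wt_single w hw1 q (fun u => ε q u * ε q u)]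
        exact Finset.sum_congr rfl fun u0 _ => by rw [sq]
      · rw [if_neg hq, sum_Wt_pair w hw1 (Ne.symm hq), hε0 p, zero_mul]
    simp_rw [this]
    simp
  -- variance bound
  have hVb : ∑ p, ∑ u, w p u * (ε p u) ^ 2 ≤ ∑ p, ∑ u, w p u * (f p u) ^ 2 := by
    apply Finset.sum_le_sum
    intro p _
    have expand : ∀ u0, w p u0 * (ε p u0) ^ 2
        = w p u0 * (f p u0) ^ 2 - 2 * m p * (w p u0 * f p u0) + (m p) ^ 2 * w p u0 := by
      intro u0; simp only [hε]; ring
    simp_rw [expand]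
    rw [Finset.sum_add_distrib, Finset.sum_sub_distrib, ← Finset.mul_sum, ← Finset.mul_sum,
      hw1]
    have hmp : ∑ i : U, w p i * f p i = m p := rfl
    rw [hmp]
    nlinarith [sq_nonneg (m p)]
  -- Cauchy–Schwarz
  have hcs : (∑ c : F → U, Wt w c * |Z c|) ^ 2 ≤ ∑ c : F → U, Wt w c * (Z c) ^ 2 := by
    have key : ∀ c : F → U, Wt w c * |Z c|
        = Real.sqrt (Wt w c) * (Real.sqrt (Wt w c) * |Z c|) := by
      intro c
      rw [← mul_assoc, Real.mul_self_sqrt (Wt_nonneg w hw0 c)]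
    calc (∑ c : F → U, Wt w c * |Z c|) ^ 2
        = (∑ c : F → U, Real.sqrt (Wt w c) * (Real.sqrt (Wt w c) * |Z c|)) ^ 2 := by
          simp_rw [key]
      _ ≤ (∑ c : F → U, Real.sqrt (Wt w c) ^ 2) * ∑ c : F → U, (Real.sqrt (Wt w c) * |Z c|) ^ 2 :=
          Finset.sum_mul_sq_le_sq_mul_sq _ _ _
      _ = ∑ c : F → U, Wt w c * (Z c) ^ 2 := by
          have e1 : ∀ c : F → U, Real.sqrt (Wt w c) ^ 2 = Wt w c := fun c =>
            Real.sq_sqrt (Wt_nonneg w hw0 c)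
          have e2 : ∀ c : F → U, (Real.sqrt (Wt w c) * |Z c|) ^ 2 = Wt w c * (Z c) ^ 2 := by
            intro c
            rw [mul_pow, e1, sq_abs]
          simp_rw [e1, e2, sum_Wt w hw1, one_mul]
  have hnn : 0 ≤ ∑ c : F → U, Wt w c * |Z c| :=
    Finset.sum_nonneg fun c _ => mul_nonneg (Wt_nonneg w hw0 c) (abs_nonneg _)
  have hrhsnn : 0 ≤ ∑ p, ∑ u, w p u * (f p u) ^ 2 :=
    Finset.sum_nonneg fun p _ => Finset.sum_nonneg fun u0 _ =>
      mul_nonneg (hw0 p u0) (sq_nonneg _)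
  rw [Real.le_sqrt hnn hrhsnn]
  calc (∑ c : F → U, Wt w c * |Z c|) ^ 2 ≤ ∑ c : F → U, Wt w c * (Z c) ^ 2 := hcs
    _ = ∑ p, ∑ u, w p u * (ε p u) ^ 2 := hvar
    _ ≤ _ := hVb

lemma sum_sqrt_le {A : Type*} [Fintype A] (a : A → ℝ) (ha : ∀ u, 0 ≤ a u) :
    ∑ u, Real.sqrt (a u) ≤ Real.sqrt (Fintype.card A) * Real.sqrt (∑ u, a u) := by
  rw [← Real.sqrt_mul (Nat.cast_nonneg _)]
  have hnn : 0 ≤ ∑ u, Real.sqrt (a u) :=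
    Finset.sum_nonneg fun u _ => Real.sqrt_nonneg _
  have hrhs : 0 ≤ (Fintype.card A : ℝ) * ∑ u, a u :=
    mul_nonneg (Nat.cast_nonneg _) (Finset.sum_nonneg fun u _ => ha u)
  rw [Real.le_sqrt hnn hrhs]
  calc (∑ u, Real.sqrt (a u)) ^ 2 = (∑ u, 1 * Real.sqrt (a u)) ^ 2 := by simp
    _ ≤ (∑ _u : A, (1:ℝ) ^ 2) * ∑ u, Real.sqrt (a u) ^ 2 :=
        Finset.sum_mul_sq_le_sq_mul_sq _ _ _
    _ = (Fintype.card A : ℝ) * ∑ u, a u := by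
        simp_rw [Real.sq_sqrt (ha _)]
        simp [Finset.card_univ]

lemma integral_eq_sum {Ω : Type*} [MeasurableSpace Ω] (P : Measure Ω) [IsProbabilityMeasure P]
    [DecidableEq U] [MeasurableSpace U] [MeasurableSingletonClass U]
    (v : F → Ω → U) (hvmeas : ∀ p, Measurable (v p))
    (hvindep : iIndepFun v P)
    (G : (F → U) → ℝ) :
    ∫ ω, G (fun p => v p ω) ∂P
      = ∑ c : F → U, (∏ p, (P (v p ⁻¹' {c p})).toReal) * G c := by
  have hA : ∀ c : F → U, MeasurableSet {ω | (fun p => v p ω) = c} := by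
    intro c
    have : {ω | (fun p => v p ω) = c} = ⋂ p, v p ⁻¹' {c p} := by
      ext ω
      simp [funext_iff]
    rw [this]
    exact MeasurableSet.iInter fun p => (hvmeas p) (measurableSet_singleton (c p))
  have hpt : (fun ω => G (fun p => v p ω))
      = fun ω => ∑ c : F → U, Set.indicator {ω' | (fun p => v p ω') = c} (fun _ => G c) ω := by
    funext ω
    rw [Finset.sum_congr rfl (fun c _ => Set.indicator_apply _ _ _)]
    simp only [Set.mem_setOf_eq]
    rw [Finset.sum_ite_eq]
    simp
  rw [hpt, integral_finset_sum _ (fun c _ => (integrable_const (G c)).indicator (hA c))]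
  apply Finset.sum_congr rfl
  intro c _
  rw [integral_indicator_const _ (hA c)]
  rw [smul_eq_mul]
  congr 1
  have hset : {ω' | (fun p => v p ω') = c} = ⋂ p ∈ (univ : Finset F), v p ⁻¹' {c p} := by
    ext ω; simp [funext_iff]
  rw [hset, measureReal_def, (iIndepFun_iff_measure_inter_preimage_eq_mul.1 hvindep) univ
      (fun p _ => measurableSet_singleton (c p)), ENNReal.toReal_prod]

end aux

lemma sum_sigma_univ {K : ℕ} {N : Fin K → ℕ} (g : (Σ k : Fin K, Fin (N k)) → ℝ) :
    ∑ p : Σ k : Fin K, Fin (N k), g p = ∑ k, ∑ j, g ⟨k, j⟩ := by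
  rw [← Finset.univ_sigma_univ, Finset.sum_sigma]

lemma core_k {U : Type*} [Fintype U] {K : ℕ} {N : Fin K → ℕ}
    (w : (Σ k : Fin K, Fin (N k)) → U → ℝ)
    (hw0 : ∀ p u, 0 ≤ w p u) (hw1 : ∀ p, ∑ u, w p u = 1)
    (k : Fin K) (G : (Σ k : Fin K, Fin (N k)) → U → ℝ) :
    ∑ c : (Σ k : Fin K, Fin (N k)) → U,
        Wt w c * |∑ j, (G ⟨k, j⟩ (c ⟨k, j⟩) - ∑ u, w ⟨k, j⟩ u * G ⟨k, j⟩ u)|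
      ≤ Real.sqrt (∑ j, ∑ u, w ⟨k, j⟩ u * (G ⟨k, j⟩ u) ^ 2) := by
  classical
  set f : (Σ k : Fin K, Fin (N k)) → U → ℝ :=
    fun p u => if p.1 = k then G p u else 0 with hf
  have hm : ∀ p, (∑ u, w p u * f p u) = if p.1 = k then ∑ u, w p u * G p u else 0 := by
    intro p
    by_cases hp : p.1 = k <;> simp [hf, hp]
  have hcollapse : ∀ h : (Σ k : Fin K, Fin (N k)) → ℝ,
      (∑ p : Σ k : Fin K, Fin (N k), if p.1 = k then h p else 0) = ∑ j, h ⟨k, j⟩ := by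
    intro h
    rw [sum_sigma_univ (fun p => if p.1 = k then h p else 0)]
    have : ∀ k' : Fin K, (∑ j : Fin (N k'), if k' = k then h ⟨k', j⟩ else 0)
        = if k' = k then ∑ j : Fin (N k'), h ⟨k', j⟩ else 0 := by
      intro k'; by_cases hk : k' = k <;> simp [hk]
    simp only [this]
    rw [Finset.sum_ite_eq' univ k (fun k' => ∑ j : Fin (N k'), h ⟨k', j⟩)]
    simp
  have hZ : ∀ c : (Σ k : Fin K, Fin (N k)) → U,
      (∑ p : Σ k : Fin K, Fin (N k), (f p (c p) - ∑ u, w p u * f p u))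
        = ∑ j, (G ⟨k, j⟩ (c ⟨k, j⟩) - ∑ u, w ⟨k, j⟩ u * G ⟨k, j⟩ u) := by
    intro c
    have : ∀ p : Σ k : Fin K, Fin (N k), f p (c p) - (∑ u, w p u * f p u)
        = if p.1 = k then G p (c p) - ∑ u, w p u * G p u else 0 := by
      intro p
      rw [hm p]
      by_cases hp : p.1 = k <;> simp [hf, hp]
    simp only [this]
    exact hcollapse _
  have hR : (∑ p : Σ k : Fin K, Fin (N k), ∑ u, w p u * (f p u) ^ 2)
      = ∑ j, ∑ u, w ⟨k, j⟩ u * (G ⟨k, j⟩ u) ^ 2 := by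
    have : ∀ p : Σ k : Fin K, Fin (N k), (∑ u, w p u * (f p u) ^ 2)
        = if p.1 = k then ∑ u, w p u * (G p u) ^ 2 else 0 := by
      intro p
      by_cases hp : p.1 = k <;> simp [hf, hp]
    simp only [this]
    exact hcollapse _
  have h1 := core_lemma w hw0 hw1 f
  simp only [hZ] at h1
  rw [hR] at h1
  exact h1

/-- empirical action distribution determined by a configuration -/
noncomputable def hatnu {U : Type*} [Fintype U] [DecidableEq U] {K : ℕ} {N : Fin K → ℕ}
    (Npop : ℝ) (c : (Σ k : Fin K, Fin (N k)) → U) : U × Fin K → ℝ :=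
  fun q => (∑ j, if c ⟨q.2, j⟩ = q.1 then (1 : ℝ) else 0) / Npop

theorem stmt7 {Ω : Type*} [MeasurableSpace Ω] (P : Measure Ω) [IsProbabilityMeasure P]
    {X U : Type*} [Fintype X] [Fintype U] [Nonempty X] [Nonempty U]
    [DecidableEq X] [DecidableEq U]
    [MeasurableSpace U] [MeasurableSingletonClass U]
    (K : ℕ) (hK : 0 < K) (N : Fin K → ℕ) (hN : ∀ k, 0 < N k)
    (Npop : ℝ) (hNpop : Npop = ∑ k, (N k : ℝ))
    (MR LR : ℝ) (hMR : 0 ≤ MR) (hLR : 0 ≤ LR)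
    -- fixed states and their empirical joint distribution
    (x : (k : Fin K) → Fin (N k) → X)
    (μN : X × Fin K → ℝ)
    (hμN : ∀ x0 k, μN (x0, k) = (∑ j, if x k j = x0 then (1 : ℝ) else 0) / Npop)
    -- decision rules
    (pi : Fin K → X → (X × Fin K → ℝ) → U → ℝ)
    (hpiProb : ∀ k x0 μ, IsProb μ → IsProb (pi k x0 μ))
    -- the random actions: independent, with law `pi k (x k j) μN`
    (u : (k : Fin K) → Fin (N k) → Ω → U)
    (hmeas : ∀ k j, Measurable (u k j))
    (hulaw : ∀ k j u0, (P {ω | u k j ω = u0}).toReal = pi k (x k j) μN u0)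
    (hindep : iIndepFun
      (fun p : Σ k : Fin K, Fin (N k) => u p.1 p.2) P)
    -- reward functions
    (r : Fin K → X → U → (X × Fin K → ℝ) → (U × Fin K → ℝ) → ℝ)
    (hrBdd : ∀ k x0 u0 μ ν, IsProb μ → IsProb ν → |r k x0 u0 μ ν| ≤ MR)
    (hrLip : ∀ k x0 u0 μ ν₁ ν₂, IsProb μ → IsProb ν₁ → IsProb ν₂ →
      |r k x0 u0 μ ν₁ - r k x0 u0 μ ν₂| ≤ LR * l1 ν₁ ν₂)
    -- random empirical action distribution
    (νN : Ω → U × Fin K → ℝ)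
    (hνN : ∀ ω u0 k, νN ω (u0, k) = (∑ j, if u k j ω = u0 then (1 : ℝ) else 0) / Npop)
    -- mean-field action distribution and reward
    (νMF : U × Fin K → ℝ)
    (hνMF : ∀ u0 k, νMF (u0, k) = ∑ x0, pi k x0 μN u0 * μN (x0, k))
    (rMF : Fin K → ℝ)
    (hrMF : ∀ k, rMF k = ∑ x0, ∑ u0, μN (x0, k) * pi k x0 μN u0 * r k x0 u0 μN νMF) :
    ∫ ω, |(1 / Npop) * ∑ k, ∑ j, r k (x k j) (u k j ω) μN (νN ω) - ∑ k, rMF k| ∂P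
      ≤ (MR + LR) * Real.sqrt (Fintype.card U) * ((1 / Npop) * ∑ k, Real.sqrt (N k)) := by
  classical
  have hFinK : Nonempty (Fin K) := ⟨⟨0, hK⟩⟩
  have hNpos : (0 : ℝ) < Npop := by
    rw [hNpop]
    apply Finset.sum_pos (fun k _ => by exact_mod_cast hN k) Finset.univ_nonempty
  have hNne : Npop ≠ 0 := ne_of_gt hNpos
  -- μN is a probability distribution
  have hμNprob : IsProb μN := by
    constructor
    · rintro ⟨x0, k⟩
      rw [hμN]
      apply div_nonneg _ hNpos.le
      exact Finset.sum_nonneg fun j _ => by positivity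
    · rw [Fintype.sum_prod_type, Finset.sum_comm]
      have : ∀ k : Fin K, ∑ x0 : X, μN (x0, k) = (N k : ℝ) / Npop := by
        intro k
        simp_rw [hμN, ← Finset.sum_div]
        rw [Finset.sum_comm]
        simp [Finset.sum_ite_eq]
      simp_rw [this, ← Finset.sum_div, ← hNpop, div_self hNne]
  -- key summation identity for μN
  have musum : ∀ (k : Fin K) (φ : X → ℝ),
      ∑ x0, φ x0 * μN (x0, k) = (∑ j, φ (x k j)) / Npop := by
    intro k φ
    simp_rw [hμN, ← mul_div_assoc, ← Finset.sum_div, Finset.mul_sum, mul_ite, mul_one, mul_zero]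
    rw [Finset.sum_comm]
    congr 1
    apply Finset.sum_congr rfl
    intro j _
    rw [Finset.sum_ite_eq univ (x k j) φ]
    simp
  -- the individual action distributions
  set w : (Σ k : Fin K, Fin (N k)) → U → ℝ :=
    fun p => pi p.1 (x p.1 p.2) μN with hw
  have hw0 : ∀ p u0, 0 ≤ w p u0 := fun p u0 =>
    (hpiProb p.1 (x p.1 p.2) μN hμNprob).1 u0
  have hw1 : ∀ p, ∑ u0, w p u0 = 1 := fun p =>
    (hpiProb p.1 (x p.1 p.2) μN hμNprob).2
  -- νMF in terms of w
  have hνMF' : ∀ u0 k, νMF (u0, k) = (∑ j, w ⟨k, j⟩ u0) / Npop := by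
    intro u0 k
    rw [hνMF, musum k (fun x0 => pi k x0 μN u0)]
  have hνMFprob : IsProb νMF := by
    constructor
    · rintro ⟨u0, k⟩
      rw [hνMF]
      exact Finset.sum_nonneg fun x0 _ =>
        mul_nonneg ((hpiProb k x0 μN hμNprob).1 u0) (hμNprob.1 (x0, k))
    · rw [Fintype.sum_prod_type, Finset.sum_comm]
      have : ∀ k : Fin K, ∑ u0 : U, νMF (u0, k) = (N k : ℝ) / Npop := by
        intro k
        simp_rw [hνMF' _ k, ← Finset.sum_div]
        rw [Finset.sum_comm]
        simp_rw [hw1]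
        simp
      simp_rw [this, ← Finset.sum_div, ← hNpop, div_self hNne]
  -- rMF in terms of w
  have hrMF' : ∀ k, ∑ j, ∑ u0, w ⟨k, j⟩ u0 * r k (x k j) u0 μN νMF = Npop * rMF k := by
    intro k
    rw [hrMF]
    have : ∀ x0 : X, (∑ u0, μN (x0, k) * pi k x0 μN u0 * r k x0 u0 μN νMF)
        = (∑ u0, pi k x0 μN u0 * r k x0 u0 μN νMF) * μN (x0, k) := by
      intro x0
      rw [Finset.sum_mul]
      exact Finset.sum_congr rfl fun u0 _ => by ring
    simp_rw [this]
    rw [musum k (fun x0 => ∑ u0, pi k x0 μN u0 * r k x0 u0 μN νMF),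
      mul_div_cancel₀ _ hNne]
  -- empirical action distributions are probabilities
  have hatprob : ∀ c : (Σ k : Fin K, Fin (N k)) → U, IsProb (hatnu Npop c) := by
    intro c
    constructor
    · rintro ⟨u0, k⟩
      exact div_nonneg (Finset.sum_nonneg fun j _ => by positivity) hNpos.le
    · rw [Fintype.sum_prod_type, Finset.sum_comm]
      have : ∀ k : Fin K, ∑ u0 : U, hatnu Npop c (u0, k) = (N k : ℝ) / Npop := by
        intro k
        simp_rw [hatnu, ← Finset.sum_div]
        show (∑ u0 : U, ∑ j : Fin (N k), if c ⟨k, j⟩ = u0 then (1:ℝ) else 0) / Npop = _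
        rw [Finset.sum_comm]
        simp [Finset.sum_ite_eq]
      simp_rw [this, ← Finset.sum_div, ← hNpop, div_self hNne]
  -- first application of the concentration lemma
  have app1 : ∀ (k : Fin K) (u0 : U),
      ∑ c : (Σ k : Fin K, Fin (N k)) → U,
          Wt w c * |∑ j, ((if c ⟨k, j⟩ = u0 then (1:ℝ) else 0) - w ⟨k, j⟩ u0)|
        ≤ Real.sqrt (∑ j, w ⟨k, j⟩ u0) := by
    intro k u0
    have h := core_k w hw0 hw1 k (fun _ u1 => if u1 = u0 then (1:ℝ) else 0)
    simpa using h
  -- second application of the concentration lemma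
  have app2 : ∀ k : Fin K,
      ∑ c : (Σ k : Fin K, Fin (N k)) → U,
          Wt w c * |∑ j, (r k (x k j) (c ⟨k, j⟩) μN νMF
            - ∑ u0, w ⟨k, j⟩ u0 * r k (x k j) u0 μN νMF)|
        ≤ MR * Real.sqrt (N k) := by
    intro k
    have h := core_k w hw0 hw1 k (fun p u1 => r p.1 (x p.1 p.2) u1 μN νMF)
    refine le_trans h ?_
    have hb : ∀ j : Fin (N k), (∑ u0, w ⟨k, j⟩ u0 * (r k (x k j) u0 μN νMF) ^ 2) ≤ MR ^ 2 := by
      intro j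
      calc ∑ u0, w ⟨k, j⟩ u0 * (r k (x k j) u0 μN νMF) ^ 2
          ≤ ∑ u0, w ⟨k, j⟩ u0 * MR ^ 2 := by
            refine Finset.sum_le_sum fun u0 _ => ?_
            apply mul_le_mul_of_nonneg_left _ (hw0 _ u0)
            calc (r k (x k j) u0 μN νMF) ^ 2 = |r k (x k j) u0 μN νMF| ^ 2 := (sq_abs _).symm
              _ ≤ MR ^ 2 :=
                pow_le_pow_left₀ (abs_nonneg _) (hrBdd k (x k j) u0 μN νMF hμNprob hνMFprob) 2
        _ = MR ^ 2 := by rw [← Finset.sum_mul, hw1, one_mul]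
    calc Real.sqrt (∑ j, ∑ u0, w ⟨k, j⟩ u0 * (r k (x k j) u0 μN νMF) ^ 2)
        ≤ Real.sqrt (∑ _j : Fin (N k), MR ^ 2) :=
          Real.sqrt_le_sqrt (Finset.sum_le_sum fun j _ => hb j)
      _ = MR * Real.sqrt (N k) := by
          rw [Finset.sum_const, Finset.card_univ, Fintype.card_fin, nsmul_eq_mul,
            Real.sqrt_mul (Nat.cast_nonneg _), Real.sqrt_sq hMR]
          ring
  -- the integrand as a function of the configuration
  set Gc : ((Σ k : Fin K, Fin (N k)) → U) → ℝ :=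
    fun c => |(1 / Npop) * ∑ k, ∑ j, r k (x k j) (c ⟨k, j⟩) μN (hatnu Npop c) - ∑ k, rMF k|
    with hGc
  -- pointwise decomposition bound
  have hpoint : ∀ c : (Σ k : Fin K, Fin (N k)) → U,
      Gc c ≤ LR * l1 (hatnu Npop c) νMF
        + ∑ k, |∑ j, (r k (x k j) (c ⟨k, j⟩) μN νMF
            - ∑ u0, w ⟨k, j⟩ u0 * r k (x k j) u0 μN νMF)| / Npop := by
    intro c
    simp only [hGc]
    have hsplit : (1 / Npop) * ∑ k, ∑ j, r k (x k j) (c ⟨k, j⟩) μN (hatnu Npop c)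
          - ∑ k, rMF k
        = (1 / Npop) * (∑ k, ∑ j, (r k (x k j) (c ⟨k, j⟩) μN (hatnu Npop c)
            - r k (x k j) (c ⟨k, j⟩) μN νMF))
          + ∑ k, (∑ j, (r k (x k j) (c ⟨k, j⟩) μN νMF
            - ∑ u0, w ⟨k, j⟩ u0 * r k (x k j) u0 μN νMF)) / Npop := by
      have h1 : ∀ k : Fin K, (∑ j, (r k (x k j) (c ⟨k, j⟩) μN νMF
            - ∑ u0, w ⟨k, j⟩ u0 * r k (x k j) u0 μN νMF)) / Npop
          = (∑ j, r k (x k j) (c ⟨k, j⟩) μN νMF) / Npop - rMF k := by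
        intro k
        rw [Finset.sum_sub_distrib, hrMF' k, sub_div, mul_div_cancel_left₀ _ hNne]
      simp_rw [h1, Finset.sum_sub_distrib, ← Finset.sum_div]
      field_simp
      ring
    rw [hsplit]
    refine le_trans (abs_add_le _ _) (add_le_add ?_ ?_)
    · have hd : ∀ (k : Fin K) (j : Fin (N k)),
          |r k (x k j) (c ⟨k, j⟩) μN (hatnu Npop c) - r k (x k j) (c ⟨k, j⟩) μN νMF|
            ≤ LR * l1 (hatnu Npop c) νMF := fun k j =>
        hrLip k (x k j) (c ⟨k, j⟩) μN _ _ hμNprob (hatprob c) hνMFprob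
      calc |(1 / Npop) * (∑ k, ∑ j, (r k (x k j) (c ⟨k, j⟩) μN (hatnu Npop c)
              - r k (x k j) (c ⟨k, j⟩) μN νMF))|
          = (1 / Npop) * |∑ k, ∑ j, (r k (x k j) (c ⟨k, j⟩) μN (hatnu Npop c)
              - r k (x k j) (c ⟨k, j⟩) μN νMF)| := by
            rw [abs_mul, abs_of_pos (by positivity)]
        _ ≤ (1 / Npop) * ∑ k, ∑ _j : Fin (N k), (LR * l1 (hatnu Npop c) νMF) := by
            apply mul_le_mul_of_nonneg_left _ (by positivity)
            refine le_trans (Finset.abs_sum_le_sum_abs _ _)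
              (Finset.sum_le_sum fun k _ => le_trans (Finset.abs_sum_le_sum_abs _ _)
                (Finset.sum_le_sum fun j _ => hd k j))
        _ = LR * l1 (hatnu Npop c) νMF := by
            simp_rw [Finset.sum_const, Finset.card_univ, Fintype.card_fin, nsmul_eq_mul]
            rw [← Finset.sum_mul, ← hNpop, ← mul_assoc, one_div, inv_mul_cancel₀ hNne,
              one_mul]
    · refine le_trans (Finset.abs_sum_le_sum_abs _ _)
        (Finset.sum_le_sum fun k _ => ?_)
      rw [abs_div, abs_of_pos hNpos]
  -- expected L1 distance bound
  have term1 : ∑ c : (Σ k : Fin K, Fin (N k)) → U, Wt w c * l1 (hatnu Npop c) νMF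
      ≤ (∑ k, Real.sqrt (Fintype.card U) * Real.sqrt (N k)) / Npop := by
    have hl1 : ∀ c : (Σ k : Fin K, Fin (N k)) → U, l1 (hatnu Npop c) νMF
        = ∑ k, ∑ u0, |∑ j, ((if c ⟨k, j⟩ = u0 then (1:ℝ) else 0) - w ⟨k, j⟩ u0)| / Npop := by
      intro c
      rw [l1, Fintype.sum_prod_type, Finset.sum_comm]
      refine Finset.sum_congr rfl fun k _ => Finset.sum_congr rfl fun u0 _ => ?_
      rw [show hatnu Npop c (u0, k)
          = (∑ j, if c ⟨k, j⟩ = u0 then (1:ℝ) else 0) / Npop from rfl,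
        hνMF' u0 k, div_sub_div_same, ← Finset.sum_sub_distrib, abs_div, abs_of_pos hNpos]
    simp_rw [hl1]
    calc ∑ c : (Σ k : Fin K, Fin (N k)) → U, Wt w c *
            ∑ k, ∑ u0, |∑ j, ((if c ⟨k, j⟩ = u0 then (1:ℝ) else 0) - w ⟨k, j⟩ u0)| / Npop
        = ∑ k, ∑ u0, (∑ c : (Σ k : Fin K, Fin (N k)) → U,
            Wt w c * |∑ j, ((if c ⟨k, j⟩ = u0 then (1:ℝ) else 0) - w ⟨k, j⟩ u0)|) / Npop := by
          simp_rw [Finset.mul_sum]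
          rw [Finset.sum_comm]
          refine Finset.sum_congr rfl fun k _ => ?_
          rw [Finset.sum_comm]
          refine Finset.sum_congr rfl fun u0 _ => ?_
          simp_rw [← mul_div_assoc]
          rw [← Finset.sum_div]
      _ ≤ ∑ k, ∑ u0, Real.sqrt (∑ j, w ⟨k, j⟩ u0) / Npop := by
          refine Finset.sum_le_sum fun k _ => Finset.sum_le_sum fun u0 _ => ?_
          gcongr
          exact app1 k u0
      _ ≤ ∑ k, Real.sqrt (Fintype.card U) * Real.sqrt (N k) / Npop := by
          refine Finset.sum_le_sum fun k _ => ?_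
          rw [← Finset.sum_div]
          gcongr
          calc ∑ u0, Real.sqrt (∑ j, w ⟨k, j⟩ u0)
              ≤ Real.sqrt (Fintype.card U) * Real.sqrt (∑ u0, ∑ j, w ⟨k, j⟩ u0) :=
                sum_sqrt_le _ (fun u0 => Finset.sum_nonneg fun j _ => hw0 _ u0)
            _ = Real.sqrt (Fintype.card U) * Real.sqrt (N k) := by
                rw [Finset.sum_comm]
                simp_rw [hw1]
                simp
      _ = (∑ k, Real.sqrt (Fintype.card U) * Real.sqrt (N k)) / Npop := by
          rw [Finset.sum_div]
  -- the main finite-sum bound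
  have hmain : ∑ c : (Σ k : Fin K, Fin (N k)) → U, Wt w c * Gc c
      ≤ (MR + LR) * Real.sqrt (Fintype.card U) * ((1 / Npop) * ∑ k, Real.sqrt (N k)) := by
    have hQ1 : 1 ≤ Real.sqrt (Fintype.card U) := by
      have h1 : (1:ℝ) ≤ (Fintype.card U : ℝ) := by exact_mod_cast Fintype.card_pos (α := U)
      calc (1:ℝ) = Real.sqrt 1 := Real.sqrt_one.symm
        _ ≤ _ := Real.sqrt_le_sqrt h1
    have hS : 0 ≤ ∑ k, Real.sqrt (N k) :=
      Finset.sum_nonneg fun k _ => Real.sqrt_nonneg _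
    calc ∑ c : (Σ k : Fin K, Fin (N k)) → U, Wt w c * Gc c
        ≤ ∑ c : (Σ k : Fin K, Fin (N k)) → U, Wt w c * (LR * l1 (hatnu Npop c) νMF
            + ∑ k, |∑ j, (r k (x k j) (c ⟨k, j⟩) μN νMF
              - ∑ u0, w ⟨k, j⟩ u0 * r k (x k j) u0 μN νMF)| / Npop) :=
          Finset.sum_le_sum fun c _ =>
            mul_le_mul_of_nonneg_left (hpoint c) (Wt_nonneg w hw0 c)
      _ = LR * (∑ c : (Σ k : Fin K, Fin (N k)) → U, Wt w c * l1 (hatnu Npop c) νMF)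
          + ∑ k, (∑ c : (Σ k : Fin K, Fin (N k)) → U,
              Wt w c * |∑ j, (r k (x k j) (c ⟨k, j⟩) μN νMF
                - ∑ u0, w ⟨k, j⟩ u0 * r k (x k j) u0 μN νMF)|) / Npop := by
          simp_rw [mul_add, Finset.sum_add_distrib]
          congr 1
          · rw [Finset.mul_sum]
            exact Finset.sum_congr rfl fun c _ => by ring
          · simp_rw [Finset.mul_sum]
            rw [Finset.sum_comm]
            refine Finset.sum_congr rfl fun k _ => ?_
            simp_rw [← mul_div_assoc]
            rw [← Finset.sum_div]
      _ ≤ LR * ((∑ k, Real.sqrt (Fintype.card U) * Real.sqrt (N k)) / Npop)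
          + ∑ k, (MR * Real.sqrt (N k)) / Npop := by
          refine add_le_add (mul_le_mul_of_nonneg_left term1 hLR)
            (Finset.sum_le_sum fun k _ => ?_)
          gcongr
          exact app2 k
      _ = (LR * Real.sqrt (Fintype.card U) * (∑ k, Real.sqrt (N k))
            + MR * (∑ k, Real.sqrt (N k))) * (1 / Npop) := by
          rw [← Finset.mul_sum, ← Finset.sum_div, ← Finset.mul_sum]
          field_simp
      _ ≤ ((MR + LR) * Real.sqrt (Fintype.card U) * (∑ k, Real.sqrt (N k))) * (1 / Npop) := by
          apply mul_le_mul_of_nonneg_right _ (by positivity)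
          nlinarith [mul_nonneg (mul_nonneg hMR (sub_nonneg.2 hQ1)) hS]
      _ = (MR + LR) * Real.sqrt (Fintype.card U) * ((1 / Npop) * ∑ k, Real.sqrt (N k)) := by
          ring
  -- rewrite the integral as the finite sum
  have hν : ∀ ω, νN ω = hatnu Npop (fun p : Σ k : Fin K, Fin (N k) => u p.1 p.2 ω) := by
    intro ω
    funext q
    obtain ⟨u0, k⟩ := q
    rw [hνN]
    rfl
  have hint : (fun ω => |(1 / Npop) * ∑ k, ∑ j, r k (x k j) (u k j ω) μN (νN ω) - ∑ k, rMF k|)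
      = fun ω => Gc (fun p : Σ k : Fin K, Fin (N k) => u p.1 p.2 ω) := by
    funext ω
    rw [hν ω]
  rw [show (∫ ω, |(1 / Npop) * ∑ k, ∑ j, r k (x k j) (u k j ω) μN (νN ω) - ∑ k, rMF k| ∂P)
      = ∫ ω, Gc (fun p : Σ k : Fin K, Fin (N k) => u p.1 p.2 ω) ∂P from by rw [hint]]
  refine le_trans (le_of_eq (integral_eq_sum P
    (fun p : Σ k : Fin K, Fin (N k) => u p.1 p.2) (fun p => hmeas p.1 p.2) hindep Gc)) ?_
  refine le_trans (le_of_eq (Finset.sum_congr rfl fun c _ => ?_)) hmain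
  congr 1
  exact Finset.prod_congr rfl fun p _ => hulaw p.1 p.2 (c p)
end

section
/- Let X and U be finite nonempty sets, K a positive integer, N_1,...,N_K positive integers with N_pop = Σ_k N_k, and L_P ≥ 0. Fix states x_{j,k} ∈ X for j ∈ [N_k], k ∈ [K], with empirical distribution μ^N(x,k) = (1/N_pop)·Σ_j 1{x_{j,k} = x}. Let π = (π_k)_{k∈[K]} be decision rules π_k : X × P(X×[K]) → P(U), let (u_{j,k})_{j,k} be mutually independent U-valued random variables with u_{j,k} ~ π_k(x_{j,k}, μ^N), and let ν^N(u,k) = (1/N_pop)·Σ_j 1{u_{j,k} = u}. Let P_k : X × U × P(X×[K]) × P(U×[K]) → P(X) satisfy |P_k(x,u,μ,ν₁) − P_k(x,u,μ,ν₂)|₁ ≤ L_P·|ν₁ − ν₂|₁ for all arguments, and let (x'_{j,k})_{j,k} be X-valued random variables that, conditionally on (u_{j,k})_{j,k}, are mutually independent with conditional law of x'_{j,k} equal to P_k(x_{j,k}, u_{j,k}, μ^N, ν^N). Let μ'^N(x,k) = (1/N_pop)·Σ_j 1{x'_{j,k} = x} and define ν^MF(μ^N,π)(u,k) = Σ_x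 π_k(x,μ^N)(u)·μ^N(x,k) and P^MF(μ^N,π)(x',k) = Σ_{x,u} μ^N(x,k)·π_k(x,μ^N)(u)·P_k(x,u,μ^N,ν^MF(μ^N,π))(x'). Then E[ |μ'^N − P^MF(μ^N,π)|₁ ] ≤ (2 + L_P)·√(|X|·|U|)·(1/N_pop)·Σ_{k∈[K]} √N_k. -/
open MeasureTheory ProbabilityTheory Finset

lemma l1_triangle {A : Type*} [Fintype A] (f g h : A → ℝ) :
    l1 f h ≤ l1 f g + l1 g h := by
  rw [l1, l1, l1, ← Finset.sum_add_distrib]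
  exact Finset.sum_le_sum fun a _ => abs_sub_le _ _ _

lemma group_sum {X : Type*} [Fintype X] [DecidableEq X] {n : ℕ} (y : Fin n → X) (g : X → ℝ) :
    ∑ x0, (∑ j, if y j = x0 then (1:ℝ) else 0) * g x0 = ∑ j, g (y j) := by
  simp_rw [Finset.sum_mul]
  rw [Finset.sum_comm]
  refine Finset.sum_congr rfl fun j _ => ?_
  rw [Finset.sum_congr rfl (fun x0 _ => show (if y j = x0 then (1:ℝ) else 0) * g x0
    = if y j = x0 then g x0 else 0 by split <;> simp)]
  rw [Finset.sum_ite_eq Finset.univ (y j) g]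
  simp

lemma sum_mul_ind {X : Type*} [Fintype X] [DecidableEq X] (x1 : X) (q : X → ℝ) :
    ∑ s, q s * (if s = x1 then (1:ℝ) else 0) = q x1 := by
  rw [Finset.sum_congr rfl (fun s _ => show q s * (if s = x1 then (1:ℝ) else 0)
    = if s = x1 then q s else 0 by split <;> simp)]
  rw [Finset.sum_ite_eq' Finset.univ x1 q]
  simp
open Finset

section Core
variable {I S : Type*} [Fintype I] [Fintype S] [DecidableEq I]

lemma my_pisum (q : I → S → ℝ) :
    ∑ a : I → S, ∏ i, q i (a i) = ∏ i, ∑ s, q i s :=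
  (Fintype.prod_sum _).symm

lemma my_exp_mask (p : I → S → ℝ) (r : I → S → ℝ) :
    ∑ a : I → S, (∏ i, p i (a i)) * ∏ i, r i (a i) = ∏ i, ∑ s, p i s * r i s := by
  rw [← my_pisum]
  congr 1; funext a
  rw [← Finset.prod_mul_distrib]

lemma my_exp_single (p : I → S → ℝ) (hp : ∀ i, ∑ s, p i s = 1) (i0 : I) (f : S → ℝ) :
    ∑ a : I → S, (∏ i, p i (a i)) * f (a i0) = ∑ s, p i0 s * f s := by
  have : ∀ a : I → S, (∏ i, p i (a i)) * f (a i0)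
      = (∏ i, p i (a i)) * ∏ i, (if i = i0 then f (a i) else 1) := by
    intro a
    congr 1
    simp
  rw [Finset.sum_congr rfl fun a _ => this a,
    my_exp_mask p (fun i s => if i = i0 then f s else 1)]
  have : ∀ i, (∑ s, p i s * (if i = i0 then f s else 1))
      = if i = i0 then ∑ s, p i0 s * f s else 1 := by
    intro i
    by_cases h : i = i0 <;> simp [h, hp i]
  rw [Finset.prod_congr rfl fun i _ => this i]
  simp

lemma my_exp_pair (p : I → S → ℝ) (hp : ∀ i, ∑ s, p i s = 1) {i0 j0 : I} (hij : i0 ≠ j0)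
    (f g : S → ℝ) :
    ∑ a : I → S, (∏ i, p i (a i)) * (f (a i0) * g (a j0))
      = (∑ s, p i0 s * f s) * (∑ s, p j0 s * g s) := by
  have : ∀ a : I → S, (∏ i, p i (a i)) * (f (a i0) * g (a j0))
      = (∏ i, p i (a i)) * ∏ i, ((if i = i0 then f (a i) else 1) * (if i = j0 then g (a i) else 1)) := by
    intro a
    congr 1
    rw [Finset.prod_mul_distrib]
    simp
  rw [Finset.sum_congr rfl fun a _ => this a,
    my_exp_mask p (fun i s => (if i = i0 then f s else 1) * (if i = j0 then g s else 1))]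
  have : ∀ i, (∑ s, p i s * ((if i = i0 then f s else 1) * (if i = j0 then g s else 1)))
      = (if i = i0 then ∑ s, p i0 s * f s else 1) * (if i = j0 then ∑ s, p j0 s * g s else 1) := by
    intro i
    by_cases h : i = i0
    · subst h
      simp [if_neg hij, hp]
    · by_cases h' : i = j0
      · subst h'
        simp [if_neg (Ne.symm hij), hp]
      · simp [h, h', hp i]
  rw [Finset.prod_congr rfl fun i _ => this i]
  rw [Finset.prod_mul_distrib]
  simp
end Core

section Core2
variable {I S : Type*} [Fintype I] [Fintype S] [DecidableEq I]

lemma my_exp_sq (p : I → S → ℝ) (hp : ∀ i, ∑ s, p i s = 1) (h : I → S → ℝ) (m : I → ℝ)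
    (hm : ∀ i, m i = ∑ s, p i s * h i s) :
    ∑ a : I → S, (∏ i, p i (a i)) * (∑ i, (h i (a i) - m i))^2
      = ∑ i, ∑ s, p i s * (h i s - m i)^2 := by
  have hc : ∀ i, ∑ s, p i s * (h i s - m i) = 0 := by
    intro i
    simp only [mul_sub, Finset.sum_sub_distrib, ← Finset.sum_mul, hp, one_mul]
    rw [← hm i]
    ring
  have key : ∀ a : I → S, (∑ i, (h i (a i) - m i))^2
      = ∑ i, ∑ j, (h i (a i) - m i) * (h j (a j) - m j) := by
    intro a; rw [sq, Finset.sum_mul_sum]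
  calc ∑ a : I → S, (∏ i, p i (a i)) * (∑ i, (h i (a i) - m i))^2
      = ∑ i, ∑ j, ∑ a : I → S, (∏ i', p i' (a i')) * ((h i (a i) - m i) * (h j (a j) - m j)) := by
        simp_rw [key, Finset.mul_sum]
        rw [Finset.sum_comm]
        exact Finset.sum_congr rfl fun i _ => Finset.sum_comm
    _ = ∑ i, ∑ j, if i = j then ∑ s, p i s * (h i s - m i)^2 else 0 := by
        refine Finset.sum_congr rfl fun i _ => Finset.sum_congr rfl fun j _ => ?_
        by_cases hij : i = j
        · subst hij
          rw [if_pos rfl,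
            my_exp_single p hp i (fun s => (h i s - m i) * (h i s - m i))]
          simp [sq]
        · rw [if_neg hij, my_exp_pair p hp hij (fun s => h i s - m i) (fun s => h j s - m j),
            hc i, zero_mul]
    _ = ∑ i, ∑ s, p i s * (h i s - m i)^2 := by simp

lemma my_exp_abs_le (p : I → S → ℝ) (hp : ∀ i, ∑ s, p i s = 1) (hp0 : ∀ i s, 0 ≤ p i s)
    (h : I → S → ℝ) (m : I → ℝ) (hm : ∀ i, m i = ∑ s, p i s * h i s) :
    ∑ a : I → S, (∏ i, p i (a i)) * |∑ i, h i (a i) - ∑ i, m i|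
      ≤ Real.sqrt (∑ i, ∑ s, p i s * (h i s - m i)^2) := by
  set V := ∑ i, ∑ s, p i s * (h i s - m i)^2 with hV
  have hV0 : 0 ≤ V := Finset.sum_nonneg fun i _ => Finset.sum_nonneg fun s _ =>
    mul_nonneg (hp0 i s) (sq_nonneg _)
  have hW0 : ∀ a : I → S, 0 ≤ ∏ i, p i (a i) := fun a =>
    Finset.prod_nonneg fun i _ => hp0 _ _
  have hA0 : 0 ≤ ∑ a : I → S, (∏ i, p i (a i)) * |∑ i, h i (a i) - ∑ i, m i| :=
    Finset.sum_nonneg fun a _ => mul_nonneg (hW0 a) (abs_nonneg _)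
  rw [Real.le_sqrt hA0 hV0]
  have hsumW : ∑ a : I → S, ∏ i, p i (a i) = 1 := by
    rw [my_pisum]
    simp [hp]
  have cs := Finset.sum_mul_sq_le_sq_mul_sq Finset.univ
    (fun a : I → S => Real.sqrt (∏ i, p i (a i)))
    (fun a : I → S => Real.sqrt (∏ i, p i (a i)) * |∑ i, h i (a i) - ∑ i, m i|)
  have e1 : ∀ a : I → S, Real.sqrt (∏ i, p i (a i)) *
      (Real.sqrt (∏ i, p i (a i)) * |∑ i, h i (a i) - ∑ i, m i|)
      = (∏ i, p i (a i)) * |∑ i, h i (a i) - ∑ i, m i| := by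
    intro a
    rw [← mul_assoc, Real.mul_self_sqrt (hW0 a)]
  have e2 : ∀ a : I → S, (Real.sqrt (∏ i, p i (a i)))^2 = ∏ i, p i (a i) := fun a =>
    Real.sq_sqrt (hW0 a)
  have e3 : ∀ a : I → S, (Real.sqrt (∏ i, p i (a i)) * |∑ i, h i (a i) - ∑ i, m i|)^2
      = (∏ i, p i (a i)) * (∑ i, (h i (a i) - m i))^2 := by
    intro a
    rw [mul_pow, Real.sq_sqrt (hW0 a), sq_abs, Finset.sum_sub_distrib]
  simp only [e1, e2, e3] at cs
  calc (∑ a : I → S, (∏ i, p i (a i)) * |∑ i, h i (a i) - ∑ i, m i|)^2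
      ≤ (∑ a : I → S, ∏ i, p i (a i)) *
        ∑ a : I → S, (∏ i, p i (a i)) * (∑ i, (h i (a i) - m i))^2 := cs
    _ = V := by rw [hsumW, one_mul, my_exp_sq p hp h m hm]
end Core2

section Core3
variable {I S T : Type*} [Fintype I] [Fintype S] [Fintype T] [DecidableEq I]

lemma my_var_le_mean (p : S → ℝ) (hp : ∑ s, p s = 1) (hp0 : ∀ s, 0 ≤ p s)
    (h : S → ℝ) (h0 : ∀ s, 0 ≤ h s) (h1 : ∀ s, h s ≤ 1) (m : ℝ)
    (hm : m = ∑ s, p s * h s) :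
    ∑ s, p s * (h s - m)^2 ≤ m := by
  have expand : ∀ s, p s * (h s - m)^2
      = p s * h s^2 - 2 * m * (p s * h s) + m^2 * p s := by intro s; ring
  rw [Finset.sum_congr rfl fun s _ => expand s]
  rw [Finset.sum_add_distrib, Finset.sum_sub_distrib, ← Finset.mul_sum, ← Finset.mul_sum,
    ← hm, hp, mul_one]
  have hsq : ∑ s, p s * h s^2 ≤ m := by
    rw [hm]
    refine Finset.sum_le_sum fun s _ => mul_le_mul_of_nonneg_left ?_ (hp0 s)
    calc h s ^ 2 ≤ h s ^ 1 := pow_le_pow_of_le_one (h0 s) (h1 s) (by norm_num)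
      _ = h s := pow_one _
  nlinarith [sq_nonneg m]

lemma my_conc (p : I → S → ℝ) (hp : ∀ i, ∑ s, p i s = 1) (hp0 : ∀ i s, 0 ≤ p i s)
    (h : T → I → S → ℝ) (m : T → I → ℝ)
    (hm : ∀ t i, m t i = ∑ s, p i s * h t i s)
    (h0 : ∀ t i s, 0 ≤ h t i s) (hsum : ∀ i s, ∑ t, h t i s ≤ 1)
    (act : Finset I) (hact : ∀ t i s, i ∉ act → h t i s = 0) :
    ∑ t, ∑ a : I → S, (∏ i, p i (a i)) * |∑ i, h t i (a i) - ∑ i, m t i|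
      ≤ Real.sqrt ((Fintype.card T : ℝ) * act.card) := by
  classical
  set V : T → ℝ := fun t => ∑ i, ∑ s, p i s * (h t i s - m t i)^2 with hVdef
  have hV0 : ∀ t, 0 ≤ V t := fun t => Finset.sum_nonneg fun i _ =>
    Finset.sum_nonneg fun s _ => mul_nonneg (hp0 i s) (sq_nonneg _)
  have step1 : ∑ t, ∑ a : I → S, (∏ i, p i (a i)) * |∑ i, h t i (a i) - ∑ i, m t i|
      ≤ ∑ t, Real.sqrt (V t) :=
    Finset.sum_le_sum fun t _ => my_exp_abs_le p hp hp0 (h t) (m t) (hm t)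
  have h1 : ∀ t i s, h t i s ≤ 1 := by
    intro t i s
    calc h t i s ≤ ∑ t', h t' i s :=
          Finset.single_le_sum (fun t' _ => h0 t' i s) (Finset.mem_univ t)
      _ ≤ 1 := hsum i s
  have hm0 : ∀ t i, 0 ≤ m t i := fun t i => (hm t i) ▸
    Finset.sum_nonneg fun s _ => mul_nonneg (hp0 i s) (h0 t i s)
  have step3 : ∑ t, V t ≤ act.card := by
    have hVm : ∀ t, V t ≤ ∑ i, m t i := by
      intro t
      refine Finset.sum_le_sum fun i _ => ?_
      exact my_var_le_mean (p i) (hp i) (hp0 i) (h t i) (h0 t i) (h1 t i) (m t i) (hm t i)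
    calc ∑ t, V t ≤ ∑ t, ∑ i, m t i := Finset.sum_le_sum fun t _ => hVm t
      _ = ∑ i, ∑ t, m t i := Finset.sum_comm
      _ ≤ ∑ i, (if i ∈ act then (1:ℝ) else 0) := by
          refine Finset.sum_le_sum fun i _ => ?_
          by_cases hi : i ∈ act
          · rw [if_pos hi]
            calc ∑ t, m t i = ∑ s, p i s * ∑ t, h t i s := by
                  simp_rw [hm, Finset.mul_sum]
                  exact Finset.sum_comm
              _ ≤ ∑ s, p i s * 1 :=
                  Finset.sum_le_sum fun s _ =>
                    mul_le_mul_of_nonneg_left (hsum i s) (hp0 i s)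
              _ = 1 := by simp [hp i]
          · rw [if_neg hi]
            have : ∀ t, m t i = 0 := by
              intro t
              rw [hm t i]
              simp [hact t i _ hi]
            simp [this]
      _ = act.card := by simp
  have step2 : ∑ t, Real.sqrt (V t) ≤ Real.sqrt ((Fintype.card T : ℝ) * ∑ t, V t) := by
    have hA0 : 0 ≤ ∑ t, Real.sqrt (V t) := Finset.sum_nonneg fun t _ => Real.sqrt_nonneg _
    have hB0 : 0 ≤ (Fintype.card T : ℝ) * ∑ t, V t :=
      mul_nonneg (Nat.cast_nonneg _) (Finset.sum_nonneg fun t _ => hV0 t)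
    rw [Real.le_sqrt hA0 hB0]
    have cs := Finset.sum_mul_sq_le_sq_mul_sq Finset.univ (fun _ : T => (1:ℝ))
      (fun t => Real.sqrt (V t))
    simp only [one_mul, one_pow] at cs
    calc (∑ t, Real.sqrt (V t))^2 ≤ (∑ _t : T, (1:ℝ)) * ∑ t, Real.sqrt (V t)^2 := cs
      _ = (Fintype.card T : ℝ) * ∑ t, V t := by
          congr 1
          · simp
          · exact Finset.sum_congr rfl fun t _ => Real.sq_sqrt (hV0 t)
  calc ∑ t, ∑ a : I → S, (∏ i, p i (a i)) * |∑ i, h t i (a i) - ∑ i, m t i|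
      ≤ ∑ t, Real.sqrt (V t) := step1
    _ ≤ Real.sqrt ((Fintype.card T : ℝ) * ∑ t, V t) := step2
    _ ≤ Real.sqrt ((Fintype.card T : ℝ) * act.card) := by
        apply Real.sqrt_le_sqrt
        exact mul_le_mul_of_nonneg_left step3 (Nat.cast_nonneg _)
end Core3

section Sigma
variable {K : ℕ} {N : Fin K → ℕ}

lemma sigma_mask_sum {M : Type*} [AddCommMonoid M] (k : Fin K)
    (F : (Σ k : Fin K, Fin (N k)) → M) :
    ∑ i : Σ k : Fin K, Fin (N k), (if i.1 = k then F i else 0) = ∑ j, F ⟨k, j⟩ := by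
  rw [← Finset.univ_sigma_univ, Finset.sum_sigma]
  have : ∀ k' : Fin K, ∑ j : Fin (N k'), (if (⟨k', j⟩ : Σ k : Fin K, Fin (N k)).1 = k
      then F ⟨k', j⟩ else 0) = if k' = k then ∑ j : Fin (N k'), F ⟨k', j⟩ else 0 := by
    intro k'
    by_cases h : k' = k <;> simp [h]
  rw [Finset.sum_congr rfl fun k' _ => this k']
  rw [Finset.sum_ite_eq' Finset.univ k (fun k' => ∑ j : Fin (N k'), F ⟨k', j⟩)]
  simp

lemma sigma_filter_card (k : Fin K) :
    (Finset.univ.filter (fun i : Σ k : Fin K, Fin (N k) => i.1 = k)).card = N k := by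
  rw [Finset.card_filter]
  have := sigma_mask_sum (N := N) k (fun _ => (1 : ℕ))
  rw [this]
  simp

lemma sigma_conc {S T : Type*} [Fintype S] [Fintype T]
    (p : (Σ k : Fin K, Fin (N k)) → S → ℝ) (hp : ∀ i, ∑ s, p i s = 1)
    (hp0 : ∀ i s, 0 ≤ p i s)
    (k : Fin K) (g : T → (Σ k : Fin K, Fin (N k)) → S → ℝ)
    (hg0 : ∀ t i s, 0 ≤ g t i s) (hgsum : ∀ i s, ∑ t, g t i s ≤ 1) :
    ∑ t, ∑ a : (Σ k : Fin K, Fin (N k)) → S, (∏ i, p i (a i)) *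
      |(∑ j, g t ⟨k,j⟩ (a ⟨k,j⟩)) - ∑ j, ∑ s, p ⟨k,j⟩ s * g t ⟨k,j⟩ s|
      ≤ Real.sqrt ((Fintype.card T : ℝ) * (N k)) := by
  classical
  have key := my_conc p hp hp0
    (fun t i s => if i.1 = k then g t i s else 0)
    (fun t i => if i.1 = k then ∑ s, p i s * g t i s else 0)
    (by intro t i; by_cases h : i.1 = k <;> simp [h])
    (by intro t i s; by_cases h : i.1 = k <;> simp [h, hg0])
    (by intro i s
        by_cases h : i.1 = k
        · simp only [h, if_true]
          exact hgsum i s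
        · simp [h])
    (Finset.univ.filter (fun i : Σ k : Fin K, Fin (N k) => i.1 = k))
    (by intro t i s hi
        simp only [Finset.mem_filter, Finset.mem_univ, true_and] at hi
        simp [hi])
  rw [sigma_filter_card k] at key
  refine le_trans (le_of_eq ?_) key
  refine Finset.sum_congr rfl fun t _ => Finset.sum_congr rfl fun a _ => ?_
  rw [sigma_mask_sum k (fun i => g t i (a i)),
    sigma_mask_sum k (fun i => ∑ s, p i s * g t i s)]

lemma sigma_prod (f : ∀ k : Fin K, Fin (N k) → ℝ) :
    ∏ k, ∏ j, f k j = ∏ i : Σ k : Fin K, Fin (N k), f i.1 i.2 := by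
  rw [← Finset.univ_sigma_univ, Finset.prod_sigma]

lemma sigma_sum_real (f : ∀ k : Fin K, Fin (N k) → ℝ) :
    ∑ k, ∑ j, f k j = ∑ i : Σ k : Fin K, Fin (N k), f i.1 i.2 := by
  rw [← Finset.univ_sigma_univ, Finset.sum_sigma]

lemma sigma_sum_fun {S : Type*} [Fintype S] (F : (∀ k : Fin K, Fin (N k) → S) → ℝ) :
    ∑ a : ∀ k : Fin K, Fin (N k) → S, F a
      = ∑ a : (Σ k : Fin K, Fin (N k)) → S, F (fun k j => a ⟨k, j⟩) := by
  exact Fintype.sum_equiv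
    (Equiv.piCurry (fun (_ : Fin K) (_ : Fin (N _)) => S)).symm
    F (fun a => F (fun k j => a ⟨k, j⟩)) (fun a => rfl)
end Sigma

theorem comb_main {X U : Type*} [Fintype X] [Fintype U] [Nonempty X] [Nonempty U]
    [DecidableEq X] [DecidableEq U]
    (K : ℕ) (hK : 0 < K) (N : Fin K → ℕ) (hN : ∀ k, 0 < N k)
    (Npop : ℝ) (hNpop : Npop = ∑ k, (N k : ℝ))
    (LP : ℝ) (hLP : 0 ≤ LP)
    (x : (k : Fin K) → Fin (N k) → X)
    (μN : X × Fin K → ℝ)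
    (hμN : ∀ x0 k, μN (x0, k) = (∑ j, if x k j = x0 then (1 : ℝ) else 0) / Npop)
    (pi : Fin K → X → (X × Fin K → ℝ) → U → ℝ)
    (hpiProb : ∀ k x0 μ, IsProb μ → IsProb (pi k x0 μ))
    (Pk : Fin K → X → U → (X × Fin K → ℝ) → (U × Fin K → ℝ) → X → ℝ)
    (hPkProb : ∀ k x0 u0 μ ν, IsProb μ → IsProb ν → IsProb (Pk k x0 u0 μ ν))
    (hPkLip : ∀ k x0 u0 μ ν₁ ν₂, IsProb μ → IsProb ν₁ → IsProb ν₂ →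
      l1 (Pk k x0 u0 μ ν₁) (Pk k x0 u0 μ ν₂) ≤ LP * l1 ν₁ ν₂)
    (νOf : ((k : Fin K) → Fin (N k) → U) → U × Fin K → ℝ)
    (hνOf : ∀ b u0 k, νOf b (u0, k) = (∑ j, if b k j = u0 then (1 : ℝ) else 0) / Npop)
    (μOf : ((k : Fin K) → Fin (N k) → X) → X × Fin K → ℝ)
    (hμOf : ∀ a x0 k, μOf a (x0, k) = (∑ j, if a k j = x0 then (1 : ℝ) else 0) / Npop)
    (νMF : U × Fin K → ℝ)
    (hνMF : ∀ u0 k, νMF (u0, k) = ∑ x0, pi k x0 μN u0 * μN (x0, k))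
    (PMFmu : X × Fin K → ℝ)
    (hPMFmu : ∀ x1 k, PMFmu (x1, k) =
      ∑ x0, ∑ u0, μN (x0, k) * pi k x0 μN u0 * Pk k x0 u0 μN νMF x1) :
    ∑ b : (k : Fin K) → Fin (N k) → U, ∑ a : (k : Fin K) → Fin (N k) → X,
      ((∏ k, ∏ j, pi k (x k j) μN (b k j)) *
        ∏ k, ∏ j, Pk k (x k j) (b k j) μN (νOf b) (a k j)) * l1 (μOf a) PMFmu
      ≤ (2 + LP) * Real.sqrt ((Fintype.card X : ℝ) * Fintype.card U)
        * ((1 / Npop) * ∑ k, Real.sqrt (N k)) := by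
  classical
  have hNpos : 0 < Npop := by
    rw [hNpop]
    exact Finset.sum_pos (fun k _ => by exact_mod_cast hN k) ⟨⟨0, hK⟩, Finset.mem_univ _⟩
  have hNne : Npop ≠ 0 := ne_of_gt hNpos
  -- probability facts
  have hμNP : IsProb μN := by
    constructor
    · intro q
      rw [← Prod.mk.eta (p := q), hμN]
      have : (0:ℝ) ≤ ∑ j, if x q.2 j = q.1 then (1:ℝ) else 0 :=
        Finset.sum_nonneg fun j _ => by split <;> norm_num
      positivity
    · rw [Fintype.sum_prod_type, Finset.sum_comm]
      have : ∀ k : Fin K, ∑ x0, μN (x0, k) = (N k : ℝ) / Npop := by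
        intro k
        simp_rw [hμN]
        rw [← Finset.sum_div]
        congr 1
        have h2 := group_sum (x k) (fun _ => (1:ℝ))
        simp only [mul_one] at h2
        rw [h2]
        simp
      rw [Finset.sum_congr rfl fun k _ => this k, ← Finset.sum_div, ← hNpop, div_self hNne]
  have hνOfP : ∀ b : (k : Fin K) → Fin (N k) → U, IsProb (νOf b) := by
    intro b
    constructor
    · intro q
      rw [← Prod.mk.eta (p := q), hνOf]
      have : (0:ℝ) ≤ ∑ j, if b q.2 j = q.1 then (1:ℝ) else 0 :=
        Finset.sum_nonneg fun j _ => by split <;> norm_num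
      positivity
    · rw [Fintype.sum_prod_type, Finset.sum_comm]
      have : ∀ k : Fin K, ∑ u0, νOf b (u0, k) = (N k : ℝ) / Npop := by
        intro k
        simp_rw [hνOf]
        rw [← Finset.sum_div]
        congr 1
        have h2 := group_sum (b k) (fun _ => (1:ℝ))
        simp only [mul_one] at h2
        rw [h2]
        simp
      rw [Finset.sum_congr rfl fun k _ => this k, ← Finset.sum_div, ← hNpop, div_self hNne]
  have hπ : ∀ k x0, IsProb (pi k x0 μN) := fun k x0 => hpiProb k x0 μN hμNP
  have hνMFP : IsProb νMF := by
    constructor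
    · intro q
      rw [← Prod.mk.eta (p := q), hνMF]
      exact Finset.sum_nonneg fun x0 _ => mul_nonneg ((hπ q.2 x0).1 q.1) (hμNP.1 _)
    · rw [Fintype.sum_prod_type, Finset.sum_comm]
      have : ∀ k : Fin K, ∑ u0, νMF (u0, k) = ∑ x0, μN (x0, k) := by
        intro k
        simp_rw [hνMF]
        rw [Finset.sum_comm]
        refine Finset.sum_congr rfl fun x0 _ => ?_
        rw [← Finset.sum_mul, (hπ k x0).2, one_mul]
      rw [Finset.sum_congr rfl fun k _ => this k]
      have h2 := hμNP.2
      rw [Fintype.sum_prod_type, Finset.sum_comm] at h2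
      exact h2
  have hνMF' : ∀ u0 k, νMF (u0, k) = (∑ j, pi k (x k j) μN u0) / Npop := by
    intro u0 k
    rw [hνMF]
    calc ∑ x0, pi k x0 μN u0 * μN (x0, k)
        = (∑ x0, (∑ j, if x k j = x0 then (1:ℝ) else 0) * pi k x0 μN u0) / Npop := by
          rw [Finset.sum_div]
          refine Finset.sum_congr rfl fun x0 _ => ?_
          rw [hμN]
          ring
      _ = (∑ j, pi k (x k j) μN u0) / Npop := by
          rw [group_sum (x k) (fun x0 => pi k x0 μN u0)]
  have hPMF' : ∀ x1 k, PMFmu (x1, k)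
      = (∑ j, ∑ u0, pi k (x k j) μN u0 * Pk k (x k j) u0 μN νMF x1) / Npop := by
    intro x1 k
    rw [hPMFmu]
    calc ∑ x0, ∑ u0, μN (x0, k) * pi k x0 μN u0 * Pk k x0 u0 μN νMF x1
        = (∑ x0, (∑ j, if x k j = x0 then (1:ℝ) else 0) *
            ∑ u0, pi k x0 μN u0 * Pk k x0 u0 μN νMF x1) / Npop := by
          rw [Finset.sum_div]
          refine Finset.sum_congr rfl fun x0 _ => ?_
          calc ∑ u0, μN (x0, k) * pi k x0 μN u0 * Pk k x0 u0 μN νMF x1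
              = μN (x0, k) * ∑ u0, pi k x0 μN u0 * Pk k x0 u0 μN νMF x1 := by
                rw [Finset.mul_sum]
                exact Finset.sum_congr rfl fun u0 _ => by ring
            _ = (∑ j, if x k j = x0 then (1:ℝ) else 0) *
                (∑ u0, pi k x0 μN u0 * Pk k x0 u0 μN νMF x1) / Npop := by
                rw [hμN]
                ring
      _ = (∑ j, ∑ u0, pi k (x k j) μN u0 * Pk k (x k j) u0 μN νMF x1) / Npop := by
          rw [group_sum (x k) (fun x0 => ∑ u0, pi k x0 μN u0 * Pk k x0 u0 μN νMF x1)]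
  -- local abbreviations
  let Wb : ((k : Fin K) → Fin (N k) → U) → ℝ :=
    fun b => ∏ k, ∏ j, pi k (x k j) μN (b k j)
  let Wa : ((k : Fin K) → Fin (N k) → U) → ((k : Fin K) → Fin (N k) → X) → ℝ :=
    fun b a => ∏ k, ∏ j, Pk k (x k j) (b k j) μN (νOf b) (a k j)
  let Mb : ((k : Fin K) → Fin (N k) → U) → X × Fin K → ℝ :=
    fun b q => (∑ j, Pk q.2 (x q.2 j) (b q.2 j) μN (νOf b) q.1) / Npop
  let Mb' : ((k : Fin K) → Fin (N k) → U) → X × Fin K → ℝ :=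
    fun b q => (∑ j, Pk q.2 (x q.2 j) (b q.2 j) μN νMF q.1) / Npop
  have hWb0 : ∀ b, 0 ≤ Wb b := fun b =>
    Finset.prod_nonneg fun k _ => Finset.prod_nonneg fun j _ => (hπ k (x k j)).1 _
  have hWa0 : ∀ b a, 0 ≤ Wa b a := fun b a =>
    Finset.prod_nonneg fun k _ => Finset.prod_nonneg fun j _ =>
      (hPkProb _ _ _ _ _ hμNP (hνOfP b)).1 _
  have hWbsum : ∑ b, Wb b = 1 := by
    rw [sigma_sum_fun (fun b => Wb b)]
    have h1 : ∀ b : (Σ k : Fin K, Fin (N k)) → U, Wb (fun k j => b ⟨k,j⟩)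
        = ∏ i : Σ k : Fin K, Fin (N k), pi i.1 (x i.1 i.2) μN (b i) :=
      fun b => sigma_prod (fun k j => pi k (x k j) μN (b ⟨k,j⟩))
    rw [Finset.sum_congr rfl fun b _ => h1 b,
      my_pisum (fun (i : Σ k : Fin K, Fin (N k)) (s : U) => pi i.1 (x i.1 i.2) μN s)]
    rw [Finset.prod_congr rfl fun i _ => (hπ i.1 (x i.1 i.2)).2]
    simp
  have hWasum : ∀ b, ∑ a, Wa b a = 1 := by
    intro b
    rw [sigma_sum_fun (fun a => Wa b a)]
    have h1 : ∀ a : (Σ k : Fin K, Fin (N k)) → X, Wa b (fun k j => a ⟨k,j⟩)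
        = ∏ i : Σ k : Fin K, Fin (N k), Pk i.1 (x i.1 i.2) (b i.1 i.2) μN (νOf b) (a i) :=
      fun a => sigma_prod (fun k j => Pk k (x k j) (b k j) μN (νOf b) (a ⟨k,j⟩))
    rw [Finset.sum_congr rfl fun a _ => h1 a,
      my_pisum (fun (i : Σ k : Fin K, Fin (N k)) (s : X) =>
        Pk i.1 (x i.1 i.2) (b i.1 i.2) μN (νOf b) s)]
    rw [Finset.prod_congr rfl fun i _ =>
      (hPkProb i.1 (x i.1 i.2) (b i.1 i.2) μN (νOf b) hμNP (hνOfP b)).2]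
    simp
  have bound1 : ∀ b, ∑ a : (k : Fin K) → Fin (N k) → X, Wa b a * l1 (μOf a) (Mb b)
      ≤ (1/Npop) * ∑ k, Real.sqrt ((Fintype.card X : ℝ) * N k) := by
    intro b
    have hp1 : ∀ i : Σ k : Fin K, Fin (N k),
        ∑ s, Pk i.1 (x i.1 i.2) (b i.1 i.2) μN (νOf b) s = 1 :=
      fun i => (hPkProb _ _ _ _ _ hμNP (hνOfP b)).2
    have hp0 : ∀ (i : Σ k : Fin K, Fin (N k)) (s : X),
        0 ≤ Pk i.1 (x i.1 i.2) (b i.1 i.2) μN (νOf b) s :=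
      fun i s => (hPkProb _ _ _ _ _ hμNP (hνOfP b)).1 s
    calc ∑ a : (k : Fin K) → Fin (N k) → X, Wa b a * l1 (μOf a) (Mb b)
        = ∑ a : (k : Fin K) → Fin (N k) → X, ∑ q : X × Fin K,
            Wa b a * |μOf a q - Mb b q| := by
          simp_rw [l1, Finset.mul_sum]
      _ = ∑ q : X × Fin K, ∑ a : (k : Fin K) → Fin (N k) → X,
            Wa b a * |μOf a q - Mb b q| := Finset.sum_comm
      _ = ∑ x1 : X, ∑ k : Fin K, ∑ a : (k : Fin K) → Fin (N k) → X,
            Wa b a * |μOf a (x1, k) - Mb b (x1, k)| := by rw [Fintype.sum_prod_type]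
      _ = ∑ k : Fin K, ∑ x1 : X, ∑ a : (k : Fin K) → Fin (N k) → X,
            Wa b a * |μOf a (x1, k) - Mb b (x1, k)| := Finset.sum_comm
      _ ≤ ∑ k, (1/Npop) * Real.sqrt ((Fintype.card X : ℝ) * N k) := by
          refine Finset.sum_le_sum fun k _ => ?_
          have key := sigma_conc (N := N)
            (fun (i : Σ k : Fin K, Fin (N k)) (s : X) =>
              Pk i.1 (x i.1 i.2) (b i.1 i.2) μN (νOf b) s)
            hp1 hp0 k
            (fun (x1 : X) (_ : Σ k : Fin K, Fin (N k)) (s : X) => if s = x1 then (1:ℝ) else 0)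
            (fun t i s => by split <;> norm_num)
            (fun i s => by
              rw [Finset.sum_ite_eq Finset.univ s (fun _ => (1:ℝ))]
              simp)
          simp only [sum_mul_ind] at key
          have conv : (∑ x1 : X, ∑ a : (k : Fin K) → Fin (N k) → X,
              Wa b a * |μOf a (x1, k) - Mb b (x1, k)|)
              = (1/Npop) * ∑ x1 : X, ∑ a : (Σ k : Fin K, Fin (N k)) → X,
                (∏ i : Σ k : Fin K, Fin (N k),
                  Pk i.1 (x i.1 i.2) (b i.1 i.2) μN (νOf b) (a i)) *
                |(∑ j, if a ⟨k, j⟩ = x1 then (1:ℝ) else 0)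
                  - ∑ j, Pk k (x k j) (b k j) μN (νOf b) x1| := by
            rw [Finset.mul_sum]
            refine Finset.sum_congr rfl fun x1 _ => ?_
            rw [sigma_sum_fun (fun a => Wa b a * |μOf a (x1, k) - Mb b (x1, k)|),
              Finset.mul_sum]
            refine Finset.sum_congr rfl fun a _ => ?_
            have e1 : Wa b (fun k j => a ⟨k, j⟩)
                = ∏ i : Σ k : Fin K, Fin (N k),
                  Pk i.1 (x i.1 i.2) (b i.1 i.2) μN (νOf b) (a i) :=
              sigma_prod (fun k j => Pk k (x k j) (b k j) μN (νOf b) (a ⟨k, j⟩))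
            have e2 : μOf (fun k j => a ⟨k, j⟩) (x1, k)
                = (∑ j, if a ⟨k, j⟩ = x1 then (1:ℝ) else 0) / Npop := hμOf _ x1 k
            have e3 : Mb b (x1, k) = (∑ j, Pk k (x k j) (b k j) μN (νOf b) x1) / Npop := rfl
            rw [e1, e2, e3, div_sub_div_same, abs_div, abs_of_pos hNpos]
            ring
          rw [conv]
          exact mul_le_mul_of_nonneg_left key (by positivity)
      _ = (1/Npop) * ∑ k, Real.sqrt ((Fintype.card X : ℝ) * N k) := by rw [Finset.mul_sum]
  have hq1 : ∀ i : Σ k : Fin K, Fin (N k), ∑ s, pi i.1 (x i.1 i.2) μN s = 1 :=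
    fun i => (hπ i.1 (x i.1 i.2)).2
  have hq0 : ∀ (i : Σ k : Fin K, Fin (N k)) (s : U), 0 ≤ pi i.1 (x i.1 i.2) μN s :=
    fun i s => (hπ i.1 (x i.1 i.2)).1 s
  have bound2ν : ∑ b : (k : Fin K) → Fin (N k) → U, Wb b * l1 (νOf b) νMF
      ≤ (1/Npop) * ∑ k, Real.sqrt ((Fintype.card U : ℝ) * N k) := by
    calc ∑ b : (k : Fin K) → Fin (N k) → U, Wb b * l1 (νOf b) νMF
        = ∑ b : (k : Fin K) → Fin (N k) → U, ∑ q : U × Fin K,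
            Wb b * |νOf b q - νMF q| := by
          simp_rw [l1, Finset.mul_sum]
      _ = ∑ q : U × Fin K, ∑ b : (k : Fin K) → Fin (N k) → U,
            Wb b * |νOf b q - νMF q| := Finset.sum_comm
      _ = ∑ u0 : U, ∑ k : Fin K, ∑ b : (k : Fin K) → Fin (N k) → U,
            Wb b * |νOf b (u0, k) - νMF (u0, k)| := by rw [Fintype.sum_prod_type]
      _ = ∑ k : Fin K, ∑ u0 : U, ∑ b : (k : Fin K) → Fin (N k) → U,
            Wb b * |νOf b (u0, k) - νMF (u0, k)| := Finset.sum_comm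
      _ ≤ ∑ k, (1/Npop) * Real.sqrt ((Fintype.card U : ℝ) * N k) := by
          refine Finset.sum_le_sum fun k _ => ?_
          have key := sigma_conc (N := N)
            (fun (i : Σ k : Fin K, Fin (N k)) (s : U) => pi i.1 (x i.1 i.2) μN s)
            hq1 hq0 k
            (fun (u0 : U) (_ : Σ k : Fin K, Fin (N k)) (s : U) => if s = u0 then (1:ℝ) else 0)
            (fun t i s => by split <;> norm_num)
            (fun i s => by
              rw [Finset.sum_ite_eq Finset.univ s (fun _ => (1:ℝ))]
              simp)
          simp only [sum_mul_ind] at key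
          have conv : (∑ u0 : U, ∑ b : (k : Fin K) → Fin (N k) → U,
              Wb b * |νOf b (u0, k) - νMF (u0, k)|)
              = (1/Npop) * ∑ u0 : U, ∑ b : (Σ k : Fin K, Fin (N k)) → U,
                (∏ i : Σ k : Fin K, Fin (N k), pi i.1 (x i.1 i.2) μN (b i)) *
                |(∑ j, if b ⟨k, j⟩ = u0 then (1:ℝ) else 0)
                  - ∑ j, pi k (x k j) μN u0| := by
            rw [Finset.mul_sum]
            refine Finset.sum_congr rfl fun u0 _ => ?_
            rw [sigma_sum_fun (fun b => Wb b * |νOf b (u0, k) - νMF (u0, k)|),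
              Finset.mul_sum]
            refine Finset.sum_congr rfl fun b _ => ?_
            have e1 : Wb (fun k j => b ⟨k, j⟩)
                = ∏ i : Σ k : Fin K, Fin (N k), pi i.1 (x i.1 i.2) μN (b i) :=
              sigma_prod (fun k j => pi k (x k j) μN (b ⟨k, j⟩))
            have e2 : νOf (fun k j => b ⟨k, j⟩) (u0, k)
                = (∑ j, if b ⟨k, j⟩ = u0 then (1:ℝ) else 0) / Npop := hνOf _ u0 k
            rw [e1, e2, hνMF' u0 k, div_sub_div_same, abs_div, abs_of_pos hNpos]
            ring
          rw [conv]
          exact mul_le_mul_of_nonneg_left key (by positivity)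
      _ = (1/Npop) * ∑ k, Real.sqrt ((Fintype.card U : ℝ) * N k) := by rw [Finset.mul_sum]
  have bound3 : ∑ b : (k : Fin K) → Fin (N k) → U, Wb b * l1 (Mb' b) PMFmu
      ≤ (1/Npop) * ∑ k, Real.sqrt ((Fintype.card X : ℝ) * N k) := by
    calc ∑ b : (k : Fin K) → Fin (N k) → U, Wb b * l1 (Mb' b) PMFmu
        = ∑ b : (k : Fin K) → Fin (N k) → U, ∑ q : X × Fin K,
            Wb b * |Mb' b q - PMFmu q| := by
          simp_rw [l1, Finset.mul_sum]
      _ = ∑ q : X × Fin K, ∑ b : (k : Fin K) → Fin (N k) → U,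
            Wb b * |Mb' b q - PMFmu q| := Finset.sum_comm
      _ = ∑ x1 : X, ∑ k : Fin K, ∑ b : (k : Fin K) → Fin (N k) → U,
            Wb b * |Mb' b (x1, k) - PMFmu (x1, k)| := by rw [Fintype.sum_prod_type]
      _ = ∑ k : Fin K, ∑ x1 : X, ∑ b : (k : Fin K) → Fin (N k) → U,
            Wb b * |Mb' b (x1, k) - PMFmu (x1, k)| := Finset.sum_comm
      _ ≤ ∑ k, (1/Npop) * Real.sqrt ((Fintype.card X : ℝ) * N k) := by
          refine Finset.sum_le_sum fun k _ => ?_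
          have key := sigma_conc (N := N)
            (fun (i : Σ k : Fin K, Fin (N k)) (s : U) => pi i.1 (x i.1 i.2) μN s)
            hq1 hq0 k
            (fun (x1 : X) (i : Σ k : Fin K, Fin (N k)) (u0 : U) =>
              Pk i.1 (x i.1 i.2) u0 μN νMF x1)
            (fun t i s => (hPkProb i.1 (x i.1 i.2) s μN νMF hμNP hνMFP).1 t)
            (fun i s => le_of_eq (hPkProb i.1 (x i.1 i.2) s μN νMF hμNP hνMFP).2)
          have conv : (∑ x1 : X, ∑ b : (k : Fin K) → Fin (N k) → U,
              Wb b * |Mb' b (x1, k) - PMFmu (x1, k)|)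
              = (1/Npop) * ∑ x1 : X, ∑ b : (Σ k : Fin K, Fin (N k)) → U,
                (∏ i : Σ k : Fin K, Fin (N k), pi i.1 (x i.1 i.2) μN (b i)) *
                |(∑ j, Pk k (x k j) (b ⟨k, j⟩) μN νMF x1)
                  - ∑ j, ∑ u0, pi k (x k j) μN u0 * Pk k (x k j) u0 μN νMF x1| := by
            rw [Finset.mul_sum]
            refine Finset.sum_congr rfl fun x1 _ => ?_
            rw [sigma_sum_fun (fun b => Wb b * |Mb' b (x1, k) - PMFmu (x1, k)|),
              Finset.mul_sum]
            refine Finset.sum_congr rfl fun b _ => ?_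
            have e1 : Wb (fun k j => b ⟨k, j⟩)
                = ∏ i : Σ k : Fin K, Fin (N k), pi i.1 (x i.1 i.2) μN (b i) :=
              sigma_prod (fun k j => pi k (x k j) μN (b ⟨k, j⟩))
            have e2 : Mb' (fun k j => b ⟨k, j⟩) (x1, k)
                = (∑ j, Pk k (x k j) (b ⟨k, j⟩) μN νMF x1) / Npop := rfl
            rw [e1, e2, hPMF' x1 k, div_sub_div_same, abs_div, abs_of_pos hNpos]
            ring
          rw [conv]
          exact mul_le_mul_of_nonneg_left key (by positivity)
      _ = (1/Npop) * ∑ k, Real.sqrt ((Fintype.card X : ℝ) * N k) := by rw [Finset.mul_sum]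
  have pointwise2 : ∀ b, l1 (Mb b) (Mb' b) ≤ LP * l1 (νOf b) νMF := by
    intro b
    have step : ∀ q : X × Fin K, |Mb b q - Mb' b q|
        ≤ (∑ j, |Pk q.2 (x q.2 j) (b q.2 j) μN (νOf b) q.1
            - Pk q.2 (x q.2 j) (b q.2 j) μN νMF q.1|) / Npop := by
      intro q
      show |(∑ j, Pk q.2 (x q.2 j) (b q.2 j) μN (νOf b) q.1) / Npop
          - (∑ j, Pk q.2 (x q.2 j) (b q.2 j) μN νMF q.1) / Npop| ≤ _
      rw [div_sub_div_same, ← Finset.sum_sub_distrib, abs_div, abs_of_pos hNpos]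
      exact (div_le_div_iff_of_pos_right hNpos).mpr (Finset.abs_sum_le_sum_abs _ _)
    calc l1 (Mb b) (Mb' b)
        ≤ ∑ q : X × Fin K, (∑ j, |Pk q.2 (x q.2 j) (b q.2 j) μN (νOf b) q.1
            - Pk q.2 (x q.2 j) (b q.2 j) μN νMF q.1|) / Npop :=
          Finset.sum_le_sum fun q _ => step q
      _ = (∑ k, ∑ j, ∑ x1, |Pk k (x k j) (b k j) μN (νOf b) x1
            - Pk k (x k j) (b k j) μN νMF x1|) / Npop := by
          rw [← Finset.sum_div]
          congr 1
          rw [Fintype.sum_prod_type, Finset.sum_comm]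
          refine Finset.sum_congr rfl fun k _ => ?_
          show ∑ x1 : X, ∑ j : Fin (N k), |Pk k (x k j) (b k j) μN (νOf b) x1
              - Pk k (x k j) (b k j) μN νMF x1| = _
          exact Finset.sum_comm
      _ ≤ (∑ k : Fin K, ∑ _j : Fin (N k), LP * l1 (νOf b) νMF) / Npop := by
          refine (div_le_div_iff_of_pos_right hNpos).mpr ?_
          refine Finset.sum_le_sum fun k _ => Finset.sum_le_sum fun j _ => ?_
          exact hPkLip k (x k j) (b k j) μN (νOf b) νMF hμNP (hνOfP b) hνMFP
      _ = ((∑ k : Fin K, (N k : ℝ)) * (LP * l1 (νOf b) νMF)) / Npop := by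
          rw [Finset.sum_mul]
          congr 1
          refine Finset.sum_congr rfl fun k _ => ?_
          rw [Finset.sum_const]
          simp [nsmul_eq_mul]
      _ = LP * l1 (νOf b) νMF := by
          rw [← hNpop, mul_comm, mul_div_assoc, div_self hNne, mul_one]
  -- assembly
  show ∑ b : (k : Fin K) → Fin (N k) → U, ∑ a : (k : Fin K) → Fin (N k) → X,
      (Wb b * Wa b a) * l1 (μOf a) PMFmu ≤ _
  have hsplit : ∑ b : (k : Fin K) → Fin (N k) → U, ∑ a : (k : Fin K) → Fin (N k) → X,
      (Wb b * Wa b a) * l1 (μOf a) PMFmu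
      ≤ (∑ b : (k : Fin K) → Fin (N k) → U, ∑ a : (k : Fin K) → Fin (N k) → X,
          (Wb b * Wa b a) * l1 (μOf a) (Mb b))
        + ((∑ b : (k : Fin K) → Fin (N k) → U, ∑ a : (k : Fin K) → Fin (N k) → X,
          (Wb b * Wa b a) * l1 (Mb b) (Mb' b))
        + (∑ b : (k : Fin K) → Fin (N k) → U, ∑ a : (k : Fin K) → Fin (N k) → X,
          (Wb b * Wa b a) * l1 (Mb' b) PMFmu)) := by
    calc ∑ b : (k : Fin K) → Fin (N k) → U, ∑ a : (k : Fin K) → Fin (N k) → X,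
        (Wb b * Wa b a) * l1 (μOf a) PMFmu
        ≤ ∑ b : (k : Fin K) → Fin (N k) → U, ∑ a : (k : Fin K) → Fin (N k) → X,
          (Wb b * Wa b a) * (l1 (μOf a) (Mb b) + (l1 (Mb b) (Mb' b) + l1 (Mb' b) PMFmu)) := by
          refine Finset.sum_le_sum fun b _ => Finset.sum_le_sum fun a _ => ?_
          refine mul_le_mul_of_nonneg_left ?_ (mul_nonneg (hWb0 b) (hWa0 b a))
          calc l1 (μOf a) PMFmu ≤ l1 (μOf a) (Mb b) + l1 (Mb b) PMFmu :=
                l1_triangle _ _ _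
            _ ≤ l1 (μOf a) (Mb b) + (l1 (Mb b) (Mb' b) + l1 (Mb' b) PMFmu) := by
                have := l1_triangle (Mb b) (Mb' b) PMFmu
                linarith
      _ = _ := by simp_rw [mul_add, Finset.sum_add_distrib]
  have collapse : ∀ f : ((k : Fin K) → Fin (N k) → U) → ℝ,
      (∀ b, ∑ a : (k : Fin K) → Fin (N k) → X, (Wb b * Wa b a) * f b = Wb b * f b) := by
    intro f b
    calc ∑ a : (k : Fin K) → Fin (N k) → X, (Wb b * Wa b a) * f b
        = (∑ a : (k : Fin K) → Fin (N k) → X, Wa b a) * (Wb b * f b) := by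
          rw [Finset.sum_mul]
          exact Finset.sum_congr rfl fun a _ => by ring
      _ = Wb b * f b := by rw [hWasum b, one_mul]
  have hS1 : ∑ b : (k : Fin K) → Fin (N k) → U, ∑ a : (k : Fin K) → Fin (N k) → X,
      (Wb b * Wa b a) * l1 (μOf a) (Mb b)
      ≤ (1/Npop) * ∑ k, Real.sqrt ((Fintype.card X : ℝ) * N k) := by
    calc ∑ b : (k : Fin K) → Fin (N k) → U, ∑ a : (k : Fin K) → Fin (N k) → X,
        (Wb b * Wa b a) * l1 (μOf a) (Mb b)
        = ∑ b : (k : Fin K) → Fin (N k) → U,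
          Wb b * ∑ a : (k : Fin K) → Fin (N k) → X, Wa b a * l1 (μOf a) (Mb b) := by
          refine Finset.sum_congr rfl fun b _ => ?_
          rw [Finset.mul_sum]
          exact Finset.sum_congr rfl fun a _ => by ring
      _ ≤ ∑ b : (k : Fin K) → Fin (N k) → U,
          Wb b * ((1/Npop) * ∑ k, Real.sqrt ((Fintype.card X : ℝ) * N k)) :=
          Finset.sum_le_sum fun b _ => mul_le_mul_of_nonneg_left (bound1 b) (hWb0 b)
      _ = (1/Npop) * ∑ k, Real.sqrt ((Fintype.card X : ℝ) * N k) := by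
          rw [← Finset.sum_mul, hWbsum, one_mul]
  have hS2 : ∑ b : (k : Fin K) → Fin (N k) → U, ∑ a : (k : Fin K) → Fin (N k) → X,
      (Wb b * Wa b a) * l1 (Mb b) (Mb' b)
      ≤ LP * ((1/Npop) * ∑ k, Real.sqrt ((Fintype.card U : ℝ) * N k)) := by
    rw [Finset.sum_congr rfl fun b _ => collapse (fun b => l1 (Mb b) (Mb' b)) b]
    calc ∑ b : (k : Fin K) → Fin (N k) → U, Wb b * l1 (Mb b) (Mb' b)
        ≤ ∑ b : (k : Fin K) → Fin (N k) → U, Wb b * (LP * l1 (νOf b) νMF) :=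
          Finset.sum_le_sum fun b _ => mul_le_mul_of_nonneg_left (pointwise2 b) (hWb0 b)
      _ = LP * ∑ b : (k : Fin K) → Fin (N k) → U, Wb b * l1 (νOf b) νMF := by
          rw [Finset.mul_sum]
          exact Finset.sum_congr rfl fun b _ => by ring
      _ ≤ LP * ((1/Npop) * ∑ k, Real.sqrt ((Fintype.card U : ℝ) * N k)) :=
          mul_le_mul_of_nonneg_left bound2ν hLP
  have hS3 : ∑ b : (k : Fin K) → Fin (N k) → U, ∑ a : (k : Fin K) → Fin (N k) → X,
      (Wb b * Wa b a) * l1 (Mb' b) PMFmu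
      ≤ (1/Npop) * ∑ k, Real.sqrt ((Fintype.card X : ℝ) * N k) := by
    rw [Finset.sum_congr rfl fun b _ => collapse (fun b => l1 (Mb' b) PMFmu) b]
    exact bound3
  -- final numeric step
  set R0 : ℝ := Real.sqrt ((Fintype.card X : ℝ) * Fintype.card U)
    * ((1 / Npop) * ∑ k, Real.sqrt (N k)) with hR0
  have hcard : ∀ (c : ℕ), 1 ≤ c →
      (1/Npop) * ∑ k, Real.sqrt ((c : ℝ) * N k)
        ≤ Real.sqrt (c : ℝ) * ((1/Npop) * ∑ k, Real.sqrt (N k)) := by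
    intro c hc
    have e : ∀ k, Real.sqrt ((c:ℝ) * N k) = Real.sqrt (c:ℝ) * Real.sqrt (N k) :=
      fun k => Real.sqrt_mul (by positivity) _
    rw [Finset.sum_congr rfl fun k _ => e k, ← Finset.mul_sum]
    exact le_of_eq (by ring)
  have hXle : (1/Npop) * ∑ k, Real.sqrt ((Fintype.card X : ℝ) * N k) ≤ R0 := by
    refine le_trans (hcard (Fintype.card X) Fintype.card_pos) ?_
    rw [hR0]
    refine mul_le_mul_of_nonneg_right ?_ (by positivity)
    refine Real.sqrt_le_sqrt ?_
    have : (1:ℝ) ≤ Fintype.card U := by exact_mod_cast Fintype.card_pos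
    nlinarith [Nat.cast_nonneg (α := ℝ) (Fintype.card X)]
  have hUle : (1/Npop) * ∑ k, Real.sqrt ((Fintype.card U : ℝ) * N k) ≤ R0 := by
    refine le_trans (hcard (Fintype.card U) Fintype.card_pos) ?_
    rw [hR0]
    refine mul_le_mul_of_nonneg_right ?_ (by positivity)
    refine Real.sqrt_le_sqrt ?_
    have : (1:ℝ) ≤ Fintype.card X := by exact_mod_cast Fintype.card_pos
    nlinarith [Nat.cast_nonneg (α := ℝ) (Fintype.card U)]
  have hR0nn : 0 ≤ R0 := by rw [hR0]; positivity
  have hLPm : LP * ((1/Npop) * ∑ k, Real.sqrt ((Fintype.card U : ℝ) * N k)) ≤ LP * R0 :=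
    mul_le_mul_of_nonneg_left hUle hLP
  have : (2 + LP) * Real.sqrt ((Fintype.card X : ℝ) * Fintype.card U)
      * ((1 / Npop) * ∑ k, Real.sqrt (N k)) = (2 + LP) * R0 := by rw [hR0]; ring
  rw [this]
  linarith

theorem stmt8 {Ω : Type*} [MeasurableSpace Ω] (P : Measure Ω) [IsProbabilityMeasure P]
    {X U : Type*} [Fintype X] [Fintype U] [Nonempty X] [Nonempty U]
    [DecidableEq X] [DecidableEq U]
    [MeasurableSpace X] [MeasurableSingletonClass X]
    [MeasurableSpace U] [MeasurableSingletonClass U]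
    (K : ℕ) (hK : 0 < K) (N : Fin K → ℕ) (hN : ∀ k, 0 < N k)
    (Npop : ℝ) (hNpop : Npop = ∑ k, (N k : ℝ))
    (LP : ℝ) (hLP : 0 ≤ LP)
    -- fixed states and their empirical joint distribution
    (x : (k : Fin K) → Fin (N k) → X)
    (μN : X × Fin K → ℝ)
    (hμN : ∀ x0 k, μN (x0, k) = (∑ j, if x k j = x0 then (1 : ℝ) else 0) / Npop)
    -- decision rules
    (pi : Fin K → X → (X × Fin K → ℝ) → U → ℝ)
    (hpiProb : ∀ k x0 μ, IsProb μ → IsProb (pi k x0 μ))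
    -- the random actions: independent, with law `pi k (x k j) μN`
    (u : (k : Fin K) → Fin (N k) → Ω → U)
    (hmeasu : ∀ k j, Measurable (u k j))
    (hulaw : ∀ k j u0, (P {ω | u k j ω = u0}).toReal = pi k (x k j) μN u0)
    (hindep : iIndepFun
      (fun p : Σ k : Fin K, Fin (N k) => u p.1 p.2) P)
    -- random empirical action distribution
    (νN : Ω → U × Fin K → ℝ)
    (hνN : ∀ ω u0 k, νN ω (u0, k) = (∑ j, if u k j ω = u0 then (1 : ℝ) else 0) / Npop)
    -- transition kernels
    (Pk : Fin K → X → U → (X × Fin K → ℝ) → (U × Fin K → ℝ) → X → ℝ)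
    (hPkProb : ∀ k x0 u0 μ ν, IsProb μ → IsProb ν → IsProb (Pk k x0 u0 μ ν))
    (hPkLip : ∀ k x0 u0 μ ν₁ ν₂, IsProb μ → IsProb ν₁ → IsProb ν₂ →
      l1 (Pk k x0 u0 μ ν₁) (Pk k x0 u0 μ ν₂) ≤ LP * l1 ν₁ ν₂)
    -- the next states: conditionally on the actions, mutually independent with
    -- conditional law `Pk k (x k j) (u k j) μN νN`
    (x' : (k : Fin K) → Fin (N k) → Ω → X)
    (hmeasx' : ∀ k j, Measurable (x' k j))
    (νOf : ((k : Fin K) → Fin (N k) → U) → U × Fin K → ℝ)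
    (hνOf : ∀ b u0 k, νOf b (u0, k) = (∑ j, if b k j = u0 then (1 : ℝ) else 0) / Npop)
    (hcond : ∀ (a : (k : Fin K) → Fin (N k) → X) (b : (k : Fin K) → Fin (N k) → U),
      P {ω | (∀ k j, x' k j ω = a k j) ∧ ∀ k j, u k j ω = b k j}
        = P {ω | ∀ k j, u k j ω = b k j}
          * ENNReal.ofReal (∏ k, ∏ j, Pk k (x k j) (b k j) μN (νOf b) (a k j)))
    -- the empirical distribution of the next states
    (μ'N : Ω → X × Fin K → ℝ)
    (hμ'N : ∀ ω x0 k, μ'N ω (x0, k) = (∑ j, if x' k j ω = x0 then (1 : ℝ) else 0) / Npop)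
    -- the mean-field action distribution and state update
    (νMF : U × Fin K → ℝ)
    (hνMF : ∀ u0 k, νMF (u0, k) = ∑ x0, pi k x0 μN u0 * μN (x0, k))
    (PMFmu : X × Fin K → ℝ)
    (hPMFmu : ∀ x1 k, PMFmu (x1, k) =
      ∑ x0, ∑ u0, μN (x0, k) * pi k x0 μN u0 * Pk k x0 u0 μN νMF x1) :
    ∫ ω, l1 (μ'N ω) PMFmu ∂P
      ≤ (2 + LP) * Real.sqrt ((Fintype.card X : ℝ) * Fintype.card U)
        * ((1 / Npop) * ∑ k, Real.sqrt (N k)) := by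
  classical
  have hNpos : 0 < Npop := by
    rw [hNpop]
    exact Finset.sum_pos (fun k _ => by exact_mod_cast hN k) ⟨⟨0, hK⟩, Finset.mem_univ _⟩
  have hNne : Npop ≠ 0 := ne_of_gt hNpos
  have hμNP : IsProb μN := by
    constructor
    · intro q
      rw [← Prod.mk.eta (p := q), hμN]
      have : (0:ℝ) ≤ ∑ j, if x q.2 j = q.1 then (1:ℝ) else 0 :=
        Finset.sum_nonneg fun j _ => by split <;> norm_num
      positivity
    · rw [Fintype.sum_prod_type, Finset.sum_comm]
      have : ∀ k : Fin K, ∑ x0, μN (x0, k) = (N k : ℝ) / Npop := by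
        intro k
        simp_rw [hμN]
        rw [← Finset.sum_div]
        congr 1
        have h2 := group_sum (x k) (fun _ => (1:ℝ))
        simp only [mul_one] at h2
        rw [h2]
        simp
      rw [Finset.sum_congr rfl fun k _ => this k, ← Finset.sum_div, ← hNpop, div_self hNne]
  have hνOfP : ∀ b : (k : Fin K) → Fin (N k) → U, IsProb (νOf b) := by
    intro b
    constructor
    · intro q
      rw [← Prod.mk.eta (p := q), hνOf]
      have : (0:ℝ) ≤ ∑ j, if b q.2 j = q.1 then (1:ℝ) else 0 :=
        Finset.sum_nonneg fun j _ => by split <;> norm_num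
      positivity
    · rw [Fintype.sum_prod_type, Finset.sum_comm]
      have : ∀ k : Fin K, ∑ u0, νOf b (u0, k) = (N k : ℝ) / Npop := by
        intro k
        simp_rw [hνOf]
        rw [← Finset.sum_div]
        congr 1
        have h2 := group_sum (b k) (fun _ => (1:ℝ))
        simp only [mul_one] at h2
        rw [h2]
        simp
      rw [Finset.sum_congr rfl fun k _ => this k, ← Finset.sum_div, ← hNpop, div_self hNne]
  -- the deterministic empirical measure map
  set μOfd : ((k : Fin K) → Fin (N k) → X) → X × Fin K → ℝ :=
    fun a q => (∑ j, if a q.2 j = q.1 then (1:ℝ) else 0) / Npop with hμOfddef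
  have hμOfd : ∀ a x0 k, μOfd a (x0, k) = (∑ j, if a k j = x0 then (1:ℝ) else 0) / Npop :=
    fun a x0 k => rfl
  have main := comb_main K hK N hN Npop hNpop LP hLP x μN hμN pi hpiProb Pk hPkProb hPkLip
    νOf hνOf μOfd hμOfd νMF hνMF PMFmu hPMFmu
  -- events
  set EA : ((k : Fin K) → Fin (N k) → X) → Set Ω :=
    fun a => {ω | ∀ k j, x' k j ω = a k j} with hEAdef
  set EB : ((k : Fin K) → Fin (N k) → U) → Set Ω :=
    fun b => {ω | ∀ k j, u k j ω = b k j} with hEBdef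
  have hEA : ∀ a, MeasurableSet (EA a) := by
    intro a
    have : EA a = ⋂ k, ⋂ j, (x' k j) ⁻¹' {a k j} := by
      ext ω
      simp [hEAdef, Set.mem_iInter]
    rw [this]
    exact MeasurableSet.iInter fun k => MeasurableSet.iInter fun j =>
      (hmeasx' k j) (measurableSet_singleton _)
  have hEB : ∀ b, MeasurableSet (EB b) := by
    intro b
    have : EB b = ⋂ k, ⋂ j, (u k j) ⁻¹' {b k j} := by
      ext ω
      simp [hEBdef, Set.mem_iInter]
    rw [this]
    exact MeasurableSet.iInter fun k => MeasurableSet.iInter fun j =>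
      (hmeasu k j) (measurableSet_singleton _)
  have hmeasE : ∀ a b, MeasurableSet (EA a ∩ EB b) := fun a b => (hEA a).inter (hEB b)
  -- the probability of each elementary event
  have hPEtoReal : ∀ a b, (P (EA a ∩ EB b)).toReal
      = (∏ k, ∏ j, pi k (x k j) μN (b k j)) *
        ∏ k, ∏ j, Pk k (x k j) (b k j) μN (νOf b) (a k j) := by
    intro a b
    have hset : EA a ∩ EB b
        = {ω | (∀ k j, x' k j ω = a k j) ∧ ∀ k j, u k j ω = b k j} := by
      ext ω
      simp [hEAdef, hEBdef, Set.mem_inter_iff]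
    rw [hset, hcond a b, ENNReal.toReal_mul,
      ENNReal.toReal_ofReal (Finset.prod_nonneg fun k _ => Finset.prod_nonneg fun j _ =>
        (hPkProb _ _ _ _ _ hμNP (hνOfP b)).1 _)]
    congr 1
    have hsetB : {ω | ∀ k j, u k j ω = b k j}
        = ⋂ i : Σ k : Fin K, Fin (N k), (u i.1 i.2) ⁻¹' {b i.1 i.2} := by
      ext ω
      simp [Set.mem_iInter, Sigma.forall]
    rw [hsetB, hindep.meas_iInter (fun i => ⟨{b i.1 i.2}, measurableSet_singleton _, rfl⟩),
      ENNReal.toReal_prod, sigma_prod (fun k j => pi k (x k j) μN (b k j))]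
    refine Finset.prod_congr rfl fun i _ => ?_
    have hseteq : u i.1 i.2 ⁻¹' {b i.1 i.2} = {ω | u i.1 i.2 ω = b i.1 i.2} := by
      ext ω
      simp
    rw [hseteq, hulaw i.1 i.2 (b i.1 i.2)]
  -- pointwise decomposition of the integrand
  have hpt : ∀ ω, l1 (μ'N ω) PMFmu
      = ∑ a : (k : Fin K) → Fin (N k) → X, ∑ b : (k : Fin K) → Fin (N k) → U,
        (EA a ∩ EB b).indicator (fun _ => l1 (μOfd a) PMFmu) ω := by
    intro ω
    have hzero1 : ∀ a : (k : Fin K) → Fin (N k) → X, a ≠ (fun k j => x' k j ω) →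
        (∑ b : (k : Fin K) → Fin (N k) → U,
          (EA a ∩ EB b).indicator (fun _ => l1 (μOfd a) PMFmu) ω) = 0 := by
      intro a hne
      refine Finset.sum_eq_zero fun b _ => ?_
      refine Set.indicator_of_notMem (fun hmem => ?_) _
      have hA' : ω ∈ EA a := hmem.1
      exact hne (funext fun k => funext fun j => (hA' k j).symm)
    have hzero2 : ∀ b : (k : Fin K) → Fin (N k) → U, b ≠ (fun k j => u k j ω) →
        (EA (fun k j => x' k j ω) ∩ EB b).indicator
          (fun _ => l1 (μOfd (fun k j => x' k j ω)) PMFmu) ω = 0 := by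
      intro b hne
      refine Set.indicator_of_notMem (fun hmem => ?_) _
      have hB' : ω ∈ EB b := hmem.2
      exact hne (funext fun k => funext fun j => (hB' k j).symm)
    rw [Finset.sum_eq_single_of_mem (fun k j => x' k j ω) (Finset.mem_univ _)
      (fun a _ hne => hzero1 a hne)]
    rw [Finset.sum_eq_single_of_mem (fun k j => u k j ω) (Finset.mem_univ _)
      (fun b _ hne => hzero2 b hne)]
    have hmemA : ω ∈ EA (fun k j => x' k j ω) := by
      show ∀ k j, x' k j ω = x' k j ω
      exact fun k j => rfl
    have hmemB : ω ∈ EB (fun k j => u k j ω) := by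
      show ∀ k j, u k j ω = u k j ω
      exact fun k j => rfl
    rw [Set.indicator_of_mem (Set.mem_inter hmemA hmemB)]
    have heq : μ'N ω = μOfd (fun k j => x' k j ω) := by
      funext q
      rw [← Prod.mk.eta (p := q), hμ'N]
    rw [heq]
  -- computing the integral
  calc ∫ ω, l1 (μ'N ω) PMFmu ∂P
      = ∫ ω, ∑ a : (k : Fin K) → Fin (N k) → X, ∑ b : (k : Fin K) → Fin (N k) → U,
          (EA a ∩ EB b).indicator (fun _ => l1 (μOfd a) PMFmu) ω ∂P :=
        integral_congr_ae (Filter.Eventually.of_forall hpt)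
    _ = ∑ a : (k : Fin K) → Fin (N k) → X, ∑ b : (k : Fin K) → Fin (N k) → U,
          ∫ ω, (EA a ∩ EB b).indicator (fun _ => l1 (μOfd a) PMFmu) ω ∂P := by
        rw [integral_finset_sum _ (fun a _ => integrable_finset_sum _
          (fun b _ => (integrable_const _).indicator (hmeasE a b)))]
        exact Finset.sum_congr rfl fun a _ => integral_finset_sum _
          (fun b _ => (integrable_const _).indicator (hmeasE a b))
    _ = ∑ a : (k : Fin K) → Fin (N k) → X, ∑ b : (k : Fin K) → Fin (N k) → U,
          (P (EA a ∩ EB b)).toReal * l1 (μOfd a) PMFmu := by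
        refine Finset.sum_congr rfl fun a _ => Finset.sum_congr rfl fun b _ => ?_
        rw [integral_indicator_const _ (hmeasE a b), smul_eq_mul]
        rfl
    _ = ∑ b : (k : Fin K) → Fin (N k) → U, ∑ a : (k : Fin K) → Fin (N k) → X,
          ((∏ k, ∏ j, pi k (x k j) μN (b k j)) *
            ∏ k, ∏ j, Pk k (x k j) (b k j) μN (νOf b) (a k j)) * l1 (μOfd a) PMFmu := by
        rw [Finset.sum_comm]
        exact Finset.sum_congr rfl fun b _ => Finset.sum_congr rfl fun a _ => by
          rw [hPEtoReal a b]
    _ ≤ (2 + LP) * Real.sqrt ((Fintype.card X : ℝ) * Fintype.card U)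
        * ((1 / Npop) * ∑ k, Real.sqrt (N k)) := main
end

section
/- Let X and U be finite nonempty sets, K a positive integer, and L̄_Q ≥ 0. Let π̄ = (π̄_k)_{k∈[K]} be decision rules π̄_k : X × P(X)^K → P(U) such that for all x ∈ X, k ∈ [K], and μ̄₁, μ̄₂ ∈ P(X)^K, |π̄_k(x,μ̄₁) − π̄_k(x,μ̄₂)|₁ ≤ L̄_Q·|μ̄₁ − μ̄₂|₁, where |μ̄₁ − μ̄₂|₁ = Σ_{k∈[K]} Σ_{x∈X} |μ̄₁(x,k) − μ̄₂(x,k)|. Define ν̄^MF(μ̄,π̄) ∈ P(U)^K by ν̄^MF(μ̄,π̄)(u,k) = Σ_{x∈X} π̄_k(x,μ̄)(u)·μ̄(x,k). Then for all μ̄, μ̄' ∈ P(X)^K, |ν̄^MF(μ̄,π̄) − ν̄^MF(μ̄',π̄)|₁ ≤ (1 + K·L̄_Q)·|μ̄ − μ̄'|₁. -/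
open Finset

/-- An element of `P(A)^K`: for each class `k`, the slice `μ (·, k)` is a
probability distribution on `A`. -/
def IsProbK {A : Type*} [Fintype A] {K : ℕ} (μ : A × Fin K → ℝ) : Prop :=
  ∀ k, IsProb (fun a => μ (a, k))

theorem stmt12
    {X U : Type*} [Fintype X] [Fintype U] [Nonempty X] [Nonempty U]
    (K : ℕ) (hK : 0 < K) (LQ : ℝ) (hLQ : 0 ≤ LQ)
    (pi : Fin K → X → (X × Fin K → ℝ) → U → ℝ)
    (hpiProb : ∀ k x μ, IsProbK μ → IsProb (pi k x μ))
    (hpiLip : ∀ k x μ₁ μ₂, IsProbK μ₁ → IsProbK μ₂ →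
      l1 (pi k x μ₁) (pi k x μ₂) ≤ LQ * l1 μ₁ μ₂)
    (nuMF : (X × Fin K → ℝ) → U × Fin K → ℝ)
    (hnuMF : ∀ μ u k, nuMF μ (u, k) = ∑ x, pi k x μ u * μ (x, k))
    (μ μ' : X × Fin K → ℝ) (hμ : IsProbK μ) (hμ' : IsProbK μ') :
    l1 (nuMF μ) (nuMF μ') ≤ (1 + (K : ℝ) * LQ) * l1 μ μ' := by
  have key : l1 (nuMF μ) (nuMF μ') ≤
      ∑ k : Fin K, ∑ u : U, ∑ x : X,
        (pi k x μ u * |μ (x, k) - μ' (x, k)| +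
          |pi k x μ u - pi k x μ' u| * μ' (x, k)) := by
    rw [l1, Fintype.sum_prod_type, Finset.sum_comm]
    refine Finset.sum_le_sum fun k _ => Finset.sum_le_sum fun u _ => ?_
    rw [hnuMF, hnuMF, ← Finset.sum_sub_distrib]
    refine (Finset.abs_sum_le_sum_abs _ _).trans (Finset.sum_le_sum fun x _ => ?_)
    have h : pi k x μ u * μ (x, k) - pi k x μ' u * μ' (x, k)
        = pi k x μ u * (μ (x, k) - μ' (x, k)) + (pi k x μ u - pi k x μ' u) * μ' (x, k) := by
      ring
    rw [h]
    refine (abs_add_le _ _).trans ?_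
    rw [abs_mul, abs_mul, abs_of_nonneg ((hpiProb k x μ hμ).1 u),
      abs_of_nonneg ((hμ' k).1 x)]
  have h1 : ∀ k : Fin K, ∑ u : U, ∑ x : X, pi k x μ u * |μ (x, k) - μ' (x, k)|
      = ∑ x : X, |μ (x, k) - μ' (x, k)| := by
    intro k
    rw [Finset.sum_comm]
    refine Finset.sum_congr rfl fun x _ => ?_
    rw [← Finset.sum_mul, (hpiProb k x μ hμ).2, one_mul]
  have h2 : ∀ k : Fin K, ∑ u : U, ∑ x : X, |pi k x μ u - pi k x μ' u| * μ' (x, k)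
      ≤ LQ * l1 μ μ' := by
    intro k
    rw [Finset.sum_comm]
    calc ∑ x : X, ∑ u : U, |pi k x μ u - pi k x μ' u| * μ' (x, k)
        = ∑ x : X, l1 (pi k x μ) (pi k x μ') * μ' (x, k) := by
          exact Finset.sum_congr rfl fun x _ => by rw [l1, Finset.sum_mul]
      _ ≤ ∑ x : X, (LQ * l1 μ μ') * μ' (x, k) :=
          Finset.sum_le_sum fun x _ =>
            mul_le_mul_of_nonneg_right (hpiLip k x μ μ' hμ hμ') ((hμ' k).1 x)
      _ = LQ * l1 μ μ' := by rw [← Finset.mul_sum, (hμ' k).2, mul_one]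
  refine key.trans ?_
  calc ∑ k : Fin K, ∑ u : U, ∑ x : X,
        (pi k x μ u * |μ (x, k) - μ' (x, k)| + |pi k x μ u - pi k x μ' u| * μ' (x, k))
      = ∑ k : Fin K, ((∑ u : U, ∑ x : X, pi k x μ u * |μ (x, k) - μ' (x, k)|) +
          ∑ u : U, ∑ x : X, |pi k x μ u - pi k x μ' u| * μ' (x, k)) := by
        simp [Finset.sum_add_distrib]
    _ ≤ ∑ k : Fin K, ((∑ x : X, |μ (x, k) - μ' (x, k)|) + LQ * l1 μ μ') := by
        refine Finset.sum_le_sum fun k _ => ?_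
        rw [h1 k]; exact add_le_add_right (h2 k) _
    _ = l1 μ μ' + (K : ℝ) * (LQ * l1 μ μ') := by
        rw [Finset.sum_add_distrib, Finset.sum_const, card_univ, Fintype.card_fin,
          nsmul_eq_mul]
        congr 1
        rw [l1, Fintype.sum_prod_type, Finset.sum_comm]
    _ = (1 + (K : ℝ) * LQ) * l1 μ μ' := by ring
end

section
/- Let X and U be finite nonempty sets, K a positive integer, M̄_R, L̄_R, L̄_Q ≥ 0, and let θ_1,...,θ_K ≥ 0 with Σ_k θ_k = 1. Let π̄ = (π̄_k)_{k∈[K]} be decision rules π̄_k : X × P(X)^K → P(U) with |π̄_k(x,μ̄₁) − π̄_k(x,μ̄₂)|₁ ≤ L̄_Q·|μ̄₁ − μ̄₂|₁ for all arguments. Let r̄_k : X × U × P(X)^K × P(U)^K → ℝ satisfy |r̄_k(x,u,μ̄,ν̄)| ≤ M̄_R and |r̄_k(x,u,μ̄₁,ν̄₁) − r̄_k(x,u,μ̄₂,ν̄₂)| ≤ L̄_R·(|μ̄₁ − μ̄₂|₁ + |ν̄₁ − ν̄₂|₁). Define ν̄^MF(μ̄,π̄)(u,k) = Σ_{x∈X}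 π̄_k(x,μ̄)(u)·μ̄(x,k) and r̄_k^MF(μ̄,π̄) = Σ_{x,u} μ̄(x,k)·π̄_k(x,μ̄)(u)·r̄_k(x,u,μ̄,ν̄^MF(μ̄,π̄)). Then for all μ̄, μ̄' ∈ P(X)^K, Σ_{k∈[K]} θ_k·|r̄_k^MF(μ̄,π̄) − r̄_k^MF(μ̄',π̄)| ≤ S̄_R·|μ̄ − μ̄'|₁, where S̄_R = M̄_R·(1+L̄_Q) + L̄_R·(2+K·L̄_Q). -/
open Finset

theorem stmt13
    {X U : Type*} [Fintype X] [Fintype U] [Nonempty X] [Nonempty U]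
    (K : ℕ) (hK : 0 < K)
    (MR LR LQ : ℝ) (hMR : 0 ≤ MR) (hLR : 0 ≤ LR) (hLQ : 0 ≤ LQ)
    (θ : Fin K → ℝ) (hθ0 : ∀ k, 0 ≤ θ k) (hθ1 : ∑ k, θ k = 1)
    (pi : Fin K → X → (X × Fin K → ℝ) → U → ℝ)
    (hpiProb : ∀ k x μ, IsProbK μ → IsProb (pi k x μ))
    (hpiLip : ∀ k x μ₁ μ₂, IsProbK μ₁ → IsProbK μ₂ →
      l1 (pi k x μ₁) (pi k x μ₂) ≤ LQ * l1 μ₁ μ₂)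
    (r : Fin K → X → U → (X × Fin K → ℝ) → (U × Fin K → ℝ) → ℝ)
    (hrBdd : ∀ k x u μ ν, IsProbK μ → IsProbK ν → |r k x u μ ν| ≤ MR)
    (hrLip : ∀ k x u μ₁ ν₁ μ₂ ν₂, IsProbK μ₁ → IsProbK ν₁ → IsProbK μ₂ → IsProbK ν₂ →
      |r k x u μ₁ ν₁ - r k x u μ₂ ν₂| ≤ LR * (l1 μ₁ μ₂ + l1 ν₁ ν₂))
    (nuMF : (X × Fin K → ℝ) → U × Fin K → ℝ)
    (hnuMF : ∀ μ u k, nuMF μ (u, k) = ∑ x, pi k x μ u * μ (x, k))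
    (rMF : (X × Fin K → ℝ) → Fin K → ℝ)
    (hrMF : ∀ μ k, rMF μ k = ∑ x, ∑ u, μ (x, k) * pi k x μ u * r k x u μ (nuMF μ))
    (μ μ' : X × Fin K → ℝ) (hμ : IsProbK μ) (hμ' : IsProbK μ') :
    ∑ k, θ k * |rMF μ k - rMF μ' k|
      ≤ (MR * (1 + LQ) + LR * (2 + (K : ℝ) * LQ)) * l1 μ μ' := by
  classical
  set L := l1 μ μ' with hLdef
  have hL0 : 0 ≤ L := Finset.sum_nonneg fun _ _ => abs_nonneg _
  set d : Fin K → ℝ := fun k => ∑ x, |μ (x, k) - μ' (x, k)| with hd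
  have hLsum : L = ∑ k, d k := by
    rw [hLdef, l1, Fintype.sum_prod_type]
    exact Finset.sum_comm
  have hdnn : ∀ k, 0 ≤ d k := fun k => Finset.sum_nonneg fun _ _ => abs_nonneg _
  have hdL : ∀ k, d k ≤ L := by
    intro k
    rw [hLsum]
    exact Finset.single_le_sum (fun k _ => hdnn k) (Finset.mem_univ k)
  -- Step A : key product bound
  have hA : ∀ k : Fin K,
      ∑ x, ∑ u, |μ (x, k) * pi k x μ u - μ' (x, k) * pi k x μ' u| ≤ d k + LQ * L := by
    intro k
    have hx : ∀ x, ∑ u, |μ (x, k) * pi k x μ u - μ' (x, k) * pi k x μ' u|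
        ≤ |μ (x, k) - μ' (x, k)| + μ' (x, k) * (LQ * L) := by
      intro x
      have h1 : ∀ u, |μ (x, k) * pi k x μ u - μ' (x, k) * pi k x μ' u|
          ≤ |μ (x, k) - μ' (x, k)| * pi k x μ u
            + μ' (x, k) * |pi k x μ u - pi k x μ' u| := by
        intro u
        have : μ (x, k) * pi k x μ u - μ' (x, k) * pi k x μ' u
            = (μ (x, k) - μ' (x, k)) * pi k x μ u
              + μ' (x, k) * (pi k x μ u - pi k x μ' u) := by ring
        rw [this]
        calc |(μ (x, k) - μ' (x, k)) * pi k x μ u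
              + μ' (x, k) * (pi k x μ u - pi k x μ' u)|
            ≤ |(μ (x, k) - μ' (x, k)) * pi k x μ u|
              + |μ' (x, k) * (pi k x μ u - pi k x μ' u)| := abs_add_le _ _
          _ = |μ (x, k) - μ' (x, k)| * pi k x μ u
              + μ' (x, k) * |pi k x μ u - pi k x μ' u| := by
                rw [abs_mul, abs_mul, abs_of_nonneg ((hpiProb k x μ hμ).1 u),
                  abs_of_nonneg ((hμ' k).1 x)]
      calc ∑ u, |μ (x, k) * pi k x μ u - μ' (x, k) * pi k x μ' u|
          ≤ ∑ u, (|μ (x, k) - μ' (x, k)| * pi k x μ u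
              + μ' (x, k) * |pi k x μ u - pi k x μ' u|) :=
            Finset.sum_le_sum fun u _ => h1 u
        _ = |μ (x, k) - μ' (x, k)| * (∑ u, pi k x μ u)
              + μ' (x, k) * l1 (pi k x μ) (pi k x μ') := by
            rw [Finset.sum_add_distrib, ← Finset.mul_sum, ← Finset.mul_sum]; rfl
        _ ≤ |μ (x, k) - μ' (x, k)| + μ' (x, k) * (LQ * L) := by
            rw [(hpiProb k x μ hμ).2, mul_one]
            exact add_le_add le_rfl
              (mul_le_mul_of_nonneg_left (hpiLip k x μ μ' hμ hμ') ((hμ' k).1 x))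
    calc ∑ x, ∑ u, |μ (x, k) * pi k x μ u - μ' (x, k) * pi k x μ' u|
        ≤ ∑ x, (|μ (x, k) - μ' (x, k)| + μ' (x, k) * (LQ * L)) :=
          Finset.sum_le_sum fun x _ => hx x
      _ = d k + (∑ x, μ' (x, k)) * (LQ * L) := by
          rw [Finset.sum_add_distrib, ← Finset.sum_mul]
      _ = d k + LQ * L := by rw [(hμ' k).2, one_mul]
  -- Step B : nuMF preserves probability
  have hnuProb : ∀ (σ : X × Fin K → ℝ), IsProbK σ → IsProbK (nuMF σ) := by
    intro σ hσ k
    constructor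
    · intro u
      show 0 ≤ nuMF σ (u, k)
      rw [hnuMF]
      exact Finset.sum_nonneg fun x _ =>
        mul_nonneg ((hpiProb k x σ hσ).1 u) ((hσ k).1 x)
    · have : ∀ u, nuMF σ (u, k) = ∑ x, pi k x σ u * σ (x, k) := fun u => hnuMF σ u k
      simp only [this]
      rw [Finset.sum_comm]
      have h2 : ∀ x, ∑ u, pi k x σ u * σ (x, k) = σ (x, k) := by
        intro x
        rw [← Finset.sum_mul, (hpiProb k x σ hσ).2, one_mul]
      rw [Finset.sum_congr rfl fun x _ => h2 x]
      exact (hσ k).2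
  -- Step C : L1 bound on the induced action distributions
  set ℓ := l1 (nuMF μ) (nuMF μ') with hℓdef
  have hℓ0 : 0 ≤ ℓ := Finset.sum_nonneg fun _ _ => abs_nonneg _
  have hℓle : ℓ ≤ L + (K : ℝ) * (LQ * L) := by
    have heq : ℓ = ∑ k : Fin K, ∑ u, |nuMF μ (u, k) - nuMF μ' (u, k)| := by
      rw [hℓdef, l1, Fintype.sum_prod_type]
      exact Finset.sum_comm
    rw [heq]
    have hk : ∀ k : Fin K, ∑ u, |nuMF μ (u, k) - nuMF μ' (u, k)| ≤ d k + LQ * L := by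
      intro k
      calc ∑ u, |nuMF μ (u, k) - nuMF μ' (u, k)|
          = ∑ u, |∑ x, (pi k x μ u * μ (x, k) - pi k x μ' u * μ' (x, k))| := by
            simp only [hnuMF, Finset.sum_sub_distrib]
        _ ≤ ∑ u, ∑ x, |pi k x μ u * μ (x, k) - pi k x μ' u * μ' (x, k)| :=
            Finset.sum_le_sum fun u _ => Finset.abs_sum_le_sum_abs _ _
        _ = ∑ x, ∑ u, |μ (x, k) * pi k x μ u - μ' (x, k) * pi k x μ' u| := by
            rw [Finset.sum_comm]
            exact Finset.sum_congr rfl fun x _ => Finset.sum_congr rfl fun u _ => by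
              rw [mul_comm (pi k x μ u), mul_comm (pi k x μ' u)]
        _ ≤ d k + LQ * L := hA k
    calc ∑ k : Fin K, ∑ u, |nuMF μ (u, k) - nuMF μ' (u, k)|
        ≤ ∑ k : Fin K, (d k + LQ * L) := Finset.sum_le_sum fun k _ => hk k
      _ = L + (K : ℝ) * (LQ * L) := by
          rw [Finset.sum_add_distrib, ← hLsum, Finset.sum_const, Finset.card_univ,
            Fintype.card_fin, nsmul_eq_mul]
  -- Step D : per-class bound
  have hνμ := hnuProb μ hμ
  have hνμ' := hnuProb μ' hμ'
  have hD : ∀ k : Fin K, |rMF μ k - rMF μ' k|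
      ≤ MR * (d k + LQ * L) + LR * (L + ℓ) := by
    intro k
    have hdecomp : rMF μ k - rMF μ' k
        = ∑ x, ∑ u, ((μ (x, k) * pi k x μ u - μ' (x, k) * pi k x μ' u)
              * r k x u μ (nuMF μ)
            + μ' (x, k) * pi k x μ' u
              * (r k x u μ (nuMF μ) - r k x u μ' (nuMF μ'))) := by
      rw [hrMF, hrMF, ← Finset.sum_sub_distrib]
      refine Finset.sum_congr rfl fun x _ => ?_
      rw [← Finset.sum_sub_distrib]
      exact Finset.sum_congr rfl fun u _ => by ring
    have hterm : ∀ x u,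
        |(μ (x, k) * pi k x μ u - μ' (x, k) * pi k x μ' u) * r k x u μ (nuMF μ)
          + μ' (x, k) * pi k x μ' u * (r k x u μ (nuMF μ) - r k x u μ' (nuMF μ'))|
        ≤ |μ (x, k) * pi k x μ u - μ' (x, k) * pi k x μ' u| * MR
          + μ' (x, k) * pi k x μ' u * (LR * (L + ℓ)) := by
      intro x u
      have hp : 0 ≤ μ' (x, k) * pi k x μ' u :=
        mul_nonneg ((hμ' k).1 x) ((hpiProb k x μ' hμ').1 u)
      calc |(μ (x, k) * pi k x μ u - μ' (x, k) * pi k x μ' u) * r k x u μ (nuMF μ)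
            + μ' (x, k) * pi k x μ' u * (r k x u μ (nuMF μ) - r k x u μ' (nuMF μ'))|
          ≤ |(μ (x, k) * pi k x μ u - μ' (x, k) * pi k x μ' u) * r k x u μ (nuMF μ)|
            + |μ' (x, k) * pi k x μ' u
                * (r k x u μ (nuMF μ) - r k x u μ' (nuMF μ'))| := abs_add_le _ _
        _ = |μ (x, k) * pi k x μ u - μ' (x, k) * pi k x μ' u| * |r k x u μ (nuMF μ)|
            + μ' (x, k) * pi k x μ' u
              * |r k x u μ (nuMF μ) - r k x u μ' (nuMF μ')| := by
            rw [abs_mul, abs_mul, abs_of_nonneg hp]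
        _ ≤ |μ (x, k) * pi k x μ u - μ' (x, k) * pi k x μ' u| * MR
            + μ' (x, k) * pi k x μ' u * (LR * (L + ℓ)) := by
            gcongr
            · exact hrBdd k x u μ (nuMF μ) hμ hνμ
            · exact hrLip k x u μ (nuMF μ) μ' (nuMF μ') hμ hνμ hμ' hνμ'
    have hsum1 : ∑ x, ∑ u, |μ (x, k) * pi k x μ u - μ' (x, k) * pi k x μ' u| * MR
        ≤ (d k + LQ * L) * MR := by
      calc ∑ x, ∑ u, |μ (x, k) * pi k x μ u - μ' (x, k) * pi k x μ' u| * MR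
          = (∑ x, ∑ u, |μ (x, k) * pi k x μ u - μ' (x, k) * pi k x μ' u|) * MR := by
            simp [Finset.sum_mul]
        _ ≤ (d k + LQ * L) * MR := mul_le_mul_of_nonneg_right (hA k) hMR
    have hsum2 : ∑ x, ∑ u, μ' (x, k) * pi k x μ' u * (LR * (L + ℓ)) = LR * (L + ℓ) := by
      have h2 : ∀ x : X, ∑ u, μ' (x, k) * pi k x μ' u * (LR * (L + ℓ))
          = μ' (x, k) * (LR * (L + ℓ)) := by
        intro x
        calc ∑ u, μ' (x, k) * pi k x μ' u * (LR * (L + ℓ))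
            = μ' (x, k) * (∑ u, pi k x μ' u) * (LR * (L + ℓ)) := by
              rw [Finset.mul_sum, Finset.sum_mul]
          _ = μ' (x, k) * (LR * (L + ℓ)) := by rw [(hpiProb k x μ' hμ').2, mul_one]
      rw [Finset.sum_congr rfl fun x _ => h2 x, ← Finset.sum_mul, (hμ' k).2, one_mul]
    calc |rMF μ k - rMF μ' k|
        ≤ ∑ x, ∑ u, (|μ (x, k) * pi k x μ u - μ' (x, k) * pi k x μ' u| * MR
            + μ' (x, k) * pi k x μ' u * (LR * (L + ℓ))) := by
          rw [hdecomp]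
          refine (Finset.abs_sum_le_sum_abs _ _).trans ?_
          refine (Finset.sum_le_sum fun x _ => Finset.abs_sum_le_sum_abs _ _).trans ?_
          exact Finset.sum_le_sum fun x _ => Finset.sum_le_sum fun u _ => hterm x u
      _ = (∑ x, ∑ u, |μ (x, k) * pi k x μ u - μ' (x, k) * pi k x μ' u| * MR)
            + ∑ x, ∑ u, μ' (x, k) * pi k x μ' u * (LR * (L + ℓ)) := by
          simp [Finset.sum_add_distrib]
      _ ≤ (d k + LQ * L) * MR + LR * (L + ℓ) := add_le_add hsum1 hsum2.le
      _ = MR * (d k + LQ * L) + LR * (L + ℓ) := by ring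
  -- Final assembly
  have hconst : ∀ k : Fin K, |rMF μ k - rMF μ' k|
      ≤ MR * (L + LQ * L) + LR * (L + (L + (K : ℝ) * (LQ * L))) := by
    intro k
    refine (hD k).trans ?_
    have := hdL k
    have := hℓle
    gcongr
  calc ∑ k, θ k * |rMF μ k - rMF μ' k|
      ≤ ∑ k, θ k * (MR * (L + LQ * L) + LR * (L + (L + (K : ℝ) * (LQ * L)))) :=
        Finset.sum_le_sum fun k _ =>
          mul_le_mul_of_nonneg_left (hconst k) (hθ0 k)
    _ = (∑ k, θ k) * (MR * (L + LQ * L) + LR * (L + (L + (K : ℝ) * (LQ * L)))) := by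
        rw [Finset.sum_mul]
    _ = (MR * (1 + LQ) + LR * (2 + (K : ℝ) * LQ)) * L := by
        rw [hθ1]; ring
end

section
/- Let X and U be finite nonempty sets, K a positive integer, and L̄_P, L̄_Q ≥ 0. Let π̄ = (π̄_k)_{k∈[K]} be decision rules π̄_k : X × P(X)^K → P(U) with |π̄_k(x,μ̄₁) − π̄_k(x,μ̄₂)|₁ ≤ L̄_Q·|μ̄₁ − μ̄₂|₁ for all arguments. Let P̄_k : X × U × P(X)^K × P(U)^K → P(X) satisfy |P̄_k(x,u,μ̄₁,ν̄₁) − P̄_k(x,u,μ̄₂,ν̄₂)|₁ ≤ L̄_P·(|μ̄₁ − μ̄₂|₁ + |ν̄₁ − ν̄₂|₁). Define ν̄^MF(μ̄,π̄)(u,k) = Σ_x π̄_k(x,μ̄)(u)·μ̄(x,k) and P̄^MF(μ̄,π̄) ∈ P(X)^K by P̄^MF(μ̄,π̄)(x',k) = Σ_{x,u} μ̄(x,k)·π̄_k(x,μ̄)(u)·P̄_k(x,u,μ̄,ν̄^MF(μ̄,π̄))(x'). Then for all μ̄, μ̄' ∈ P(X)^K, |P̄^MF(μ̄,π̄) − P̄^MF(μ̄',π̄)|₁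 ≤ S̄_P·|μ̄ − μ̄'|₁, where S̄_P = (1+K·L̄_Q) + K·L̄_P·(2+K·L̄_Q). -/
open Finset

private lemma key_abs (a b p q : ℝ) (hp : 0 ≤ p) (hb : 0 ≤ b) :
    |a * p - b * q| ≤ |a - b| * p + b * |p - q| := by
  have h : a * p - b * q = (a - b) * p + b * (p - q) := by ring
  rw [h]
  refine (abs_add_le _ _).trans ?_
  rw [abs_mul, abs_mul, abs_of_nonneg hp, abs_of_nonneg hb]

theorem stmt14
    {X U : Type*} [Fintype X] [Fintype U] [Nonempty X] [Nonempty U]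
    (K : ℕ) (hK : 0 < K)
    (LP LQ : ℝ) (hLP : 0 ≤ LP) (hLQ : 0 ≤ LQ)
    (pi : Fin K → X → (X × Fin K → ℝ) → U → ℝ)
    (hpiProb : ∀ k x μ, IsProbK μ → IsProb (pi k x μ))
    (hpiLip : ∀ k x μ₁ μ₂, IsProbK μ₁ → IsProbK μ₂ →
      l1 (pi k x μ₁) (pi k x μ₂) ≤ LQ * l1 μ₁ μ₂)
    (Pk : Fin K → X → U → (X × Fin K → ℝ) → (U × Fin K → ℝ) → X → ℝ)
    (hPkProb : ∀ k x u μ ν, IsProbK μ → IsProbK ν → IsProb (Pk k x u μ ν))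
    (hPkLip : ∀ k x u μ₁ ν₁ μ₂ ν₂, IsProbK μ₁ → IsProbK ν₁ → IsProbK μ₂ → IsProbK ν₂ →
      l1 (Pk k x u μ₁ ν₁) (Pk k x u μ₂ ν₂) ≤ LP * (l1 μ₁ μ₂ + l1 ν₁ ν₂))
    (nuMF : (X × Fin K → ℝ) → U × Fin K → ℝ)
    (hnuMF : ∀ μ u k, nuMF μ (u, k) = ∑ x, pi k x μ u * μ (x, k))
    (PMFmu : (X × Fin K → ℝ) → X × Fin K → ℝ)
    (hPMFmu : ∀ μ x' k, PMFmu μ (x', k) =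
      ∑ x, ∑ u, μ (x, k) * pi k x μ u * Pk k x u μ (nuMF μ) x')
    (μ μ' : X × Fin K → ℝ) (hμ : IsProbK μ) (hμ' : IsProbK μ') :
    l1 (PMFmu μ) (PMFmu μ')
      ≤ ((1 + (K : ℝ) * LQ) + (K : ℝ) * LP * (2 + (K : ℝ) * LQ)) * l1 μ μ' := by
  set L := l1 μ μ' with hLdef
  have hL0 : 0 ≤ L := Finset.sum_nonneg fun _ _ => abs_nonneg _
  have hLsplit : L = ∑ k : Fin K, ∑ x : X, |μ (x, k) - μ' (x, k)| := by
    rw [hLdef, l1, Fintype.sum_prod_type, Finset.sum_comm]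
  -- per-class bound on the joint state-action difference
  have hB : ∀ k : Fin K, ∑ x : X, ∑ u : U,
      |μ (x, k) * pi k x μ u - μ' (x, k) * pi k x μ' u|
      ≤ (∑ x : X, |μ (x, k) - μ' (x, k)|) + LQ * L := by
    intro k
    have step : ∀ x : X, ∑ u : U, |μ (x, k) * pi k x μ u - μ' (x, k) * pi k x μ' u|
        ≤ |μ (x, k) - μ' (x, k)| + μ' (x, k) * (LQ * L) := by
      intro x
      have h1 : (∑ u : U, pi k x μ u) = 1 := (hpiProb k x μ hμ).2
      have h2 : (∑ u : U, |pi k x μ u - pi k x μ' u|) ≤ LQ * L :=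
        hpiLip k x μ μ' hμ hμ'
      calc ∑ u : U, |μ (x, k) * pi k x μ u - μ' (x, k) * pi k x μ' u|
          ≤ ∑ u : U, (|μ (x, k) - μ' (x, k)| * pi k x μ u
              + μ' (x, k) * |pi k x μ u - pi k x μ' u|) :=
            Finset.sum_le_sum fun u _ =>
              key_abs _ _ _ _ ((hpiProb k x μ hμ).1 u) ((hμ' k).1 x)
        _ = |μ (x, k) - μ' (x, k)| * (∑ u : U, pi k x μ u)
              + μ' (x, k) * (∑ u : U, |pi k x μ u - pi k x μ' u|) := by
            rw [Finset.sum_add_distrib, ← Finset.mul_sum, ← Finset.mul_sum]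
        _ ≤ |μ (x, k) - μ' (x, k)| * 1 + μ' (x, k) * (LQ * L) := by
            rw [h1]
            exact add_le_add le_rfl (mul_le_mul_of_nonneg_left h2 ((hμ' k).1 x))
        _ = |μ (x, k) - μ' (x, k)| + μ' (x, k) * (LQ * L) := by rw [mul_one]
    calc ∑ x : X, ∑ u : U, |μ (x, k) * pi k x μ u - μ' (x, k) * pi k x μ' u|
        ≤ ∑ x : X, (|μ (x, k) - μ' (x, k)| + μ' (x, k) * (LQ * L)) :=
          Finset.sum_le_sum fun x _ => step x
      _ = (∑ x : X, |μ (x, k) - μ' (x, k)|) + (∑ x : X, μ' (x, k)) * (LQ * L) := by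
          rw [Finset.sum_add_distrib, ← Finset.sum_mul]
      _ = (∑ x : X, |μ (x, k) - μ' (x, k)|) + LQ * L := by
          rw [(hμ' k).2, one_mul]
  -- probability of the mean-field action distributions
  have hνP : ∀ σ : X × Fin K → ℝ, IsProbK σ → IsProbK (nuMF σ) := by
    intro σ hσ k
    refine ⟨fun u => ?_, ?_⟩
    · show 0 ≤ nuMF σ (u, k)
      rw [hnuMF]
      exact Finset.sum_nonneg fun x _ =>
        mul_nonneg ((hpiProb k x σ hσ).1 u) ((hσ k).1 x)
    · show (∑ u : U, nuMF σ (u, k)) = 1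
      simp_rw [hnuMF]
      rw [Finset.sum_comm]
      have e : ∀ x : X, ∑ u : U, pi k x σ u * σ (x, k) = σ (x, k) := by
        intro x
        rw [← Finset.sum_mul, (hpiProb k x σ hσ).2, one_mul]
      calc ∑ x : X, ∑ u : U, pi k x σ u * σ (x, k)
          = ∑ x : X, σ (x, k) := Finset.sum_congr rfl fun x _ => e x
        _ = 1 := (hσ k).2
  have hμν : IsProbK (nuMF μ) := hνP μ hμ
  have hμ'ν : IsProbK (nuMF μ') := hνP μ' hμ'
  -- Lipschitz bound on the mean-field action distributions
  have hνν' : l1 (nuMF μ) (nuMF μ') ≤ (1 + (K : ℝ) * LQ) * L := by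
    have e : l1 (nuMF μ) (nuMF μ') = ∑ k : Fin K, ∑ u : U,
        |∑ x : X, (pi k x μ u * μ (x, k) - pi k x μ' u * μ' (x, k))| := by
      rw [l1, Fintype.sum_prod_type, Finset.sum_comm]
      simp_rw [hnuMF, ← Finset.sum_sub_distrib]
    rw [e]
    calc ∑ k : Fin K, ∑ u : U, |∑ x : X, (pi k x μ u * μ (x, k) - pi k x μ' u * μ' (x, k))|
        ≤ ∑ k : Fin K, ∑ u : U, ∑ x : X,
            |pi k x μ u * μ (x, k) - pi k x μ' u * μ' (x, k)| :=
          Finset.sum_le_sum fun k _ => Finset.sum_le_sum fun u _ =>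
            Finset.abs_sum_le_sum_abs _ _
      _ = ∑ k : Fin K, ∑ x : X, ∑ u : U,
            |μ (x, k) * pi k x μ u - μ' (x, k) * pi k x μ' u| := by
          refine Finset.sum_congr rfl fun k _ => ?_
          rw [Finset.sum_comm]
          exact Finset.sum_congr rfl fun x _ => Finset.sum_congr rfl fun u _ => by
            rw [mul_comm (pi k x μ u), mul_comm (pi k x μ' u)]
      _ ≤ ∑ k : Fin K, ((∑ x : X, |μ (x, k) - μ' (x, k)|) + LQ * L) :=
          Finset.sum_le_sum fun k _ => hB k
      _ = (∑ k : Fin K, ∑ x : X, |μ (x, k) - μ' (x, k)|) + (K : ℝ) * (LQ * L) := by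
          rw [Finset.sum_add_distrib, Finset.sum_const, Finset.card_univ,
            Fintype.card_fin, nsmul_eq_mul]
      _ = (1 + (K : ℝ) * LQ) * L := by rw [← hLsplit]; ring
  -- Lipschitz bound on the transition kernels
  set C := LP * ((2 + (K : ℝ) * LQ) * L) with hCdef
  have hC : ∀ (k : Fin K) (x : X) (u : U),
      ∑ x' : X, |Pk k x u μ (nuMF μ) x' - Pk k x u μ' (nuMF μ') x'| ≤ C := by
    intro k x u
    calc ∑ x' : X, |Pk k x u μ (nuMF μ) x' - Pk k x u μ' (nuMF μ') x'|
        ≤ LP * (l1 μ μ' + l1 (nuMF μ) (nuMF μ')) :=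
          hPkLip k x u μ (nuMF μ) μ' (nuMF μ') hμ hμν hμ' hμ'ν
      _ ≤ LP * (L + (1 + (K : ℝ) * LQ) * L) := by
          rw [← hLdef]
          exact mul_le_mul_of_nonneg_left (add_le_add le_rfl hνν') hLP
      _ = C := by rw [hCdef]; ring
  have hC0 : 0 ≤ C := by
    refine le_trans ?_ (hC (⟨0, hK⟩ : Fin K) (Classical.arbitrary X) (Classical.arbitrary U))
    exact Finset.sum_nonneg fun _ _ => abs_nonneg _
  -- main estimate
  have emain : l1 (PMFmu μ) (PMFmu μ') = ∑ k : Fin K, ∑ x' : X,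
      |∑ x : X, ∑ u : U, (μ (x, k) * pi k x μ u * Pk k x u μ (nuMF μ) x'
        - μ' (x, k) * pi k x μ' u * Pk k x u μ' (nuMF μ') x')| := by
    rw [l1, Fintype.sum_prod_type, Finset.sum_comm]
    simp_rw [hPMFmu, ← Finset.sum_sub_distrib]
  have step2 : ∀ (k : Fin K) (x : X) (u : U),
      ∑ x' : X, |μ (x, k) * pi k x μ u * Pk k x u μ (nuMF μ) x'
        - μ' (x, k) * pi k x μ' u * Pk k x u μ' (nuMF μ') x'|
      ≤ |μ (x, k) * pi k x μ u - μ' (x, k) * pi k x μ' u|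
        + μ' (x, k) * pi k x μ' u * C := by
    intro k x u
    have hf' : 0 ≤ μ' (x, k) * pi k x μ' u :=
      mul_nonneg ((hμ' k).1 x) ((hpiProb k x μ' hμ').1 u)
    calc ∑ x' : X, |μ (x, k) * pi k x μ u * Pk k x u μ (nuMF μ) x'
          - μ' (x, k) * pi k x μ' u * Pk k x u μ' (nuMF μ') x'|
        ≤ ∑ x' : X, (|μ (x, k) * pi k x μ u - μ' (x, k) * pi k x μ' u|
              * Pk k x u μ (nuMF μ) x'
            + μ' (x, k) * pi k x μ' u
              * |Pk k x u μ (nuMF μ) x' - Pk k x u μ' (nuMF μ') x'|) :=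
          Finset.sum_le_sum fun x' _ =>
            key_abs _ _ _ _ ((hPkProb k x u μ (nuMF μ) hμ hμν).1 x') hf'
      _ = |μ (x, k) * pi k x μ u - μ' (x, k) * pi k x μ' u|
            * (∑ x' : X, Pk k x u μ (nuMF μ) x')
          + μ' (x, k) * pi k x μ' u
            * (∑ x' : X, |Pk k x u μ (nuMF μ) x' - Pk k x u μ' (nuMF μ') x'|) := by
          rw [Finset.sum_add_distrib, ← Finset.mul_sum, ← Finset.mul_sum]
      _ ≤ |μ (x, k) * pi k x μ u - μ' (x, k) * pi k x μ' u| * 1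
          + μ' (x, k) * pi k x μ' u * C := by
          rw [(hPkProb k x u μ (nuMF μ) hμ hμν).2]
          exact add_le_add le_rfl (mul_le_mul_of_nonneg_left (hC k x u) hf')
      _ = |μ (x, k) * pi k x μ u - μ' (x, k) * pi k x μ' u|
          + μ' (x, k) * pi k x μ' u * C := by rw [mul_one]
  have step3 : ∀ k : Fin K,
      ∑ x : X, ∑ u : U, (|μ (x, k) * pi k x μ u - μ' (x, k) * pi k x μ' u|
        + μ' (x, k) * pi k x μ' u * C)
      ≤ ((∑ x : X, |μ (x, k) - μ' (x, k)|) + LQ * L) + C := by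
    intro k
    have hf1 : ∑ x : X, ∑ u : U, μ' (x, k) * pi k x μ' u = 1 := by
      have e : ∀ x : X, ∑ u : U, μ' (x, k) * pi k x μ' u = μ' (x, k) := by
        intro x
        rw [← Finset.mul_sum, (hpiProb k x μ' hμ').2, mul_one]
      calc ∑ x : X, ∑ u : U, μ' (x, k) * pi k x μ' u
          = ∑ x : X, μ' (x, k) := Finset.sum_congr rfl fun x _ => e x
        _ = 1 := (hμ' k).2
    calc ∑ x : X, ∑ u : U, (|μ (x, k) * pi k x μ u - μ' (x, k) * pi k x μ' u|
          + μ' (x, k) * pi k x μ' u * C)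
        = (∑ x : X, ∑ u : U, |μ (x, k) * pi k x μ u - μ' (x, k) * pi k x μ' u|)
          + (∑ x : X, ∑ u : U, μ' (x, k) * pi k x μ' u) * C := by
          simp_rw [Finset.sum_add_distrib, Finset.sum_mul]
      _ = (∑ x : X, ∑ u : U, |μ (x, k) * pi k x μ u - μ' (x, k) * pi k x μ' u|) + C := by
          rw [hf1, one_mul]
      _ ≤ ((∑ x : X, |μ (x, k) - μ' (x, k)|) + LQ * L) + C :=
          add_le_add (hB k) le_rfl
  rw [emain]
  calc ∑ k : Fin K, ∑ x' : X,
      |∑ x : X, ∑ u : U, (μ (x, k) * pi k x μ u * Pk k x u μ (nuMF μ) x'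
        - μ' (x, k) * pi k x μ' u * Pk k x u μ' (nuMF μ') x')|
      ≤ ∑ k : Fin K, ∑ x' : X, ∑ x : X, ∑ u : U,
          |μ (x, k) * pi k x μ u * Pk k x u μ (nuMF μ) x'
            - μ' (x, k) * pi k x μ' u * Pk k x u μ' (nuMF μ') x'| :=
        Finset.sum_le_sum fun k _ => Finset.sum_le_sum fun x' _ =>
          (Finset.abs_sum_le_sum_abs _ _).trans
            (Finset.sum_le_sum fun x _ => Finset.abs_sum_le_sum_abs _ _)
    _ = ∑ k : Fin K, ∑ x : X, ∑ u : U, ∑ x' : X,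
          |μ (x, k) * pi k x μ u * Pk k x u μ (nuMF μ) x'
            - μ' (x, k) * pi k x μ' u * Pk k x u μ' (nuMF μ') x'| := by
        refine Finset.sum_congr rfl fun k _ => ?_
        rw [Finset.sum_comm]
        exact Finset.sum_congr rfl fun x _ => Finset.sum_comm
    _ ≤ ∑ k : Fin K, ∑ x : X, ∑ u : U,
          (|μ (x, k) * pi k x μ u - μ' (x, k) * pi k x μ' u|
            + μ' (x, k) * pi k x μ' u * C) :=
        Finset.sum_le_sum fun k _ => Finset.sum_le_sum fun x _ =>
          Finset.sum_le_sum fun u _ => step2 k x u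
    _ ≤ ∑ k : Fin K, (((∑ x : X, |μ (x, k) - μ' (x, k)|) + LQ * L) + C) :=
        Finset.sum_le_sum fun k _ => step3 k
    _ = (∑ k : Fin K, ∑ x : X, |μ (x, k) - μ' (x, k)|)
        + (K : ℝ) * (LQ * L) + (K : ℝ) * C := by
        rw [Finset.sum_add_distrib, Finset.sum_add_distrib, Finset.sum_const,
          Finset.sum_const, Finset.card_univ, Fintype.card_fin, nsmul_eq_mul,
          nsmul_eq_mul]
    _ = ((1 + (K : ℝ) * LQ) + (K : ℝ) * LP * (2 + (K : ℝ) * LQ)) * L := by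
        rw [← hLsplit, hCdef]; ring
end
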